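/- arXiv:2002.07035 — 6 statements merged into one kernel-verified Lean document; each statement's English description precedes it below -/
import Mathlib

section
/- Let f be holomorphic on the open unit disk 𝔻 ⊂ ℂ, let v : 𝔻 → [0,∞) be a bounded function that is radial (v(z) = v(|z|) for all z ∈ 𝔻), and let N ∈ ℤ≥0 be such that sup_{z∈𝔻} v(z)|f^{(N)}(z)| < ∞. If z₀ ∈ 𝔻 is a zero of f, then the function g(z) = f(z)/(z−z₀) (extended holomorphically across z₀) satisfies sup_{z∈𝔻} v(z)|g^{(N)}(z)| < ∞. -/
open Metric Set

private lemma aux_iter {h : ℂ → ℂ} (hh : DifferentiableOn ℂ h (ball 0 1)) (k : ℕ) :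
    AnalyticOnNhd ℂ (iteratedDeriv k h) (ball (0:ℂ) 1) := by
  rw [iteratedDeriv_eq_iterate]
  exact (hh.analyticOnNhd isOpen_ball).iterated_deriv k

private lemma aux_rel (f g : ℂ → ℂ) (z₀ : ℂ)
    (hg : DifferentiableOn ℂ g (ball 0 1))
    (hgf : ∀ z ∈ ball (0:ℂ) 1, (z - z₀) * g z = f z) (n : ℕ) :
    ∀ w ∈ ball (0:ℂ) 1, iteratedDeriv (n+1) f w =
      (w - z₀) * iteratedDeriv (n+1) g w + ((n:ℂ)+1) * iteratedDeriv n g w := by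
  induction n with
  | zero =>
    intro w hw
    have hgw : DifferentiableAt ℂ g w := hg.differentiableAt (isOpen_ball.mem_nhds hw)
    have hev : f =ᶠ[nhds w] fun u => (u - z₀) * g u := by
      filter_upwards [isOpen_ball.mem_nhds hw] with u hu
      exact (hgf u hu).symm
    have h2 : deriv (fun u => (u - z₀) * g u) w = (1:ℂ) * g w + (w - z₀) * deriv g w := by
      rw [deriv_fun_mul (differentiableAt_fun_id.sub_const z₀) hgw]
      simp
    simp only [zero_add, iteratedDeriv_one, iteratedDeriv_zero, Nat.cast_zero]
    rw [hev.deriv_eq, h2]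
    ring
  | succ n ih =>
    intro w hw
    have hgd : ∀ k, DifferentiableAt ℂ (iteratedDeriv k g) w :=
      fun k => ((aux_iter hg k) w hw).differentiableAt
    have hev : iteratedDeriv (n+1) f =ᶠ[nhds w]
        fun u => (u - z₀) * iteratedDeriv (n+1) g u + ((n:ℂ)+1) * iteratedDeriv n g u := by
      filter_upwards [isOpen_ball.mem_nhds hw] with u hu
      exact ih u hu
    have h1 : iteratedDeriv (n+1+1) f w = deriv (iteratedDeriv (n+1) f) w := by
      rw [iteratedDeriv_succ]
    rw [h1, hev.deriv_eq]
    have d1 : DifferentiableAt ℂ (fun u => (u - z₀) * iteratedDeriv (n+1) g u) w :=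
      (differentiableAt_id.sub_const z₀).mul (hgd (n+1))
    have d2 : DifferentiableAt ℂ (fun u => ((n:ℂ)+1) * iteratedDeriv n g u) w :=
      (hgd n).const_mul _
    rw [deriv_fun_add d1 d2, deriv_const_mul _ (hgd n),
      deriv_fun_mul (differentiableAt_fun_id.sub_const z₀) (hgd (n+1)),
      ← iteratedDeriv_succ, ← iteratedDeriv_succ]
    simp only [deriv_sub_const, deriv_id'']
    push_cast
    ring

private lemma aux_key (f g : ℂ → ℂ) (z₀ : ℂ)
    (hf : DifferentiableOn ℂ f (ball 0 1)) (hg : DifferentiableOn ℂ g (ball 0 1))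
    (hgf : ∀ z ∈ ball (0:ℂ) 1, (z - z₀) * g z = f z)
    (hz₀ : z₀ ∈ ball (0:ℂ) 1) (N : ℕ) (z : ℂ) (hz : z ∈ ball (0:ℂ) 1) :
    (z - z₀) * iteratedDeriv N g z = (iteratedDeriv N f z - iteratedDeriv N f z₀)
      + ∫ t in (0:ℝ)..1, (-(N:ℂ) * (t:ℂ)^(N-1) *
          (iteratedDeriv N f (z₀ + (t:ℂ) * (z - z₀)) - iteratedDeriv N f z₀)) := by
  have hmem : ∀ t : ℝ, t ∈ Set.uIcc (0:ℝ) 1 → z₀ + (t:ℂ) * (z - z₀) ∈ ball (0:ℂ) 1 := by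
    intro t ht
    rw [Set.uIcc_of_le zero_le_one] at ht
    have h := (convex_ball (0:ℂ) 1).add_smul_sub_mem hz₀ hz ht
    simpa [Complex.real_smul] using h
  -- the derivative step
  have hder : ∀ t : ℝ, t ∈ Set.uIcc (0:ℝ) 1 →
      HasDerivAt (fun s : ℝ => (z - z₀) * ((s:ℂ) ^ (N+1) * iteratedDeriv N g (z₀ + (s:ℂ) * (z - z₀)))
          - (s:ℂ) ^ N * (iteratedDeriv N f (z₀ + (s:ℂ) * (z - z₀)) - iteratedDeriv N f z₀))
        (-(N:ℂ) * (t:ℂ)^(N-1) * (iteratedDeriv N f (z₀ + (t:ℂ) * (z - z₀)) - iteratedDeriv N f z₀)) t := by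
    intro t ht
    have hqB : z₀ + (t:ℂ) * (z - z₀) ∈ ball (0:ℂ) 1 := hmem t ht
    have hq : HasDerivAt (fun w : ℂ => z₀ + w * (z - z₀)) (z - z₀) ((t:ℂ)) := by
      simpa using ((hasDerivAt_id ((t:ℂ))).mul_const (z - z₀)).const_add z₀
    have hG : HasDerivAt (iteratedDeriv N g) (iteratedDeriv (N+1) g (z₀ + (t:ℂ) * (z - z₀)))
        (z₀ + (t:ℂ) * (z - z₀)) := by
      rw [iteratedDeriv_succ]
      exact ((aux_iter hg N) _ hqB).differentiableAt.hasDerivAt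
    have hF : HasDerivAt (iteratedDeriv N f) (iteratedDeriv (N+1) f (z₀ + (t:ℂ) * (z - z₀)))
        (z₀ + (t:ℂ) * (z - z₀)) := by
      rw [iteratedDeriv_succ]
      exact ((aux_iter hf N) _ hqB).differentiableAt.hasDerivAt
    have hGq : HasDerivAt (fun w : ℂ => iteratedDeriv N g (z₀ + w * (z - z₀)))
        (iteratedDeriv (N+1) g (z₀ + (t:ℂ) * (z - z₀)) * (z - z₀)) ((t:ℂ)) := by exact HasDerivAt.comp (x := (t:ℂ)) hG hq
    have hFq : HasDerivAt (fun w : ℂ => iteratedDeriv N f (z₀ + w * (z - z₀)))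
        (iteratedDeriv (N+1) f (z₀ + (t:ℂ) * (z - z₀)) * (z - z₀)) ((t:ℂ)) := by exact HasDerivAt.comp (x := (t:ℂ)) hF hq
    have h1 := ((hasDerivAt_pow (N+1) ((t:ℂ))).mul hGq).const_mul (z - z₀)
    have h2 := (hasDerivAt_pow N ((t:ℂ))).mul (hFq.sub_const (iteratedDeriv N f z₀))
    have h3 := (h1.sub h2).comp_ofReal
    convert h3 using 1
    · rfl
    have hrel := aux_rel f g z₀ hg hgf N (z₀ + (t:ℂ) * (z - z₀)) hqB
    rw [hrel, add_sub_cancel_left]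
    push_cast [Nat.add_sub_cancel]
    ring
  have hFc : ContinuousOn (iteratedDeriv N f) (ball (0:ℂ) 1) := (aux_iter hf N).continuousOn
  have hqc : Continuous (fun t : ℝ => z₀ + (t:ℂ) * (z - z₀)) := by continuity
  have hcont : ContinuousOn (fun t : ℝ => -(N:ℂ) * (t:ℂ)^(N-1) *
      (iteratedDeriv N f (z₀ + (t:ℂ) * (z - z₀)) - iteratedDeriv N f z₀)) (Set.uIcc (0:ℝ) 1) :=
    (Continuous.continuousOn (by continuity)).mul
      (((hFc.comp hqc.continuousOn hmem).sub continuousOn_const))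
  have hFTC := intervalIntegral.integral_eq_sub_of_hasDerivAt hder hcont.intervalIntegrable
  rw [hFTC]
  have e1 : z₀ + ((1:ℝ):ℂ) * (z - z₀) = z := by push_cast; ring
  have e0 : z₀ + ((0:ℝ):ℂ) * (z - z₀) = z₀ := by push_cast; ring
  simp only [e1, e0, Complex.ofReal_one, Complex.ofReal_zero, one_pow, one_mul, sub_self,
    mul_zero, sub_zero, zero_pow, Nat.succ_ne_zero, ne_eq, not_false_iff]
  rw [show z₀ + (z - z₀) = z from by ring, show z₀ + 0 * (z - z₀) = z₀ from by ring]
  ring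

/-- If `f` is holomorphic on the unit disk, `v : 𝔻 → [0,∞)` is a bounded
radial weight, `sup_{z∈𝔻} v(z)|f^{(N)}(z)| < ∞` and `f(z₀) = 0` for some `z₀ ∈ 𝔻`, then the
holomorphic extension `g` of `z ↦ f(z)/(z - z₀)` satisfies `sup_{z∈𝔻} v(z)|g^{(N)}(z)| < ∞`. -/
theorem stmt_0 (f : ℂ → ℂ) (hf : DifferentiableOn ℂ f (Metric.ball 0 1))
    (v : ℂ → ℝ)
    (hv0 : ∀ z ∈ Metric.ball (0 : ℂ) 1, 0 ≤ v z)
    (hvbdd : ∃ M : ℝ, ∀ z ∈ Metric.ball (0 : ℂ) 1, v z ≤ M)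
    (hvrad : ∀ z ∈ Metric.ball (0 : ℂ) 1, v z = v ((‖z‖ : ℝ) : ℂ))
    (N : ℕ)
    (hfin : ∃ C : ℝ, ∀ z ∈ Metric.ball (0 : ℂ) 1,
      v z * ‖iteratedDeriv N f z‖ ≤ C)
    (z₀ : ℂ) (hz₀ : z₀ ∈ Metric.ball (0 : ℂ) 1) (hfz₀ : f z₀ = 0)
    (g : ℂ → ℂ) (hg : DifferentiableOn ℂ g (Metric.ball 0 1))
    (hgf : ∀ z ∈ Metric.ball (0 : ℂ) 1, (z - z₀) * g z = f z) :
    ∃ C : ℝ, ∀ z ∈ Metric.ball (0 : ℂ) 1,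
      v z * ‖iteratedDeriv N g z‖ ≤ C := by
  obtain ⟨C₀, hC₀⟩ := hfin
  obtain ⟨Mv, hMv⟩ := hvbdd
  have h01 : (0:ℂ) ∈ Metric.ball (0:ℂ) 1 := by simp
  have hC₀0 : (0:ℝ) ≤ C₀ :=
    le_trans (mul_nonneg (hv0 0 h01) (norm_nonneg _)) (hC₀ 0 h01)
  have ha : ‖z₀‖ < 1 := by
    simpa using mem_ball_zero_iff.1 hz₀
  set r₀ : ℝ := (1 + ‖z₀‖)/2 with hr₀_def
  have har₀ : ‖z₀‖ < r₀ := by rw [hr₀_def]; linarith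
  have hr₀1 : r₀ < 1 := by rw [hr₀_def]; linarith
  have hr₀0 : (0:ℝ) < r₀ := lt_of_le_of_lt (norm_nonneg z₀) har₀
  set d : ℝ := r₀ - ‖z₀‖ with hd_def
  have hd0 : (0:ℝ) < d := by rw [hd_def]; linarith
  obtain ⟨K, hK⟩ := (isCompact_closedBall (0:ℂ) r₀).exists_bound_of_continuousOn
    (((aux_iter hg N).continuousOn).mono (Metric.closedBall_subset_ball hr₀1))
  refine ⟨max (max Mv 0 * K) (2*((N:ℝ)+1)*C₀/d), fun z hz => ?_⟩
  have hz1 : ‖z‖ < 1 := by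
    simpa using mem_ball_zero_iff.1 hz
  by_cases hcase : ‖z‖ ≤ r₀
  · refine le_trans ?_ (le_max_left _ _)
    have hzm : z ∈ Metric.closedBall (0:ℂ) r₀ := by
      rw [Metric.mem_closedBall, Complex.dist_eq, sub_zero]; exact hcase
    have hK0 : (0:ℝ) ≤ K := le_trans (norm_nonneg _) (hK z hzm)
    have hzK : ‖iteratedDeriv N g z‖ ≤ K := by
      simpa using hK z hzm
    exact mul_le_mul (le_trans (hMv z hz) (le_max_left _ _)) hzK
      (norm_nonneg _) (le_max_right _ _)
  · push_neg at hcase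
    refine le_trans ?_ (le_max_right _ _)
    by_cases hv : v z = 0
    · rw [hv, zero_mul]
      apply div_nonneg _ hd0.le
      have : (0:ℝ) ≤ (N:ℝ) + 1 := by positivity
      nlinarith
    have hvz : 0 < v z := lt_of_le_of_ne (hv0 z hz) (Ne.symm hv)
    have hs0 : (0:ℝ) < ‖z‖ := lt_trans hr₀0 hcase
    -- max modulus: |f^(N)| ≤ C₀ / v z on the closed disk of radius |z|
    have hFb : ∀ w : ℂ, ‖w‖ ≤ ‖z‖ →
        ‖iteratedDeriv N f w‖ ≤ C₀ / v z := by
      intro w hw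
      have hclos : closure (Metric.ball (0:ℂ) (‖z‖))
          = Metric.closedBall 0 (‖z‖) := closure_ball 0 (ne_of_gt hs0)
      have hdc : DiffContOnCl ℂ (iteratedDeriv N f) (Metric.ball (0:ℂ) (‖z‖)) := by
        apply DifferentiableOn.diffContOnCl
        rw [hclos]
        exact ((aux_iter hf N).differentiableOn).mono (Metric.closedBall_subset_ball hz1)
      have hfr : ∀ u ∈ frontier (Metric.ball (0:ℂ) (‖z‖)),
          ‖iteratedDeriv N f u‖ ≤ C₀ / v z := by
        intro u hu
        rw [frontier_ball 0 (ne_of_gt hs0)] at hu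
        have huabs : ‖u‖ = ‖z‖ := by
          simpa [Complex.dist_eq, sub_zero] using hu
        have hu1 : u ∈ Metric.ball (0:ℂ) 1 := by
          rw [Metric.mem_ball, Complex.dist_eq, sub_zero, huabs]; exact hz1
        have hvu : v u = v z := by
          rw [hvrad u hu1, hvrad z hz, huabs]
        rw [le_div_iff₀ hvz, mul_comm, ← hvu]
        exact hC₀ u hu1
      have hwm : w ∈ closure (Metric.ball (0:ℂ) (‖z‖)) := by
        rw [hclos, Metric.mem_closedBall, Complex.dist_eq, sub_zero]; exact hw
      have := Complex.norm_le_of_forall_mem_frontier_norm_le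
        Metric.isBounded_ball hdc hfr hwm
      simpa using this
    -- the identity
    have hid := aux_key f g z₀ hf hg hgf hz₀ N z hz
    have hz₀z : ‖z₀‖ ≤ ‖z‖ := le_of_lt (lt_trans har₀ hcase)
    have hseg : ∀ t : ℝ, t ∈ Set.uIoc (0:ℝ) 1 →
        ‖z₀ + (t:ℂ)*(z - z₀)‖ ≤ ‖z‖ := by
      intro t ht
      rw [Set.uIoc_of_le zero_le_one] at ht
      obtain ⟨ht0, ht1⟩ := ht
      have he : z₀ + (t:ℂ)*(z-z₀) = (1-t) • z₀ + t • z := by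
        push_cast [Complex.real_smul]; ring
      have hb : ‖z₀ + (t:ℂ)*(z-z₀)‖ ≤ ‖z‖ := by
        rw [he]
        calc ‖(1-t) • z₀ + t • z‖ ≤ ‖(1-t) • z₀‖ + ‖t • z‖ := norm_add_le _ _
          _ = (1-t) * ‖z₀‖ + t * ‖z‖ := by
              rw [norm_smul, norm_smul, Real.norm_of_nonneg (by linarith),
                Real.norm_of_nonneg ht0.le]
          _ ≤ (1-t) * ‖z‖ + t * ‖z‖ := by
              have hzz : ‖z₀‖ ≤ ‖z‖ := by
                exact hz₀z
              nlinarith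
          _ = ‖z‖ := by ring
      simpa using hb
    set A : ℝ := C₀ / v z with hA_def
    have hA0 : (0:ℝ) ≤ A := div_nonneg hC₀0 hvz.le
    have hIb : ‖∫ t in (0:ℝ)..1, (-(N:ℂ) * (t:ℂ)^(N-1) *
        (iteratedDeriv N f (z₀ + (t:ℂ)*(z-z₀)) - iteratedDeriv N f z₀))‖
        ≤ ((N:ℝ) * (2 * A)) * |(1:ℝ) - 0| := by
      apply intervalIntegral.norm_integral_le_of_norm_le_const
      intro t ht
      have ht' : t ∈ Set.Ioc (0:ℝ) 1 := by rwa [Set.uIoc_of_le zero_le_one] at ht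
      have h1 : ‖(-(N:ℂ))‖ = (N:ℝ) := by simp
      have h2 : ‖((t:ℂ))^(N-1)‖ ≤ 1 := by
        rw [norm_pow]
        apply pow_le_one₀ (norm_nonneg _)
        rw [Complex.norm_real, Real.norm_of_nonneg ht'.1.le]
        exact ht'.2
      have h3 : ‖iteratedDeriv N f (z₀ + (t:ℂ)*(z-z₀)) - iteratedDeriv N f z₀‖ ≤ 2 * A := by
        refine le_trans (norm_sub_le _ _) ?_
        have ha1 := hFb _ (hseg t (by rwa [Set.uIoc_of_le zero_le_one]))
        have ha2 := hFb z₀ hz₀z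
        rw [hA_def]; linarith
      calc ‖-(N:ℂ) * (t:ℂ)^(N-1) *
            (iteratedDeriv N f (z₀ + (t:ℂ)*(z-z₀)) - iteratedDeriv N f z₀)‖
          = (N:ℝ) * ‖((t:ℂ))^(N-1)‖ *
            ‖iteratedDeriv N f (z₀ + (t:ℂ)*(z-z₀)) - iteratedDeriv N f z₀‖ := by
            rw [norm_mul, norm_mul, h1]
        _ ≤ (N:ℝ) * 1 * (2 * A) := by
            apply mul_le_mul (mul_le_mul le_rfl h2 (norm_nonneg _) (Nat.cast_nonneg N)) h3
              (norm_nonneg _) (by positivity)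
        _ = (N:ℝ) * (2 * A) := by ring
    -- combine
    have hEst : ‖(z - z₀) * iteratedDeriv N g z‖ ≤ 2 * ((N:ℝ)+1) * A := by
      rw [hid]
      refine le_trans (norm_add_le _ _) ?_
      have t1 : ‖iteratedDeriv N f z - iteratedDeriv N f z₀‖ ≤ 2 * A := by
        have := norm_sub_le (iteratedDeriv N f z) (iteratedDeriv N f z₀)
        have ha1 := hFb z le_rfl
        have ha2 := hFb z₀ hz₀z
        rw [hA_def]; linarith
      have t2 : ‖∫ t in (0:ℝ)..1, (-(N:ℂ) * (t:ℂ)^(N-1) *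
          (iteratedDeriv N f (z₀ + (t:ℂ)*(z-z₀)) - iteratedDeriv N f z₀))‖ ≤ (N:ℝ) * (2 * A) := by
        refine le_trans hIb ?_
        rw [show |(1:ℝ) - 0| = 1 by norm_num]
        ring_nf
        exact le_rfl
      linarith
    have hxa : d ≤ ‖z - z₀‖ := by
      have := norm_sub_norm_le z z₀
      rw [hd_def]; linarith [le_of_lt hcase]
    rw [le_div_iff₀ hd0]
    have hG0 : (0:ℝ) ≤ ‖iteratedDeriv N g z‖ := norm_nonneg _
    have habs : ‖(z - z₀) * iteratedDeriv N g z‖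
        = ‖z - z₀‖ * ‖iteratedDeriv N g z‖ := norm_mul _ _
    have step1 : d * ‖iteratedDeriv N g z‖ ≤ 2 * ((N:ℝ)+1) * A := by
      refine le_trans ?_ hEst
      rw [habs]
      exact mul_le_mul_of_nonneg_right hxa hG0
    have hvA : v z * A = C₀ := by rw [hA_def]; field_simp
    calc v z * ‖iteratedDeriv N g z‖ * d
        = v z * (d * ‖iteratedDeriv N g z‖) := by ring
      _ ≤ v z * (2 * ((N:ℝ)+1) * A) := mul_le_mul_of_nonneg_left step1 hvz.le
      _ = 2 * ((N:ℝ)+1) * (v z * A) := by ring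
      _ = 2 * ((N:ℝ)+1) * C₀ := by rw [hvA]
end

section
/- Assume X and Y are Banach spaces of holomorphic functions on 𝔹_n satisfying conditions (I), (II) and (III), and let u ∈ M(X). Then the following are equivalent: (a) u has no zeros in 𝔹_n and 1/u ∈ M(X); (b) there exists δ > 0 such that |u(z)| ≥ δ for all z ∈ 𝔹_n; (c) the multiplication operator M_u : X → X is invertible (a bijection with bounded inverse). -/
open Metric Set

/-- The radial derivative `Rf(z) = f'(z)z` (Fréchet derivative at `z` applied to `z`). -/
noncomputable def radDeriv (n : ℕ) (f : EuclideanSpace ℂ (Fin n) → ℂ) :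
    EuclideanSpace ℂ (Fin n) → ℂ := fun z => fderiv ℂ f z z

set_option maxHeartbeats 4000000
set_option synthInstance.maxHeartbeats 400000

open Complex MeasureTheory

namespace Stmt2Aux

variable {n : ℕ}

local notation "W" => EuclideanSpace ℂ (Fin n)

/-- derivative of the slice `w ↦ f (y + w • v)` at `0`. -/
lemma slice_hasDerivAt {f : W → ℂ} {y : W} (hf : DifferentiableAt ℂ f y) (v : W) :
    HasDerivAt (fun w : ℂ => f (y + w • v)) (fderiv ℂ f y v) 0 := by
  have h1 : HasDerivAt (fun w : ℂ => y + w • v) v 0 := by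
    simpa using ((hasDerivAt_id (0 : ℂ)).smul_const v).const_add y
  have h2 : HasFDerivAt f (fderiv ℂ f y) ((fun w : ℂ => y + w • v) 0) := by
    simpa using hf.hasFDerivAt
  exact h2.comp_hasDerivAt 0 h1

/-- Cauchy estimate: bound on the full Fréchet derivative from a sup bound on a closed ball. -/
lemma norm_fderiv_le_of_bound {f : W → ℂ} {y : W} {ρ M : ℝ} (hρ : 0 < ρ) (hM : 0 ≤ M)
    (hd : ∀ x ∈ closedBall y ρ, DifferentiableAt ℂ f x)
    (hb : ∀ x ∈ closedBall y ρ, ‖f x‖ ≤ M) :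
    ‖fderiv ℂ f y‖ ≤ M / ρ := by
  refine ContinuousLinearMap.opNorm_le_bound _ (by positivity) (fun v => ?_)
  rcases eq_or_ne v 0 with rfl | hv
  · simp
  have hv0 : 0 < ‖v‖ := norm_pos_iff.2 hv
  set r : ℝ := ρ / ‖v‖ with hr
  have hr0 : 0 < r := by positivity
  set g : ℂ → ℂ := fun w => f (y + w • v) with hg
  have hmem : ∀ w : ℂ, w ∈ closedBall (0:ℂ) r → y + w • v ∈ closedBall y ρ := by
    intro w hw
    rw [mem_closedBall, dist_self_add_left, norm_smul]
    rw [mem_closedBall, dist_zero_right] at hw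
    calc ‖w‖ * ‖v‖ ≤ r * ‖v‖ := by gcongr
    _ = ρ := by rw [hr, div_mul_cancel₀ _ hv0.ne']
  set R : NNReal := ⟨r, hr0.le⟩ with hR
  have hgd : DifferentiableOn ℂ g (closedBall (0:ℂ) (R:ℝ)) := by
    intro w hw
    have : DifferentiableAt ℂ g w := by
      have := (hd _ (hmem w hw))
      exact this.comp w ((differentiableAt_id.smul_const v).const_add y)
    exact this.differentiableWithinAt
  have hps : HasFPowerSeriesOnBall g (cauchyPowerSeries g 0 (R:ℝ)) 0 R :=
    hgd.hasFPowerSeriesOnBall (by exact_mod_cast hr0)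
  have hderiv : deriv g 0 = fderiv ℂ f y v :=
    (slice_hasDerivAt (hd y (mem_closedBall_self hρ.le)) v).deriv
  have hcoeff : deriv g 0 = (cauchyPowerSeries g 0 r).coeff 1 :=
    hps.hasFPowerSeriesAt.deriv
  -- bound the coefficient
  have hcm : ∀ θ : ℝ, circleMap 0 r θ ∈ closedBall (0:ℂ) r :=
    fun θ => circleMap_mem_closedBall 0 hr0.le θ
  have hcont : Continuous fun θ : ℝ => g (circleMap 0 r θ) := by
    rw [continuous_iff_continuousAt]
    intro θ
    have h1 : ContinuousAt (fun θ : ℝ => y + circleMap 0 r θ • v) θ :=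
      (continuous_const.add ((continuous_circleMap 0 r).smul continuous_const)).continuousAt
    have h2 : ContinuousAt f (y + circleMap 0 r θ • v) :=
      (hd _ (hmem _ (hcm θ))).continuousAt
    exact ContinuousAt.comp (f := fun θ : ℝ => y + circleMap 0 r θ • v) h2 h1
  have hint : ∫ θ in (0:ℝ)..2 * Real.pi, ‖g (circleMap 0 r θ)‖ ≤ 2 * Real.pi * M := by
    have h1 : ∀ θ ∈ Set.Icc (0:ℝ) (2 * Real.pi), ‖g (circleMap 0 r θ)‖ ≤ M :=
      fun θ _ => hb _ (hmem _ (hcm θ))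
    calc ∫ θ in (0:ℝ)..2 * Real.pi, ‖g (circleMap 0 r θ)‖
        ≤ ∫ _ in (0:ℝ)..2 * Real.pi, M := by
          apply intervalIntegral.integral_mono_on Real.two_pi_pos.le
          · exact (hcont.norm).intervalIntegrable _ _
          · exact intervalIntegrable_const
          · exact h1
      _ = 2 * Real.pi * M := by simp [mul_comm]
  have hnorm : ‖(cauchyPowerSeries g 0 r).coeff 1‖ ≤ M / r := by
    have h1 : ‖(cauchyPowerSeries g 0 r).coeff 1‖ ≤ ‖cauchyPowerSeries g 0 r 1‖ := by
      have h := (cauchyPowerSeries g 0 r 1).le_opNorm (fun _ => (1:ℂ))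
      simp only [Finset.prod_const, norm_one, one_pow, mul_one] at h
      exact h
    have h2 := norm_cauchyPowerSeries_le g 0 r 1
    have hInonneg : (0:ℝ) ≤ ∫ θ : ℝ in (0)..2 * Real.pi, ‖g (circleMap 0 r θ)‖ := by
      apply intervalIntegral.integral_nonneg Real.two_pi_pos.le
      intro x _; positivity
    have h3 : ((2 * Real.pi)⁻¹ * ∫ θ : ℝ in (0)..2 * Real.pi, ‖g (circleMap 0 r θ)‖) * |r|⁻¹ ^ 1
        ≤ (2 * Real.pi)⁻¹ * (2 * Real.pi * M) * |r|⁻¹ ^ 1 := by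
      have hp : (0:ℝ) ≤ (2 * Real.pi)⁻¹ := by positivity
      have := mul_le_mul_of_nonneg_left hint hp
      have hq : (0:ℝ) ≤ |r|⁻¹ ^ 1 := by positivity
      exact mul_le_mul_of_nonneg_right this hq
    have h4 : (2 * Real.pi)⁻¹ * (2 * Real.pi * M) * |r|⁻¹ ^ 1 = M / r := by
      rw [abs_of_pos hr0]
      have h2π : (2 * Real.pi) ≠ 0 := by positivity
      field_simp
    calc ‖(cauchyPowerSeries g 0 r).coeff 1‖ ≤ _ := h1
      _ ≤ _ := h2
      _ ≤ _ := h3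
      _ = M / r := h4
  rw [← hderiv, hcoeff]
  calc ‖(cauchyPowerSeries g 0 r).coeff 1‖ ≤ M / r := hnorm
    _ = M / ρ * ‖v‖ := by rw [hr]; field_simp

lemma differentiableAt_fderiv_apply {f : W → ℂ} {U : Set W} (hU : IsOpen U)
    (hf : DifferentiableOn ℂ f U) {z₀ : W} (hz₀ : z₀ ∈ U) (v : W) (hv : ‖v‖ ≤ 1) :
    DifferentiableAt ℂ (fun z => fderiv ℂ f z v) z₀ := by
  obtain ⟨ε, hε, hball⟩ := Metric.isOpen_iff.1 hU z₀ hz₀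
  set ρ : ℝ := ε / 5 with hρdef
  have hρ : 0 < ρ := by positivity
  have hsub : closedBall z₀ (3 * ρ) ⊆ U :=
    subset_trans (closedBall_subset_ball (by rw [hρdef]; linarith)) hball
  have hdiffAt : ∀ x ∈ closedBall z₀ (3 * ρ), DifferentiableAt ℂ f x :=
    fun x hx => hf.differentiableAt (hU.mem_nhds (hsub hx))
  obtain ⟨M, hM⟩ := (isCompact_closedBall z₀ (3 * ρ)).exists_bound_of_continuousOn
    (hf.continuousOn.mono hsub)
  have hM0 : 0 ≤ M := le_trans (norm_nonneg (f z₀)) (hM z₀ (mem_closedBall_self (by positivity)))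
  -- fderiv bound on the 2ρ ball
  have hfb : ∀ y ∈ closedBall z₀ (2 * ρ), ‖fderiv ℂ f y‖ ≤ M / ρ := by
    intro y hy
    have hysub : closedBall y ρ ⊆ closedBall z₀ (3 * ρ) := by
      intro x hx
      rw [mem_closedBall] at *
      calc dist x z₀ ≤ dist x y + dist y z₀ := dist_triangle _ _ _
        _ ≤ ρ + 2 * ρ := add_le_add hx hy
        _ = 3 * ρ := by ring
    exact norm_fderiv_le_of_bound hρ hM0 (fun x hx => hdiffAt x (hysub hx))
      (fun x hx => hM x (hysub hx))
  -- membership lemma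
  have hmem2 : ∀ z ∈ ball z₀ ρ, ∀ w : ℂ, ‖w‖ ≤ ρ → z + w • v ∈ closedBall z₀ (2 * ρ) := by
    intro z hz w hw
    rw [mem_closedBall]
    calc dist (z + w • v) z₀ ≤ dist (z + w • v) z + dist z z₀ := dist_triangle _ _ _
      _ ≤ ρ + ρ := by
          apply add_le_add
          · rw [dist_eq_norm, add_sub_cancel_left, norm_smul]
            calc ‖w‖ * ‖v‖ ≤ ρ * 1 := by
                  apply mul_le_mul hw hv (norm_nonneg _) hρ.le
              _ = ρ := mul_one ρ
          · exact (mem_ball.1 hz).le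
      _ = 2 * ρ := by ring
  set c : ℝ → ℂ := fun θ => circleMap 0 ρ θ with hc
  have hcnorm : ∀ θ, ‖c θ‖ = ρ := by
    intro θ; rw [hc]
    simp only [norm_circleMap_zero]
    exact abs_of_pos hρ
  have hcne : ∀ θ, c θ ≠ 0 := fun θ => by
    intro h
    have := hcnorm θ; rw [h] at this; simp at this; exact hρ.ne' this.symm
  have hcmem : ∀ z ∈ ball z₀ ρ, ∀ θ : ℝ, z + c θ • v ∈ closedBall z₀ (2*ρ) :=
    fun z hz θ => hmem2 z hz (c θ) (le_of_eq (hcnorm θ))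
  have hsub23 : closedBall z₀ (2*ρ) ⊆ closedBall z₀ (3*ρ) :=
    closedBall_subset_closedBall (by linarith)
  have hcinv : Continuous fun θ : ℝ => (c θ)⁻¹ := by
    apply Continuous.inv₀ (continuous_circleMap 0 ρ) hcne
  set μ : Measure ℝ := volume.restrict (Set.Ioc (0:ℝ) (2 * Real.pi)) with hμ
  set Fz : W → ℝ → ℂ := fun z θ => (c θ)⁻¹ * f (z + c θ • v) with hFz
  set F' : W → ℝ → (W →L[ℂ] ℂ) := fun z θ => (c θ)⁻¹ • fderiv ℂ f (z + c θ • v) with hF'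
  -- continuity of the integrand for z in the small ball
  have hFcont : ∀ z ∈ ball z₀ ρ, Continuous (Fz z) := by
    intro z hz
    rw [continuous_iff_continuousAt]
    intro θ
    have h1 : ContinuousAt (fun θ : ℝ => z + c θ • v) θ :=
      (continuous_const.add ((continuous_circleMap 0 ρ).smul continuous_const)).continuousAt
    have h2 : ContinuousAt f (z + c θ • v) :=
      (hdiffAt _ (hsub23 (hcmem z hz θ))).continuousAt
    have h3 : ContinuousAt (fun θ : ℝ => f (z + c θ • v)) θ :=
      ContinuousAt.comp (f := fun θ : ℝ => z + c θ • v) h2 h1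
    exact (hcinv.continuousAt).mul h3
  have hmain : HasFDerivAt (fun z => ∫ θ, Fz z θ ∂μ) (∫ θ, F' z₀ θ ∂μ) z₀ := by
    apply hasFDerivAt_integral_of_dominated_of_fderiv_le
      (bound := fun _ => ρ⁻¹ * (M / ρ)) (ball_mem_nhds z₀ hρ)
    · apply Filter.eventually_of_mem (ball_mem_nhds z₀ hρ)
      intro z hz
      exact (hFcont z hz).aestronglyMeasurable
    · have h := (hFcont z₀ (mem_ball_self hρ)).integrableOn_Ioc (μ := volume) (a := (0:ℝ)) (b := 2*Real.pi)
      exact h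
    · -- measurability of F' z₀
      borelize W (W →L[ℂ] ℂ)
      have m1 : Measurable (fun θ : ℝ => fderiv ℂ f (z₀ + c θ • v)) := by
        exact (measurable_fderiv ℂ f).comp
          (continuous_const.add ((continuous_circleMap 0 ρ).smul continuous_const)).measurable
      have m2 : AEStronglyMeasurable (fun θ : ℝ => fderiv ℂ f (z₀ + c θ • v)) μ :=
        m1.aestronglyMeasurable
      exact (hcinv.aestronglyMeasurable (μ := μ)).smul m2
    · apply Filter.Eventually.of_forall
      intro θ z hz
      have h1 : ‖(c θ)⁻¹‖ = ρ⁻¹ := by rw [norm_inv, hcnorm]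
      calc ‖F' z θ‖ ≤ ‖(c θ)⁻¹‖ * ‖fderiv ℂ f (z + c θ • v)‖ :=
            ContinuousLinearMap.opNorm_smul_le _ _
        _ ≤ ρ⁻¹ * (M / ρ) := by
            rw [h1]
            exact mul_le_mul_of_nonneg_left (hfb _ (hcmem z hz θ)) (by positivity)
    · rw [hμ]
      show IntegrableOn _ _ _
      refine integrableOn_const ?_
      exact measure_Ioc_lt_top.ne
    · apply Filter.Eventually.of_forall
      intro θ z hz
      have hT : HasFDerivAt (fun z : W => z + c θ • v) (ContinuousLinearMap.id ℂ W) z :=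
        (hasFDerivAt_id z).add_const _
      have hd2 : HasFDerivAt f (fderiv ℂ f (z + c θ • v)) (z + c θ • v) :=
        (hdiffAt _ (hsub23 (hcmem z hz θ))).hasFDerivAt
      have h3 := hd2.comp z hT
      rw [ContinuousLinearMap.comp_id] at h3
      exact h3.const_mul _
  -- representation
  have hrep : ∀ z ∈ ball z₀ ρ,
      fderiv ℂ f z v = (2 * (Real.pi:ℂ))⁻¹ * ∫ θ, Fz z θ ∂μ := by
    intro z hz
    set g : ℂ → ℂ := fun w => f (z + w • v) with hg
    set R : NNReal := ⟨ρ, hρ.le⟩ with hR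
    have hgd : DifferentiableOn ℂ g (closedBall (0:ℂ) (R:ℝ)) := by
      intro w hw
      rw [mem_closedBall, dist_zero_right] at hw
      have h1 : DifferentiableAt ℂ f (z + w • v) :=
        hdiffAt _ (hsub23 (hmem2 z hz w hw))
      exact (h1.comp w ((differentiableAt_id.smul_const v).const_add z)).differentiableWithinAt
    have hps : HasFPowerSeriesOnBall g (cauchyPowerSeries g 0 (R:ℝ)) 0 R :=
      hgd.hasFPowerSeriesOnBall (by exact_mod_cast hρ)
    have hzmem : z ∈ closedBall z₀ (3*ρ) := by
      have h0 : z + (0:ℂ) • v ∈ closedBall z₀ (2*ρ) := hmem2 z hz 0 (by simp [hρ.le])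
      simp only [zero_smul, add_zero] at h0
      exact hsub23 h0
    have hderiv : deriv g 0 = fderiv ℂ f z v :=
      (slice_hasDerivAt (hdiffAt z hzmem) v).deriv
    have hcoeff : deriv g 0 = (cauchyPowerSeries g 0 ρ).coeff 1 :=
      hps.hasFPowerSeriesAt.deriv
    have happ : (cauchyPowerSeries g 0 ρ).coeff 1 =
        (2 * (Real.pi:ℂ) * I)⁻¹ • ∮ ζ in C(0, ρ), ((1:ℂ) / (ζ - 0)) ^ 1 • (ζ - 0)⁻¹ • g ζ := by
      rw [FormalMultilinearSeries.coeff]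
      exact cauchyPowerSeries_apply g 0 ρ 1 1
    have hcircle : (∮ ζ in C(0, ρ), ((1:ℂ) / (ζ - 0)) ^ 1 • (ζ - 0)⁻¹ • g ζ)
        = I * ∫ θ, Fz z θ ∂μ := by
      rw [circleIntegral]
      have hintg : ∀ θ : ℝ, deriv (circleMap 0 ρ) θ •
          (((1:ℂ) / (circleMap 0 ρ θ - 0)) ^ 1 • (circleMap 0 ρ θ - 0)⁻¹ • g (circleMap 0 ρ θ))
          = I * Fz z θ := by
        intro θ
        rw [deriv_circleMap]
        have h0 : circleMap 0 ρ θ = c θ := rfl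
        rw [h0]
        have hne := hcne θ
        rw [hFz]
        simp only [sub_zero, smul_eq_mul, pow_one, one_div, hg]
        field_simp
      rw [intervalIntegral.integral_congr (g := fun θ => I * Fz z θ) (fun θ _ => hintg θ)]
      rw [intervalIntegral.integral_const_mul]
      congr 1
      rw [intervalIntegral.integral_of_le Real.two_pi_pos.le]
    rw [← hderiv, hcoeff, happ, hcircle]
    rw [smul_eq_mul]
    have hIne := Complex.I_ne_zero
    have hpine : ((Real.pi : ℂ)) ≠ 0 := by exact_mod_cast Real.pi_ne_zero
    field_simp
  -- conclude
  have hG : DifferentiableAt ℂ (fun z => (2 * (Real.pi:ℂ))⁻¹ * ∫ θ, Fz z θ ∂μ) z₀ :=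
    (hmain.differentiableAt).const_mul _
  apply hG.congr_of_eventuallyEq
  exact Filter.eventuallyEq_of_mem (ball_mem_nhds z₀ hρ) (fun z hz => hrep z hz)

/-- any continuous linear functional on Euclidean space decomposes along the standard basis -/
lemma clm_decomp (L : W →L[ℂ] ℂ) :
    ∑ i : Fin n, L (EuclideanSpace.single i 1) • (EuclideanSpace.proj (𝕜 := ℂ) i) = L := by
  ext v
  have hv : v = ∑ i : Fin n, v i • EuclideanSpace.single i (1:ℂ) := by
    have h := (EuclideanSpace.basisFun (Fin n) ℂ).sum_repr v
    simp only [EuclideanSpace.basisFun_repr, EuclideanSpace.basisFun_apply] at h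
    exact h.symm
  rw [ContinuousLinearMap.sum_apply]
  conv_rhs => rw [hv]
  rw [map_sum]
  apply Finset.sum_congr rfl
  intro i _
  rw [ContinuousLinearMap.smul_apply, _root_.map_smul]
  simp only [smul_eq_mul]
  have : (EuclideanSpace.proj (𝕜 := ℂ) i) v = v i := rfl
  rw [this, mul_comm]

lemma differentiableOn_fderiv {f : W → ℂ} {U : Set W} (hU : IsOpen U)
    (hf : DifferentiableOn ℂ f U) :
    DifferentiableOn ℂ (fun z => fderiv ℂ f z) U := by
  intro z₀ hz₀
  apply DifferentiableAt.differentiableWithinAt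
  have heq : (fun z => fderiv ℂ f z) = fun z =>
      ∑ i : Fin n, (fderiv ℂ f z (EuclideanSpace.single i 1)) •
        (EuclideanSpace.proj (𝕜 := ℂ) i) := by
    funext z
    exact (clm_decomp (fderiv ℂ f z)).symm
  rw [heq]
  apply DifferentiableAt.fun_sum
  intro i _
  apply DifferentiableAt.smul_const
  apply differentiableAt_fderiv_apply hU hf hz₀
  rw [EuclideanSpace.norm_single]
  simp

lemma differentiableOn_radDeriv {f : W → ℂ} {U : Set W} (hU : IsOpen U)
    (hf : DifferentiableOn ℂ f U) :
    DifferentiableOn ℂ (radDeriv n f) U :=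
  (differentiableOn_fderiv hU hf).clm_apply differentiableOn_id

lemma differentiableOn_radDeriv_iterate {f : W → ℂ} {U : Set W} (hU : IsOpen U)
    (hf : DifferentiableOn ℂ f U) (k : ℕ) :
    DifferentiableOn ℂ ((radDeriv n)^[k] f) U := by
  induction k generalizing f with
  | zero => exact hf
  | succ k ih =>
    rw [Function.iterate_succ_apply]
    exact ih (differentiableOn_radDeriv hU hf)

section congr

lemma radDeriv_congr {U : Set W} {f g : W → ℂ} (hU : IsOpen U) (h : EqOn f g U) :
    EqOn (radDeriv n f) (radDeriv n g) U := by
  intro z hz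
  unfold radDeriv
  rw [Filter.EventuallyEq.fderiv_eq (Filter.eventuallyEq_of_mem (hU.mem_nhds hz) h)]

lemma radDeriv_iter_congr {U : Set W} {f g : W → ℂ} (hU : IsOpen U) (k : ℕ) (h : EqOn f g U) :
    EqOn ((radDeriv n)^[k] f) ((radDeriv n)^[k] g) U := by
  induction k generalizing f g with
  | zero => exact h
  | succ k ih =>
    rw [Function.iterate_succ_apply, Function.iterate_succ_apply]
    exact ih (radDeriv_congr hU h)

lemma radDeriv_add_smul {U : Set W} {f g : W → ℂ} (hU : IsOpen U) (hf : DifferentiableOn ℂ f U)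
    (hg : DifferentiableOn ℂ g U) (c : ℂ) :
    EqOn (radDeriv n (fun w => f w + c * g w))
      (fun w => radDeriv n f w + c * radDeriv n g w) U := by
  intro z hz
  have df : DifferentiableAt ℂ f z := hf.differentiableAt (hU.mem_nhds hz)
  have dg : DifferentiableAt ℂ g z := hg.differentiableAt (hU.mem_nhds hz)
  unfold radDeriv
  rw [fderiv_fun_add df (dg.const_mul c), fderiv_const_mul dg c]
  simp [smul_eq_mul]

lemma radDeriv_iter_add_smul {U : Set W} {f g : W → ℂ} (hU : IsOpen U) (k : ℕ) (hf : DifferentiableOn ℂ f U)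
    (hg : DifferentiableOn ℂ g U) (c : ℂ) :
    EqOn ((radDeriv n)^[k] (fun w => f w + c * g w))
      (fun w => (radDeriv n)^[k] f w + c * (radDeriv n)^[k] g w) U := by
  induction k generalizing f g with
  | zero => intro z _; rfl
  | succ k ih =>
    intro z hz
    rw [Function.iterate_succ_apply]
    have h1 := radDeriv_iter_congr hU k (radDeriv_add_smul hU hf hg c) hz
    rw [h1]
    have h2 := ih (differentiableOn_radDeriv hU hf) (differentiableOn_radDeriv hU hg) hz
    rw [h2]
    simp only [Function.iterate_succ_apply]

lemma radDeriv_mul {f g : W → ℂ} {z : W} (hf : DifferentiableAt ℂ f z) (hg : DifferentiableAt ℂ g z) :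
    radDeriv n (fun w => f w * g w) z = f z * radDeriv n g z + g z * radDeriv n f z := by
  unfold radDeriv
  rw [fderiv_fun_mul hf hg]
  simp [smul_eq_mul]

lemma radDeriv_pow {u : W → ℂ} {z : W} (hu : DifferentiableAt ℂ u z) (j : ℕ) :
    radDeriv n (fun w => u w ^ j) z * u z = (j : ℂ) * u z ^ j * radDeriv n u z := by
  induction j with
  | zero =>
    have h1 : (fun w : W => u w ^ 0) = fun _ => (1:ℂ) := by funext w; rw [pow_zero]
    rw [h1]
    unfold radDeriv
    simp
  | succ j ih =>
    have h1 : (fun w : W => u w ^ (j+1)) = fun w => u w ^ j * u w := by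
      funext w; rw [pow_succ]
    rw [h1, radDeriv_mul (f := fun w => u w ^ j) (hu.pow j) hu]
    push_cast
    linear_combination u z * ih

end congr

lemma lemA {U : Set W} (hU : IsOpen U) {u : W → ℂ} (hu : DifferentiableOn ℂ u U)
    (hu0 : ∀ z ∈ U, u z ≠ 0) (N : ℕ) :
    ∀ g : W → ℂ, DifferentiableOn ℂ g U →
    ∃ v : ℕ → W → ℂ, (∀ r, DifferentiableOn ℂ (v r) U) ∧
      ∀ (j : ℕ), ∀ z ∈ U, (radDeriv n)^[N] (fun w => u w ^ j * g w) z
        = u z ^ j * ∑ r ∈ Finset.range (N+1), (j:ℂ)^r * v r z := by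
  induction N with
  | zero =>
    intro g hg
    exact ⟨fun _ => g, fun _ => hg, by intro j z hz; simp⟩
  | succ N ih =>
    intro g hg
    set g₁ := radDeriv n g with hg₁def
    have hg₁ : DifferentiableOn ℂ g₁ U := differentiableOn_radDeriv hU hg
    set g₂ : W → ℂ := fun w => radDeriv n u w * g w * (u w)⁻¹ with hg₂def
    have hg₂ : DifferentiableOn ℂ g₂ U :=
      ((differentiableOn_radDeriv hU hu).mul hg).mul (hu.inv hu0)
    obtain ⟨v₁, hv₁d, hv₁⟩ := ih g₁ hg₁
    obtain ⟨v₂, hv₂d, hv₂⟩ := ih g₂ hg₂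
    refine ⟨fun r w => (if r ≤ N then v₁ r w else 0) + (if 1 ≤ r then v₂ (r-1) w else 0),
      ?_, ?_⟩
    · intro r
      apply DifferentiableOn.add <;> split_ifs
      · exact hv₁d r
      · exact differentiableOn_const 0
      · exact hv₂d (r-1)
      · exact differentiableOn_const 0
    intro j z hz
    -- step 1: first derivative of u^j * g
    have key1 : EqOn (radDeriv n (fun w => u w ^ j * g w))
        (fun w => u w ^ j * g₁ w + (j:ℂ) * (u w ^ j * g₂ w)) U := by
      intro x hx
      have hdu : DifferentiableAt ℂ u x := hu.differentiableAt (hU.mem_nhds hx)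
      have hdg : DifferentiableAt ℂ g x := hg.differentiableAt (hU.mem_nhds hx)
      rw [radDeriv_mul (f := fun w => u w ^ j) (hdu.pow j) hdg]
      have hp := radDeriv_pow hdu j
      have hux : u x ≠ 0 := hu0 x hx
      have hp' : radDeriv n (fun w => u w ^ j) x = (j:ℂ) * u x ^ j * radDeriv n u x / u x := by
        rw [eq_div_iff hux]; exact hp
      rw [hp']
      simp only [hg₂def, hg₁def]
      field_simp
    -- step 2: apply N-fold derivative
    have e1 : (radDeriv n)^[N+1] (fun w => u w ^ j * g w) z
        = (radDeriv n)^[N] (radDeriv n (fun w => u w ^ j * g w)) z := by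
      rw [Function.iterate_succ_apply]
    rw [e1, radDeriv_iter_congr hU N key1 hz]
    have hf1 : DifferentiableOn ℂ (fun w => u w ^ j * g₁ w) U := (hu.pow j).mul hg₁
    have hf2 : DifferentiableOn ℂ (fun w => u w ^ j * g₂ w) U := (hu.pow j).mul hg₂
    rw [radDeriv_iter_add_smul hU N hf1 hf2 (j:ℂ) hz]
    beta_reduce
    rw [hv₁ j z hz, hv₂ j z hz]
    -- step 3: algebra of the sums
    have S1 : ∑ r ∈ Finset.range (N+2), (j:ℂ)^r * (if r ≤ N then v₁ r z else 0)
        = ∑ r ∈ Finset.range (N+1), (j:ℂ)^r * v₁ r z := by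
      rw [Finset.sum_range_succ]
      rw [if_neg (by omega)]
      rw [mul_zero, add_zero]
      apply Finset.sum_congr rfl
      intro r hr
      rw [if_pos (by exact Nat.lt_succ_iff.1 (Finset.mem_range.1 hr))]
    have S2 : ∑ r ∈ Finset.range (N+2), (j:ℂ)^r * (if 1 ≤ r then v₂ (r-1) z else 0)
        = (j:ℂ) * ∑ r ∈ Finset.range (N+1), (j:ℂ)^r * v₂ r z := by
      rw [Finset.sum_range_succ']
      rw [if_neg (by omega), mul_zero, add_zero]
      rw [Finset.mul_sum]
      apply Finset.sum_congr rfl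
      intro r hr
      rw [if_pos (by omega)]
      simp only [Nat.add_sub_cancel]
      rw [pow_succ]
      ring
    have expand : ∑ r ∈ Finset.range (N+2), (j:ℂ)^r *
        ((if r ≤ N then v₁ r z else 0) + (if 1 ≤ r then v₂ (r-1) z else 0))
        = (∑ r ∈ Finset.range (N+1), (j:ℂ)^r * v₁ r z)
          + (j:ℂ) * ∑ r ∈ Finset.range (N+1), (j:ℂ)^r * v₂ r z := by
      rw [← S1, ← S2, ← Finset.sum_add_distrib]
      apply Finset.sum_congr rfl
      intro r _
      ring
    rw [expand]
    ring

lemma lemB (r : ℕ) : ∀ M : ℕ, r < M →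
    ∑ j ∈ Finset.range (M+1), (-1:ℂ)^j * (M.choose j : ℂ) * (j:ℂ)^r = 0 := by
  induction r using Nat.strong_induction_on with
  | _ r IH =>
  intro M hrM
  match r with
  | 0 =>
    have hM0 : M ≠ 0 := by omega
    have h := Int.alternating_sum_range_choose_of_ne hM0
    have h2 := congrArg (fun t : ℤ => (t : ℂ)) h
    push_cast at h2
    simpa using h2
  | (s+1) =>
    obtain ⟨m, rfl⟩ : ∃ m, M = m + 1 := ⟨M - 1, by omega⟩
    rw [Finset.sum_range_succ']
    have hterm : ∀ i ∈ Finset.range (m+1),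
        (-1:ℂ)^(i+1) * (((m+1).choose (i+1) : ℕ):ℂ) * ((i+1 : ℕ):ℂ)^(s+1)
        = (-((m:ℂ)+1)) * ((-1:ℂ)^i * ((m.choose i : ℕ):ℂ) * ((i:ℂ)+1)^s) := by
      intro i _
      have hc : ((m+1) * m.choose i : ℕ) = ((m+1).choose (i+1) * (i+1) : ℕ) :=
        Nat.add_one_mul_choose_eq m i
      have hc' : ((m:ℂ)+1) * ((m.choose i : ℕ):ℂ)
          = (((m+1).choose (i+1) : ℕ):ℂ) * ((i:ℂ)+1) := by
        exact_mod_cast congrArg (Nat.cast (R := ℂ)) hc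
      push_cast
      linear_combination ((-1:ℂ)^i * ((i:ℂ)+1)^s) * hc'
    rw [Finset.sum_congr rfl hterm]
    rw [← Finset.mul_sum]
    have hin : ∑ i ∈ Finset.range (m+1), ((-1:ℂ)^i * ((m.choose i : ℕ):ℂ) * ((i:ℂ)+1)^s) = 0 := by
      have h3 : ∀ i ∈ Finset.range (m+1), (-1:ℂ)^i * ((m.choose i : ℕ):ℂ) * ((i:ℂ)+1)^s
          = ∑ k ∈ Finset.range (s+1), ((s.choose k : ℕ):ℂ) *
              ((-1:ℂ)^i * ((m.choose i : ℕ):ℂ) * (i:ℂ)^k) := by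
        intro i _
        rw [add_pow, Finset.mul_sum]
        apply Finset.sum_congr rfl
        intro k _
        simp only [one_pow, mul_one]
        ring
      rw [Finset.sum_congr rfl h3, Finset.sum_comm]
      have h4 : ∀ k ∈ Finset.range (s+1), ∑ i ∈ Finset.range (m+1),
          ((s.choose k : ℕ):ℂ) * ((-1:ℂ)^i * ((m.choose i : ℕ):ℂ) * (i:ℂ)^k) = 0 := by
        intro k hk
        rw [← Finset.mul_sum]
        have hk' : k < s + 1 := Finset.mem_range.1 hk
        rw [IH k (by omega) m (by omega), mul_zero]
      rw [Finset.sum_congr rfl h4]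
      simp
    rw [hin, mul_zero]
    simp

lemma lemC {U : Set W} (hU : IsOpen U) {u g : W → ℂ} (hu : DifferentiableOn ℂ u U)
    (hg : DifferentiableOn ℂ g U) (hu0 : ∀ z ∈ U, u z ≠ 0) (N : ℕ) :
    ∀ z ∈ U, ∑ j ∈ Finset.range (N+2), (-1:ℂ)^j * (((N+1).choose j : ℕ) : ℂ) * u z^(N+1-j) *
      (radDeriv n)^[N] (fun w => u w ^ j * g w) z = 0 := by
  obtain ⟨v, hvd, hv⟩ := lemA hU hu hu0 N g hg
  intro z hz
  have h1 : ∀ j ∈ Finset.range (N+2),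
      (-1:ℂ)^j * (((N+1).choose j : ℕ):ℂ) * u z^(N+1-j) *
        (radDeriv n)^[N] (fun w => u w ^ j * g w) z
      = ∑ r ∈ Finset.range (N+1),
          ((-1:ℂ)^j * (((N+1).choose j : ℕ):ℂ) * (j:ℂ)^r) * (u z^(N+1) * v r z) := by
    intro j hj
    rw [hv j z hz, Finset.mul_sum, Finset.mul_sum]
    apply Finset.sum_congr rfl
    intro r _
    have hpow : u z^(N+1-j) * u z^j = u z^(N+1) := by
      rw [← pow_add]
      congr 1
      have := Finset.mem_range.1 hj
      omega
    linear_combination ((-1:ℂ)^j * (((N+1).choose j : ℕ):ℂ) * (j:ℂ)^r * v r z) * hpow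
  rw [Finset.sum_congr rfl h1, Finset.sum_comm]
  have h2 : ∀ r ∈ Finset.range (N+1), ∑ j ∈ Finset.range (N+2),
      ((-1:ℂ)^j * (((N+1).choose j : ℕ):ℂ) * (j:ℂ)^r) * (u z^(N+1) * v r z) = 0 := by
    intro r hr
    rw [← Finset.sum_mul]
    rw [lemB r (N+1) (Finset.mem_range.1 hr), zero_mul]
  rw [Finset.sum_congr rfl h2]
  simp

end Stmt2Aux

/-- For Banach spaces `X`, `Y` of holomorphic functions on `𝔹_n` satisfying
conditions (I), (II), (III) and `u ∈ M(X)`, the following are equivalent: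
(a) `u` has no zeros in `𝔹_n` and `1/u ∈ M(X)`;
(b) `|u|` is bounded below on `𝔹_n` by some `δ > 0`;
(c) the multiplication operator `M_u : X → X` is invertible.
Here `X` is realized as an abstract Banach space `E` with an injective linear inclusion
`ι : E → Hol(𝔹_n)` (and similarly `Y` as `F` via `κ`). -/
theorem stmt_2 {n : ℕ} (hn : 1 ≤ n)
    {E F : Type*} [NormedAddCommGroup E] [NormedSpace ℂ E] [CompleteSpace E]
    [NormedAddCommGroup F] [NormedSpace ℂ F] [CompleteSpace F]
    (ι : E →ₗ[ℂ] (EuclideanSpace ℂ (Fin n) → ℂ))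
    (κ : F →ₗ[ℂ] (EuclideanSpace ℂ (Fin n) → ℂ))
    (hιhol : ∀ f : E, DifferentiableOn ℂ (ι f) (ball (0 : EuclideanSpace ℂ (Fin n)) 1))
    (hκhol : ∀ g : F, DifferentiableOn ℂ (κ g) (ball (0 : EuclideanSpace ℂ (Fin n)) 1))
    (hιinj : ∀ f g : E, Set.EqOn (ι f) (ι g) (ball (0 : EuclideanSpace ℂ (Fin n)) 1) → f = g)
    (hκinj : ∀ f g : F, Set.EqOn (κ f) (κ g) (ball (0 : EuclideanSpace ℂ (Fin n)) 1) → f = g)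
    (hιconst : ∀ c : ℂ, ∃ f : E, ∀ z ∈ ball (0 : EuclideanSpace ℂ (Fin n)) 1, ι f z = c)
    (hκconst : ∀ c : ℂ, ∃ g : F, ∀ z ∈ ball (0 : EuclideanSpace ℂ (Fin n)) 1, κ g z = c)
    (hIX : ∀ z ∈ ball (0 : EuclideanSpace ℂ (Fin n)) 1,
      ∃ Cz : ℝ, ∀ f : E, ‖ι f z‖ ≤ Cz * ‖f‖)
    (hIY : ∀ z ∈ ball (0 : EuclideanSpace ℂ (Fin n)) 1,
      ∃ Cz : ℝ, ∀ g : F, ‖κ g z‖ ≤ Cz * ‖g‖)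
    (N : ℕ) (hN : 1 ≤ N) (C : ℝ) (hC : 1 ≤ C)
    (hII_mem : ∀ f : EuclideanSpace ℂ (Fin n) → ℂ,
      DifferentiableOn ℂ f (ball (0 : EuclideanSpace ℂ (Fin n)) 1) →
      ((∃ g : E, Set.EqOn (ι g) f (ball (0 : EuclideanSpace ℂ (Fin n)) 1)) ↔
        ∃ h : F, Set.EqOn (κ h) ((radDeriv n)^[N] f) (ball (0 : EuclideanSpace ℂ (Fin n)) 1)))
    (hII_norm : ∀ (g : E) (h : F),
      Set.EqOn (κ h) ((radDeriv n)^[N] (ι g)) (ball (0 : EuclideanSpace ℂ (Fin n)) 1) →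
      C⁻¹ * ‖g‖ ≤ ‖ι g 0‖ + ‖h‖ ∧ ‖ι g 0‖ + ‖h‖ ≤ C * ‖g‖)
    (hIII : ∀ v : EuclideanSpace ℂ (Fin n) → ℂ,
      DifferentiableOn ℂ v (ball (0 : EuclideanSpace ℂ (Fin n)) 1) →
      (∃ M : ℝ, ∀ z ∈ ball (0 : EuclideanSpace ℂ (Fin n)) 1, ‖v z‖ ≤ M) →
      ∀ h : F, ∃ h' : F, ∀ z ∈ ball (0 : EuclideanSpace ℂ (Fin n)) 1, κ h' z = v z * κ h z)
    (u : EuclideanSpace ℂ (Fin n) → ℂ)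
    (hu : DifferentiableOn ℂ u (ball (0 : EuclideanSpace ℂ (Fin n)) 1))
    (humult : ∀ f : E, ∃ g : E, ∀ z ∈ ball (0 : EuclideanSpace ℂ (Fin n)) 1,
      ι g z = u z * ι f z)
    (Mu : E →L[ℂ] E)
    (hMu : ∀ f : E, ∀ z ∈ ball (0 : EuclideanSpace ℂ (Fin n)) 1, ι (Mu f) z = u z * ι f z) :
    (((∀ z ∈ ball (0 : EuclideanSpace ℂ (Fin n)) 1, u z ≠ 0) ∧
        ∀ f : E, ∃ g : E, ∀ z ∈ ball (0 : EuclideanSpace ℂ (Fin n)) 1,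
          ι g z = ι f z / u z) ↔
      ∃ δ : ℝ, 0 < δ ∧ ∀ z ∈ ball (0 : EuclideanSpace ℂ (Fin n)) 1, δ ≤ ‖u z‖) ∧
    ((∃ δ : ℝ, 0 < δ ∧ ∀ z ∈ ball (0 : EuclideanSpace ℂ (Fin n)) 1, δ ≤ ‖u z‖) ↔
      ∃ T : E →L[ℂ] E, T.comp Mu = ContinuousLinearMap.id ℂ E ∧
        Mu.comp T = ContinuousLinearMap.id ℂ E) := by
  have h0B : (0 : EuclideanSpace ℂ (Fin n)) ∈ ball (0 : EuclideanSpace ℂ (Fin n)) 1 :=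
    mem_ball_self one_pos
  -- point evaluations as continuous linear functionals
  have hev : ∀ z ∈ ball (0 : EuclideanSpace ℂ (Fin n)) 1,
      ∃ φ : E →L[ℂ] ℂ, ∀ f : E, φ f = ι f z := by
    intro z hz
    obtain ⟨Cz, hCz⟩ := hIX z hz
    refine ⟨LinearMap.mkContinuous
      { toFun := fun f => ι f z
        map_add' := fun a b => by
          show ι (a + b) z = ι a z + ι b z
          rw [map_add]; rfl
        map_smul' := fun c a => by
          show ι (c • a) z = c • (ι a z)
          rw [_root_.map_smul]; rfl } Cz (fun f => ?_), fun f => rfl⟩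
    simpa using hCz f
  -- (b) implies u has no zeros
  have hbne : ∀ δ : ℝ, 0 < δ →
      (∀ z ∈ ball (0 : EuclideanSpace ℂ (Fin n)) 1, δ ≤ ‖u z‖) →
      ∀ z ∈ ball (0 : EuclideanSpace ℂ (Fin n)) 1, u z ≠ 0 := by
    intro δ hδ hδle z hz h
    have := hδle z hz
    rw [h, norm_zero] at this
    linarith
  -- ************ (b) → division ************
  have hbdiv : ∀ δ : ℝ, 0 < δ →
      (∀ z ∈ ball (0 : EuclideanSpace ℂ (Fin n)) 1, δ ≤ ‖u z‖) →
      ∀ f : E, ∃ g : E, ∀ z ∈ ball (0 : EuclideanSpace ℂ (Fin n)) 1,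
        ι g z = ι f z / u z := by
    intro δ hδ hδle f
    have hu0 := hbne δ hδ hδle
    set g : EuclideanSpace ℂ (Fin n) → ℂ := fun w => ι f w * (u w)⁻¹ with hgdef
    have hgd : DifferentiableOn ℂ g (ball (0 : EuclideanSpace ℂ (Fin n)) 1) :=
      (hιhol f).mul (hu.inv hu0)
    -- the chain of multiplications u^k * f in X
    set e : ℕ → E := fun k => Nat.rec f (fun _ x => Mu x) k with hedef
    have he : ∀ k, ∀ z ∈ ball (0 : EuclideanSpace ℂ (Fin n)) 1,
        ι (e k) z = u z ^ k * ι f z := by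
      intro k
      induction k with
      | zero => intro z hz; simp [hedef]
      | succ k ih =>
        intro z hz
        have h1 : e (k+1) = Mu (e k) := rfl
        rw [h1, hMu (e k) z hz, ih z hz, pow_succ]
        ring
    -- their N-th radial derivatives lie in Y
    have hh : ∀ k : ℕ, ∃ h : F, Set.EqOn (κ h)
        ((radDeriv n)^[N] (fun w => u w ^ k * ι f w))
        (ball (0 : EuclideanSpace ℂ (Fin n)) 1) := by
      intro k
      obtain ⟨h, hhk⟩ := (hII_mem (ι (e k)) (hιhol (e k))).1 ⟨e k, fun z _ => rfl⟩
      refine ⟨h, fun z hz => ?_⟩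
      rw [hhk hz]
      exact Stmt2Aux.radDeriv_iter_congr isOpen_ball N (fun w hw => he k w hw) hz
    choose hc hhc using hh
    -- multiply by the bounded coefficients via (III)
    have hmul : ∀ k : ℕ, ∃ h' : F, ∀ z ∈ ball (0 : EuclideanSpace ℂ (Fin n)) 1,
        κ h' z = ((-1:ℂ)^k * (((N+1).choose (k+1) : ℕ):ℂ) * (u z)⁻¹^(k+1)) * κ (hc k) z := by
      intro k
      apply hIII
      · exact ((hu.inv hu0).pow (k+1)).const_mul _
      · refine ⟨(((N+1).choose (k+1) : ℕ):ℝ) * δ⁻¹^(k+1), fun z hz => ?_⟩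
        rw [norm_mul, norm_mul, norm_pow, norm_pow, norm_inv]
        have h1 : ‖(-1:ℂ)‖ = 1 := by simp
        rw [h1, one_pow, one_mul]
        have h2 : ‖(((N+1).choose (k+1) : ℕ):ℂ)‖ = (((N+1).choose (k+1) : ℕ):ℝ) := by
          rw [Complex.norm_natCast]
        rw [h2]
        have h3 : (‖u z‖)⁻¹ ≤ δ⁻¹ := by
          apply inv_anti₀ hδ (hδle z hz)
        gcongr
    choose h' hh' using hmul
    set H : F := ∑ k ∈ Finset.range (N+1), h' k with hHdef
    have hκH : ∀ z ∈ ball (0 : EuclideanSpace ℂ (Fin n)) 1,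
        κ H z = ∑ k ∈ Finset.range (N+1), κ (h' k) z := by
      intro z hz
      rw [hHdef]
      induction (Finset.range (N+1)) using Finset.induction_on with
      | empty => simp
      | insert _ _ hnotmem ih =>
        rw [Finset.sum_insert hnotmem, Finset.sum_insert hnotmem, map_add, Pi.add_apply, ih]
    -- the key identity
    have hkey : Set.EqOn (κ H) ((radDeriv n)^[N] g)
        (ball (0 : EuclideanSpace ℂ (Fin n)) 1) := by
      intro z hz
      have hsubst : ∀ k : ℕ, (radDeriv n)^[N] (fun w => u w ^ (k+1) * g w) z
          = (radDeriv n)^[N] (fun w => u w ^ k * ι f w) z := by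
        intro k
        apply Stmt2Aux.radDeriv_iter_congr isOpen_ball N _ hz
        intro w hw
        show u w ^ (k+1) * (ι f w * (u w)⁻¹) = u w ^ k * ι f w
        have := hu0 w hw
        field_simp [pow_succ]
        ring
      have hzero := Stmt2Aux.lemC isOpen_ball hu hgd hu0 N z hz
      rw [Finset.sum_range_succ'] at hzero
      have hT : ∀ k ∈ Finset.range (N+1),
          (-1:ℂ)^(k+1) * (((N+1).choose (k+1) : ℕ):ℂ) * u z^(N+1-(k+1)) *
            (radDeriv n)^[N] (fun w => u w ^ (k+1) * g w) z
          = -((-1:ℂ)^k * (((N+1).choose (k+1) : ℕ):ℂ) * u z^(N-k) *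
            (radDeriv n)^[N] (fun w => u w ^ k * ι f w) z) := by
        intro k _
        rw [hsubst k]
        have h1 : N + 1 - (k+1) = N - k := by omega
        rw [h1]
        ring
      rw [Finset.sum_congr rfl hT] at hzero
      rw [Finset.sum_neg_distrib] at hzero
      have hg0 : (fun w => u w ^ 0 * g w) = g := by
        funext w; simp
      rw [hg0] at hzero
      simp only [pow_zero, Nat.choose_zero_right, Nat.cast_one, one_mul, Nat.sub_zero] at hzero
      -- hzero : -∑ ... + u z ^ (N+1) * R^N g z = 0
      have hA : κ H z = ∑ k ∈ Finset.range (N+1),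
          ((-1:ℂ)^k * (((N+1).choose (k+1) : ℕ):ℂ) * (u z)⁻¹^(k+1)) *
            (radDeriv n)^[N] (fun w => u w ^ k * ι f w) z := by
        rw [hκH z hz]
        apply Finset.sum_congr rfl
        intro k _
        rw [hh' k z hz, hhc k hz]
      have hune : u z ≠ 0 := hu0 z hz
      have hupne : u z ^ (N+1) ≠ 0 := pow_ne_zero _ hune
      apply mul_right_cancel₀ hupne
      rw [hA, Finset.sum_mul]
      have hterm : ∀ k ∈ Finset.range (N+1),
          ((-1:ℂ)^k * (((N+1).choose (k+1) : ℕ):ℂ) * (u z)⁻¹^(k+1)) *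
            (radDeriv n)^[N] (fun w => u w ^ k * ι f w) z * u z^(N+1)
          = (-1:ℂ)^k * (((N+1).choose (k+1) : ℕ):ℂ) * u z^(N-k) *
            (radDeriv n)^[N] (fun w => u w ^ k * ι f w) z := by
        intro k hk
        have hk' : k + 1 + (N - k) = N + 1 := by
          have := Finset.mem_range.1 hk; omega
        have hzkey : (u z)⁻¹^(k+1) * u z^(N+1) = u z^(N-k) := by
          have hsplit : u z ^ (k+1) * u z^(N-k) = u z^(N+1) := by
            rw [← pow_add, hk']
          rw [inv_pow, ← hsplit, inv_mul_cancel_left₀ (pow_ne_zero _ hune)]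
        linear_combination ((-1:ℂ)^k * (((N+1).choose (k+1) : ℕ):ℂ) *
          (radDeriv n)^[N] (fun w => u w ^ k * ι f w) z) * hzkey
      rw [Finset.sum_congr rfl hterm]
      linear_combination -hzero
    obtain ⟨gE, hgE⟩ := (hII_mem g hgd).2 ⟨H, hkey⟩
    refine ⟨gE, fun z hz => ?_⟩
    rw [hgE hz, hgdef]
    rw [div_eq_mul_inv]
  -- ************ division → invertibility ************
  have hdivT : (∀ z ∈ ball (0 : EuclideanSpace ℂ (Fin n)) 1, u z ≠ 0) →
      (∀ f : E, ∃ g : E, ∀ z ∈ ball (0 : EuclideanSpace ℂ (Fin n)) 1,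
        ι g z = ι f z / u z) →
      ∃ T : E →L[ℂ] E, T.comp Mu = ContinuousLinearMap.id ℂ E ∧
        Mu.comp T = ContinuousLinearMap.id ℂ E := by
    intro hu0 hdiv
    choose Tf hTf using hdiv
    have hadd : ∀ a b : E, Tf (a + b) = Tf a + Tf b := by
      intro a b
      apply hιinj
      intro z hz
      rw [hTf (a+b) z hz, map_add, Pi.add_apply, map_add, Pi.add_apply,
        hTf a z hz, hTf b z hz]
      ring
    have hsmul : ∀ (c : ℂ) (a : E), Tf (c • a) = c • Tf a := by
      intro c a
      apply hιinj
      intro z hz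
      rw [hTf (c • a) z hz, _root_.map_smul, Pi.smul_apply, _root_.map_smul, Pi.smul_apply,
        hTf a z hz, smul_eq_mul, smul_eq_mul]
      ring
    set T₀ : E →ₗ[ℂ] E :=
      { toFun := Tf, map_add' := hadd, map_smul' := hsmul } with hT₀def
    have hcont : Continuous T₀ := by
      apply LinearMap.continuous_of_seq_closed_graph
      intro w x y hw hTw
      apply hιinj
      intro z hz
      obtain ⟨φ, hφ⟩ := hev z hz
      have l1 : Filter.Tendsto (fun k => ι (w k) z) Filter.atTop (nhds (ι x z)) := by
        have h := (φ.continuous.tendsto x).comp hw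
        rw [show ⇑φ ∘ w = fun k => ι (w k) z from funext fun k => hφ (w k)] at h
        rw [hφ x] at h
        exact h
      have l2 : Filter.Tendsto (fun k => ι (T₀ (w k)) z) Filter.atTop (nhds (ι y z)) := by
        have h := (φ.continuous.tendsto y).comp hTw
        rw [show ⇑φ ∘ (⇑T₀ ∘ w) = fun k => ι (T₀ (w k)) z from
          funext fun k => hφ (T₀ (w k))] at h
        rw [hφ y] at h
        exact h
      have l3 : (fun k => ι (T₀ (w k)) z) = fun k => ι (w k) z / u z := by
        funext k
        exact hTf (w k) z hz
      rw [l3] at l2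
      have l4 : Filter.Tendsto (fun k => ι (w k) z / u z) Filter.atTop
          (nhds (ι x z / u z)) := l1.div_const _
      have l5 : ι y z = ι x z / u z := tendsto_nhds_unique l2 l4
      rw [l5]
      exact (hTf x z hz).symm
    refine ⟨⟨T₀, hcont⟩, ?_, ?_⟩
    · ext a
      apply hιinj
      intro z hz
      show ι (Tf (Mu a)) z = ι a z
      rw [hTf (Mu a) z hz, hMu a z hz, mul_div_cancel_left₀ _ (hu0 z hz)]
    · ext a
      apply hιinj
      intro z hz
      show ι (Mu (Tf a)) z = ι a z
      rw [hMu _ z hz, hTf a z hz]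
      field_simp [hu0 z hz]
  -- ************ invertibility → (b) ************
  have hTb : (∃ T : E →L[ℂ] E, T.comp Mu = ContinuousLinearMap.id ℂ E ∧
        Mu.comp T = ContinuousLinearMap.id ℂ E) →
      ∃ δ : ℝ, 0 < δ ∧ ∀ z ∈ ball (0 : EuclideanSpace ℂ (Fin n)) 1,
        δ ≤ ‖u z‖ := by
    rintro ⟨T, hTM, hMT⟩
    obtain ⟨f₁, hf₁⟩ := hιconst 1
    have hMT' : ∀ x : E, Mu (T x) = x := by
      intro x
      have := congrArg (fun S : E →L[ℂ] E => S x) hMT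
      simpa using this
    have hf₁0 : f₁ ≠ 0 := by
      intro h
      have h1 := hf₁ 0 h0B
      rw [h, map_zero] at h1
      simpa using h1
    have hT0 : 0 < ‖T‖ := by
      rcases (norm_nonneg T).lt_or_eq with h | h
      · exact h
      · exfalso
        have hT : T = 0 := by
          rw [← ContinuousLinearMap.opNorm_zero_iff]
          exact h.symm
        have := hMT' f₁
        rw [hT] at this
        simp at this
        exact hf₁0 this.symm
    have hu0 : ∀ z ∈ ball (0 : EuclideanSpace ℂ (Fin n)) 1,
        u z ≠ 0 ∧ u z * ι (T f₁) z = 1 := by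
      intro z hz
      have h1 : ι (Mu (T f₁)) z = ι f₁ z := by rw [hMT']
      rw [hMu (T f₁) z hz, hf₁ z hz] at h1
      exact ⟨left_ne_zero_of_mul_eq_one h1, h1⟩
    set e : ℕ → E := fun k => Nat.rec f₁ (fun _ x => T x) k with hedef
    have he : ∀ k, ∀ z ∈ ball (0 : EuclideanSpace ℂ (Fin n)) 1,
        u z ^ k * ι (e k) z = 1 := by
      intro k
      induction k with
      | zero => intro z hz; simp [hedef, hf₁ z hz]
      | succ k ih =>
        intro z hz
        have h1 : e (k+1) = T (e k) := rfl
        have h2 : ι (e k) z = u z * ι (e (k+1)) z := by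
          rw [h1, ← hMu (T (e k)) z hz, hMT']
        have := ih z hz
        rw [h2] at this
        rw [pow_succ]
        calc u z ^ k * u z * ι (e (k+1)) z = u z ^ k * (u z * ι (e (k+1)) z) := by ring
          _ = 1 := this
    have hnorm : ∀ k, ‖e k‖ ≤ ‖T‖^k * ‖f₁‖ := by
      intro k
      induction k with
      | zero => simp [hedef]
      | succ k ih =>
        have h1 : e (k+1) = T (e k) := rfl
        rw [h1]
        calc ‖T (e k)‖ ≤ ‖T‖ * ‖e k‖ := T.le_opNorm (e k)
          _ ≤ ‖T‖ * (‖T‖^k * ‖f₁‖) := by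
              apply mul_le_mul_of_nonneg_left ih (norm_nonneg T)
          _ = ‖T‖^(k+1) * ‖f₁‖ := by rw [pow_succ]; ring
    refine ⟨‖T‖⁻¹, by positivity, ?_⟩
    intro z hz
    by_contra hlt
    push_neg at hlt
    have huz : u z ≠ 0 := (hu0 z hz).1
    have habs : 0 < ‖u z‖ := norm_pos_iff.mpr huz
    obtain ⟨Cz, hCz⟩ := hIX z hz
    have hCf₁ : 1 ≤ Cz * ‖f₁‖ := by
      have h1 := hCz f₁
      rw [hf₁ z hz, norm_one] at h1
      exact h1
    have hk : ∀ k, (‖u z‖)⁻¹ ^ k ≤ Cz * ‖f₁‖ * ‖T‖^k := by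
      intro k
      have h1 : ‖ι (e k) z‖ = ((‖u z‖)^k)⁻¹ := by
        have h2 := congrArg (‖·‖) (he k z hz)
        rw [norm_mul, norm_pow, norm_one] at h2
        exact eq_inv_of_mul_eq_one_right h2
      have hCz0 : 0 ≤ Cz := by nlinarith [norm_nonneg f₁]
      calc (‖u z‖)⁻¹ ^ k = ((‖u z‖)^k)⁻¹ := by rw [inv_pow]
        _ = ‖ι (e k) z‖ := h1.symm
        _ ≤ Cz * ‖e k‖ := hCz (e k)
        _ ≤ Cz * (‖T‖^k * ‖f₁‖) := mul_le_mul_of_nonneg_left (hnorm k) hCz0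
        _ = Cz * ‖f₁‖ * ‖T‖^k := by ring
    have hq : 1 < (‖u z‖)⁻¹ / ‖T‖ := by
      rw [one_lt_div hT0]
      have h1 := inv_strictAnti₀ habs hlt
      rwa [inv_inv] at h1
    obtain ⟨k, hk'⟩ := pow_unbounded_of_one_lt (Cz * ‖f₁‖) hq
    rw [div_pow] at hk'
    have h4 : 0 < ‖T‖^k := pow_pos hT0 k
    rw [lt_div_iff₀ h4] at hk'
    have := hk k
    linarith
  -- assemble
  refine ⟨⟨?_, ?_⟩, ⟨?_, ?_⟩⟩
  · rintro ⟨hu0, hdiv⟩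
    exact hTb (hdivT hu0 hdiv)
  · rintro ⟨δ, hδ, hδle⟩
    exact ⟨hbne δ hδ hδle, hbdiv δ hδ hδle⟩
  · rintro ⟨δ, hδ, hδle⟩
    exact hdivT (hbne δ hδ hδle) (hbdiv δ hδ hδle)
  · exact hTb
end

section
/- Let X be a Banach space of holomorphic functions on 𝔻 satisfying condition (I) and such that M(X) = H^∞(𝔻), and let u ∈ M(X). If the multiplication operator M_u : X → X is Fredholm, then there exist r ∈ (0,1) and δ > 0 such that |u(z)| ≥ δ for all z with r ≤ |z| < 1. -/
open Filter Complex MeasureTheory intervalIntegral Topology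

lemma lemB (b : ℕ → ℂ) (hre : Filter.Tendsto (fun i => (b i).re) atTop atTop)
    (him : ∀ i, |(b i).im| ≤ Real.pi / 2)
    (hconv : ∀ t ∈ Set.Icc (1:ℝ) 2, ∃ L : ℂ,
      Filter.Tendsto (fun i => Complex.exp (Complex.I * t * b i)) atTop (𝓝 L)) :
    False := by
  classical
  have hm : ∀ k : ℕ, ∃ m : ℕ, k ≤ m ∧ (b k).re + (k + 1 : ℝ) ≤ (b m).re := by
    intro k
    rcases (hre.eventually_ge_atTop ((b k).re + (k+1))).exists_forall_of_atTop with ⟨N, hN⟩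
    exact ⟨max N k, le_max_right _ _, hN _ (le_max_left _ _)⟩
  choose m hmk hmspec using hm
  have hmtop : Tendsto m atTop atTop := tendsto_atTop_mono hmk tendsto_id
  set d : ℕ → ℝ := fun k => (b (m k)).re - (b k).re with hd
  have hdk : ∀ k : ℕ, (k + 1 : ℝ) ≤ d k := fun k => by
    have := hmspec k; simp only [hd]; linarith
  have hdpos : ∀ k, 0 < d k := fun k => lt_of_lt_of_le (by positivity) (hdk k)
  have hdtop : Tendsto d atTop atTop :=
    tendsto_atTop_mono hdk (tendsto_atTop_add_const_right _ _ tendsto_natCast_atTop_atTop)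
  have hnorm : ∀ (t : ℝ) (c : ℂ), ‖Complex.exp (Complex.I * t * c)‖ = Real.exp (-(t * c.im)) := by
    intro t c
    rw [Complex.norm_exp]
    congr 1
    simp [Complex.mul_re, Complex.mul_im]
  have hpt : ∀ t ∈ Set.Icc (1:ℝ) 2,
      Tendsto (fun k => Complex.exp (Complex.I * (d k : ℂ) * t)) atTop (𝓝 1) := by
    intro t ht
    obtain ⟨L, hL⟩ := hconv t ht
    have hLne : L ≠ 0 := by
      intro h0
      have h1 : Tendsto (fun i => ‖Complex.exp (Complex.I * t * b i)‖) atTop (𝓝 ‖L‖) := hL.norm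
      have h2 : ∀ i, Real.exp (-Real.pi) ≤ ‖Complex.exp (Complex.I * t * b i)‖ := by
        intro i
        rw [hnorm t (b i)]
        apply Real.exp_le_exp.2
        have h3 : |t * (b i).im| ≤ Real.pi := by
          rw [_root_.abs_mul]
          have ht2 : |t| ≤ 2 := by rw [_root_.abs_of_nonneg (by linarith [ht.1] : (0:ℝ) ≤ t)]; exact ht.2
          calc |t| * |(b i).im| ≤ 2 * (Real.pi/2) :=
                mul_le_mul ht2 (him i) (abs_nonneg _) (by norm_num)
            _ = Real.pi := by ring
        have h4 := abs_le.1 h3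
        linarith [h4.1, h4.2]
      have hle : Real.exp (-Real.pi) ≤ ‖L‖ := ge_of_tendsto h1 (Eventually.of_forall h2)
      rw [h0, norm_zero] at hle
      linarith [Real.exp_pos (-Real.pi)]
    have hsub : Tendsto (fun k => Complex.exp (Complex.I * t * b (m k))) atTop (𝓝 L) :=
      hL.comp hmtop
    have hr : Tendsto (fun k => Complex.exp (Complex.I * t * b (m k)) /
        Complex.exp (Complex.I * t * b k)) atTop (𝓝 1) := by
      have := hsub.div hL hLne
      simpa [div_self hLne, Pi.div_def] using this
    have hrnorm : Tendsto (fun k => ((‖Complex.exp (Complex.I * t * b (m k)) /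
        Complex.exp (Complex.I * t * b k)‖ : ℝ) : ℂ)) atTop (𝓝 1) := by
      have h4 : Tendsto (fun k => ‖Complex.exp (Complex.I * t * b (m k)) /
          Complex.exp (Complex.I * t * b k)‖) atTop (𝓝 (1:ℝ)) := by simpa using hr.norm
      have h3 := (Complex.continuous_ofReal.tendsto (1:ℝ)).comp h4
      simpa [Function.comp_def] using h3
    have key : ∀ k, Complex.exp (Complex.I * (d k : ℂ) * t) =
        (Complex.exp (Complex.I * t * b (m k)) / Complex.exp (Complex.I * t * b k)) /
          ((‖Complex.exp (Complex.I * t * b (m k)) / Complex.exp (Complex.I * t * b k)‖ : ℝ) : ℂ) := by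
      intro k
      rw [← Complex.exp_sub]
      have hq : Complex.I * t * b (m k) - Complex.I * t * b k
          = Complex.I * t * (b (m k) - b k) := by ring
      rw [hq, hnorm t (b (m k) - b k)]
      have hsplit : Complex.I * t * (b (m k) - b k) =
          Complex.I * (d k : ℂ) * t + ((-(t * (b (m k) - b k).im) : ℝ) : ℂ) := by
        have hdre : (d k : ℂ) = ((b (m k) - b k).re : ℂ) := by
          simp [hd, Complex.sub_re]
        rw [hdre]
        apply Complex.ext <;>
          simp [Complex.mul_re, Complex.mul_im, Complex.add_re, Complex.add_im] <;> ring
      rw [hsplit, Complex.exp_add, ← Complex.ofReal_exp, mul_div_assoc,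
        div_self (by exact_mod_cast Real.exp_ne_zero _), mul_one]
    have h5 := hr.div hrnorm one_ne_zero
    simp only [div_one] at h5
    exact Tendsto.congr (fun k => (key k).symm) h5
  have hF_meas : ∀ k : ℕ, AEStronglyMeasurable
      (fun t : ℝ => Complex.exp (Complex.I * (d k : ℂ) * t))
      ((volume : Measure ℝ).restrict (Set.uIoc (1:ℝ) 2)) := by
    intro k
    apply Continuous.aestronglyMeasurable
    exact Complex.continuous_exp.comp (by continuity)
  have hone : ∀ (k : ℕ) (c : ℂ), c.im = 0 → ‖Complex.exp (Complex.I * (d k : ℂ) * c)‖ = 1 := by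
    intro k c hc
    rw [Complex.norm_exp]
    simp [Complex.mul_re, Complex.mul_im, hc]
  have hDCT : Tendsto (fun k => ∫ t in (1:ℝ)..2, Complex.exp (Complex.I * (d k : ℂ) * t)) atTop
      (𝓝 (∫ _t in (1:ℝ)..2, (1:ℂ))) := by
    apply intervalIntegral.tendsto_integral_filter_of_dominated_convergence (fun _ => 1)
    · exact Eventually.of_forall hF_meas
    · exact Eventually.of_forall fun k => Eventually.of_forall fun t _ => le_of_eq (hone k t (by simp))
    · exact intervalIntegrable_const
    · refine Eventually.of_forall fun t ht => hpt t ?_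
      rcases Set.mem_uIoc.1 ht with h | h
      · exact ⟨le_of_lt h.1, h.2⟩
      · exact ⟨by linarith [h.1], by linarith [h.2]⟩
  have hint1 : (∫ _t in (1:ℝ)..2, (1:ℂ)) = 1 := by rw [intervalIntegral.integral_const]; norm_num
  have hval : ∀ k, (∫ t in (1:ℝ)..2, Complex.exp (Complex.I * (d k : ℂ) * t)) =
      (Complex.exp (Complex.I * (d k : ℂ) * 2) - Complex.exp (Complex.I * (d k : ℂ) * 1)) /
        (Complex.I * (d k : ℂ)) := by
    intro k
    have hc : Complex.I * (d k : ℂ) ≠ 0 := by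
      apply mul_ne_zero Complex.I_ne_zero
      simpa using (hdpos k).ne'
    simpa using integral_exp_mul_complex (a := 1) (b := 2) hc
  have hzero : Tendsto (fun k => ∫ t in (1:ℝ)..2, Complex.exp (Complex.I * (d k : ℂ) * t)) atTop
      (𝓝 0) := by
    have hglim : Tendsto (fun k => 2 / d k) atTop (𝓝 0) :=
      Tendsto.div_atTop tendsto_const_nhds hdtop
    refine squeeze_zero_norm (fun k => ?_) hglim
    rw [hval k, norm_div]
    have h1 : ‖Complex.exp (Complex.I * (d k : ℂ) * 2) - Complex.exp (Complex.I * (d k : ℂ) * 1)‖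
        ≤ 2 := by
      calc ‖_ - _‖ ≤ ‖Complex.exp (Complex.I * (d k : ℂ) * 2)‖ +
            ‖Complex.exp (Complex.I * (d k : ℂ) * 1)‖ := norm_sub_le _ _
        _ = 2 := by rw [hone k 2 (by simp), hone k 1 (by simp)]; norm_num
    have h2 : ‖Complex.I * (d k : ℂ)‖ = d k := by
      rw [norm_mul]
      simp [_root_.abs_of_pos (hdpos k)]
    rw [h2]
    exact (div_le_div_iff_of_pos_right (hdpos k)).2 h1
  exact one_ne_zero (hint1 ▸ tendsto_nhds_unique hDCT hzero)
open Filter Topology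

lemma lemA {E : Type*} [NormedAddCommGroup E] [NormedSpace ℂ E] [CompleteSpace E]
    (Mu : E →L[ℂ] E) (hclosed : IsClosed ((LinearMap.range (Mu : E →ₗ[ℂ] E) : Submodule ℂ E) : Set E))
    (hcoker : FiniteDimensional ℂ (E ⧸ (LinearMap.range (Mu : E →ₗ[ℂ] E) : Submodule ℂ E))) :
    ∃ K : Submodule ℂ (E →L[ℂ] ℂ), FiniteDimensional ℂ K ∧
      ∃ C : ℝ, ∀ lam : E →L[ℂ] ℂ, ∃ κ ∈ K, ‖lam - κ‖ ≤ C * ‖lam.comp Mu‖ := by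
  classical
  set R : Submodule ℂ E := LinearMap.range (Mu : E →ₗ[ℂ] E) with hR
  haveI : CompleteSpace R := hclosed.completeSpace_coe
  haveI : IsClosed (R : Set E) := hclosed
  haveI := hcoker
  -- open mapping constant
  let Mu' : E →L[ℂ] R := Mu.codRestrict R (fun x => LinearMap.mem_range_self _ x)
  have hsurj : Function.Surjective Mu' := by
    rintro ⟨y, hy⟩
    obtain ⟨x, hx⟩ := hy
    exact ⟨x, Subtype.ext hx⟩
  obtain ⟨C0, hC0pos, hC0⟩ := Mu'.exists_preimage_norm_le hsurj
  -- continuous quotient map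
  let πc : E →L[ℂ] (E ⧸ R) := LinearMap.mkContinuous R.mkQ 1
    (fun x => by simpa using Submodule.Quotient.norm_mk_le R x)
  -- continuous linear section
  let bQ := Module.finBasis ℂ (E ⧸ R)
  let S0 : (E ⧸ R) →ₗ[ℂ] E := bQ.constr ℂ (fun i => (Submodule.Quotient.mk_surjective R (bQ i)).choose)
  have hS0 : ∀ q : E ⧸ R, R.mkQ (S0 q) = q := by
    have h : R.mkQ.comp S0 = LinearMap.id := by
      apply bQ.ext
      intro i
      simp only [LinearMap.comp_apply, LinearMap.id_apply, S0, Module.Basis.constr_basis]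
      exact (Submodule.Quotient.mk_surjective R (bQ i)).choose_spec
    intro q
    exact LinearMap.congr_fun h q
  let Sc : (E ⧸ R) →L[ℂ] E := ⟨S0, S0.continuous_of_finiteDimensional⟩
  let P : E →L[ℂ] E := ContinuousLinearMap.id ℂ E - Sc.comp πc
  have hπ : ∀ x : E, πc x = R.mkQ x := fun x => rfl
  have hPmem : ∀ x, P x ∈ R := by
    intro x
    have h0 : R.mkQ (P x) = 0 := by
      simp only [P, ContinuousLinearMap.sub_apply, ContinuousLinearMap.id_apply,
        ContinuousLinearMap.comp_apply, map_sub]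
      rw [hπ]
      change R.mkQ x - R.mkQ (S0 (R.mkQ x)) = 0
      rw [hS0, sub_self]
    rwa [← Submodule.Quotient.mk_eq_zero, ← Submodule.mkQ_apply]
  have hPid : ∀ x ∈ R, P x = x := by
    intro x hx
    have h0 : R.mkQ x = 0 := by rwa [Submodule.mkQ_apply, Submodule.Quotient.mk_eq_zero]
    simp only [P, ContinuousLinearMap.sub_apply, ContinuousLinearMap.id_apply,
      ContinuousLinearMap.comp_apply]
    rw [hπ, h0]
    change x - S0 0 = x
    rw [map_zero, sub_zero]
  -- annihilator of R
  let K : Submodule ℂ (E →L[ℂ] ℂ) :=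
  { carrier := {lam | ∀ y ∈ R, lam y = 0}
    add_mem' := fun ha hb y hy => by
      simp [ContinuousLinearMap.add_apply, ha y hy, hb y hy]
    zero_mem' := fun y _ => rfl
    smul_mem' := fun c lam hlam y hy => by
      simp [ContinuousLinearMap.smul_apply, hlam y hy] }
  have hKfd : FiniteDimensional ℂ K := by
    let Φ : K →ₗ[ℂ] ((E ⧸ R) →ₗ[ℂ] ℂ) :=
    { toFun := fun lam => R.liftQ (lam : E →L[ℂ] ℂ).toLinearMap
        (fun y hy => by simpa [LinearMap.mem_ker] using lam.2 y hy)
      map_add' := fun a b => by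
        apply Submodule.linearMap_qext
        ext x
        rfl
      map_smul' := fun c a => by
        apply Submodule.linearMap_qext
        ext x
        rfl }
    have hΦinj : Function.Injective Φ := by
      intro a b hab
      apply Subtype.ext
      ext x
      have := LinearMap.congr_fun hab (R.mkQ x)
      simpa [Φ, Submodule.liftQ_apply] using this
    exact FiniteDimensional.of_injective Φ hΦinj
  refine ⟨K, hKfd, C0 * ‖P‖, fun lam => ?_⟩
  refine ⟨lam - lam.comp P, fun y hy => ?_, ?_⟩
  · simp [ContinuousLinearMap.sub_apply, ContinuousLinearMap.comp_apply, hPid y hy]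
  · have hPeq : lam - (lam - lam.comp P) = lam.comp P := by abel
    rw [hPeq]
    apply ContinuousLinearMap.opNorm_le_bound
    · positivity
    intro x
    obtain ⟨w, hw, hwn⟩ := hC0 ⟨P x, hPmem x⟩
    have hw' : Mu w = P x := congrArg Subtype.val hw
    have hnPx : ‖(⟨P x, hPmem x⟩ : R)‖ = ‖P x‖ := rfl
    rw [hnPx] at hwn
    calc ‖(lam.comp P) x‖ = ‖(lam.comp Mu) w‖ := by
          simp only [ContinuousLinearMap.comp_apply, hw']
      _ ≤ ‖lam.comp Mu‖ * ‖w‖ := (lam.comp Mu).le_opNorm w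
      _ ≤ ‖lam.comp Mu‖ * (C0 * ‖P x‖) := by
          apply mul_le_mul_of_nonneg_left (le_trans hwn (by nlinarith [norm_nonneg (P x)])) (norm_nonneg _)
      _ ≤ ‖lam.comp Mu‖ * (C0 * (‖P‖ * ‖x‖)) := by
          have h2 := P.le_opNorm x
          have h0 : (0:ℝ) ≤ C0 := le_of_lt hC0pos
          have h1 : (0:ℝ) ≤ ‖lam.comp Mu‖ := norm_nonneg _
          nlinarith [mul_le_mul_of_nonneg_left h2 (mul_nonneg h1 h0)]
      _ = C0 * ‖P‖ * ‖lam.comp Mu‖ * ‖x‖ := by ring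
open Filter Topology Metric

lemma lemC {α ζ : ℂ} (hα : ‖α‖ = 1) (hζ : ‖ζ‖ < 1) :
    0 < ((α + ζ) / (α - ζ)).re := by
  have hden : α - ζ ≠ 0 := by
    intro h
    have : α = ζ := by linear_combination h
    rw [this] at hα
    linarith
  rw [Complex.div_re]
  have hns : 0 < Complex.normSq (α - ζ) := Complex.normSq_pos.2 hden
  rw [← add_div]
  apply div_pos _ hns
  have h1 : Complex.normSq α = 1 := by
    have := Complex.sq_norm α
    rw [hα] at this
    linarith [this]
  have h2 : Complex.normSq ζ < 1 := by
    have := Complex.sq_norm ζ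
    nlinarith [norm_nonneg ζ]
  simp only [Complex.normSq_apply, Complex.add_re, Complex.add_im, Complex.sub_re,
    Complex.sub_im] at h1 h2 ⊢
  nlinarith

lemma lemD {α : ℂ} (hα : ‖α‖ = 1) (t : ℝ) :
    DifferentiableOn ℂ
      (fun ζ : ℂ => Complex.exp (Complex.I * t * Complex.log ((α + ζ) / (α - ζ))))
      (ball (0:ℂ) 1) ∧
    ∀ ζ ∈ ball (0:ℂ) 1,
      ‖Complex.exp (Complex.I * t * Complex.log ((α + ζ) / (α - ζ)))‖
        ≤ Real.exp (|t| * (Real.pi / 2)) := by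
  constructor
  · intro ζ hζ
    have hζ1 : ‖ζ‖ < 1 := by
      rw [mem_ball_zero_iff] at hζ
      simpa using hζ
    have hden : α - ζ ≠ 0 := by
      intro h
      have : α = ζ := by linear_combination h
      rw [this] at hα
      linarith
    have hre := lemC hα hζ1
    have hq : DifferentiableAt ℂ (fun ξ : ℂ => (α + ξ) / (α - ξ)) ζ := by
      apply DifferentiableAt.div
      · exact (differentiableAt_const α).add differentiableAt_id
      · exact (differentiableAt_const α).sub differentiableAt_id
      · exact hden
    have hslit : (α + ζ) / (α - ζ) ∈ Complex.slitPlane := Or.inl hre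
    exact (((hq.clog hslit).const_mul (Complex.I * t)).cexp).differentiableWithinAt
  · intro ζ hζ
    have hζ1 : ‖ζ‖ < 1 := by
      rw [mem_ball_zero_iff] at hζ
      simpa using hζ
    have hre := lemC hα hζ1
    rw [Complex.norm_exp]
    apply Real.exp_le_exp.2
    have him : |(Complex.log ((α + ζ) / (α - ζ))).im| ≤ Real.pi / 2 := by
      rw [Complex.log_im]
      exact Complex.abs_arg_le_pi_div_two_iff.2 (le_of_lt hre)
    have hre2 : (Complex.I * t * Complex.log ((α + ζ) / (α - ζ))).re
        = -(t * (Complex.log ((α + ζ) / (α - ζ))).im) := by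
      simp [Complex.mul_re, Complex.mul_im]
    rw [hre2]
    calc -(t * (Complex.log ((α + ζ) / (α - ζ))).im) ≤ |t * (Complex.log ((α + ζ) / (α - ζ))).im| :=
          neg_le_abs _
      _ = |t| * |(Complex.log ((α + ζ) / (α - ζ))).im| := _root_.abs_mul _ _
      _ ≤ |t| * (Real.pi / 2) := mul_le_mul_of_nonneg_left him (abs_nonneg t)

open Metric Set
set_option maxHeartbeats 1000000
set_option synthInstance.maxHeartbeats 1000000

/-- A bounded operator is Fredholm if it has closed range and finite-dimensional
kernel and cokernel. -/
def IsFredholmOp {E : Type*} [NormedAddCommGroup E] [NormedSpace ℂ E] (T : E →L[ℂ] E) : Prop :=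
  IsClosed (LinearMap.range (T : E →ₗ[ℂ] E) : Set E) ∧ FiniteDimensional ℂ (LinearMap.ker (T : E →ₗ[ℂ] E)) ∧
    FiniteDimensional ℂ (E ⧸ LinearMap.range (T : E →ₗ[ℂ] E))

/-- Let `X` be a Banach space of holomorphic functions on the unit disk `𝔻`
satisfying condition (I) and with `M(X) = H^∞(𝔻)`, and let `u ∈ M(X)`. If the multiplication
operator `M_u : X → X` is Fredholm, then there are `r ∈ (0,1)` and `δ > 0` with `|u(z)| ≥ δ`
whenever `r ≤ |z| < 1`. -/
theorem stmt_6 {E : Type*} [NormedAddCommGroup E] [NormedSpace ℂ E] [CompleteSpace E]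
    (ι : E →ₗ[ℂ] (ℂ → ℂ))
    -- X consists of holomorphic functions on 𝔻
    (hhol : ∀ f : E, DifferentiableOn ℂ (ι f) (ball (0 : ℂ) 1))
    -- elements of X are determined by their values on 𝔻
    (hinj : ∀ f g : E, Set.EqOn (ι f) (ι g) (ball (0 : ℂ) 1) → f = g)
    -- X contains the constant functions
    (hconst : ∀ c : ℂ, ∃ f : E, ∀ z ∈ ball (0 : ℂ) 1, ι f z = c)
    -- condition (I): point evaluations are continuous
    (hI : ∀ z ∈ ball (0 : ℂ) 1, ∃ Cz : ℝ, ∀ f : E, ‖ι f z‖ ≤ Cz * ‖f‖)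
    -- `M(X) = H^∞(𝔻)`: a holomorphic function on 𝔻 is a multiplier iff it is bounded on 𝔻
    (hMX : ∀ v : ℂ → ℂ, DifferentiableOn ℂ v (ball (0 : ℂ) 1) →
      ((∀ f : E, ∃ g : E, ∀ z ∈ ball (0 : ℂ) 1, ι g z = v z * ι f z) ↔
        ∃ M : ℝ, ∀ z ∈ ball (0 : ℂ) 1, ‖v z‖ ≤ M))
    -- `u ∈ M(X)` with induced multiplication operator `Mu`
    (u : ℂ → ℂ) (hu : DifferentiableOn ℂ u (ball (0 : ℂ) 1))
    (humult : ∀ f : E, ∃ g : E, ∀ z ∈ ball (0 : ℂ) 1, ι g z = u z * ι f z)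
    (Mu : E →L[ℂ] E)
    (hMu : ∀ f : E, ∀ z ∈ ball (0 : ℂ) 1, ι (Mu f) z = u z * ι f z)
    (hFred : IsFredholmOp Mu) :
    ∃ r ∈ Set.Ioo (0 : ℝ) 1, ∃ δ : ℝ, 0 < δ ∧
      ∀ z : ℂ, r ≤ ‖z‖ → ‖z‖ < 1 → δ ≤ ‖u z‖ := by
  classical
  by_contra hcon
  push_neg at hcon
  -- extract a sequence approaching the boundary on which u is small
  have hseq : ∀ k : ℕ, ∃ zk : ℂ, (1 - 1/(k+1:ℝ)) ≤ ‖zk‖ ∧ ‖zk‖ < 1 ∧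
      ‖u zk‖ < 1/(k+1:ℝ) := by
    intro k
    have hk2 : (0:ℝ) < (k:ℝ) + 2 := by positivity
    have hr : (1 - 1/(k+2:ℝ)) ∈ Set.Ioo (0:ℝ) 1 := by
      constructor
      · have h1 : (1:ℝ)/(k+2) < 1 := by
          rw [div_lt_one hk2]; linarith [Nat.cast_nonneg (α := ℝ) k]
        linarith
      · have h2 : (0:ℝ) < 1/(k+2) := by positivity
        linarith
    obtain ⟨zz, h1, h2, h3⟩ := hcon _ hr (1/(k+1:ℝ)) (by positivity)
    refine ⟨zz, ?_, h2, h3⟩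
    have h4 : (1:ℝ)/(k+2) ≤ 1/(k+1) := by
      apply one_div_le_one_div_of_le (by positivity)
      linarith
    linarith
  choose zs hzs1 hzs2 hzs3 using hseq
  have hzball : ∀ k, zs k ∈ ball (0:ℂ) 1 := fun k => by
    rw [mem_ball_zero_iff]; exact hzs2 k
  -- evaluation functionals
  have hev0 : ∀ z : ℂ, z ∈ ball (0:ℂ) 1 → ∃ lam : E →L[ℂ] ℂ, ∀ f : E, lam f = ι f z := by
    intro z hz
    obtain ⟨Cz, hCz⟩ := hI z hz
    let l : E →ₗ[ℂ] ℂ :=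
    { toFun := fun f => ι f z
      map_add' := fun f g => by show ι (f + g) z = ι f z + ι g z; rw [map_add]; rfl
      map_smul' := fun c f => by show ι (c • f) z = c • ι f z; rw [_root_.map_smul]; rfl }
    refine ⟨LinearMap.mkContinuous l Cz (fun f => ?_), fun f => rfl⟩
    simpa [l] using hCz f
  choose ev hev using hev0
  obtain ⟨f1, hf1⟩ := hconst 1
  have hevne : ∀ (z : ℂ) (hz : z ∈ ball (0:ℂ) 1), 0 < ‖ev z hz‖ := by
    intro z hz
    have h1 : ev z hz f1 = 1 := by rw [hev z hz f1, hf1 z hz]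
    have h2 : ev z hz ≠ 0 := fun h => by rw [h] at h1; simp at h1
    exact norm_pos_iff.2 h2
  obtain ⟨K, hKfd, C, hC⟩ := lemA Mu hFred.1 hFred.2.2
  set C1 := max C 0 with hC1def
  have hC1nn : (0:ℝ) ≤ C1 := le_max_right _ _
  set lam : ℕ → (E →L[ℂ] ℂ) := fun k => ev (zs k) (hzball k) with hlamdef
  have hcomp : ∀ k, (lam k).comp Mu = u (zs k) • lam k := by
    intro k; ext f
    rw [ContinuousLinearMap.comp_apply, ContinuousLinearMap.smul_apply]
    show ev (zs k) (hzball k) (Mu f) = u (zs k) • ev (zs k) (hzball k) f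
    rw [hev _ _ (Mu f), hMu f (zs k) (hzball k), hev _ _ f, smul_eq_mul]
  have hnormcomp : ∀ k, ‖(lam k).comp Mu‖ = ‖u (zs k)‖ * ‖lam k‖ := by
    intro k
    rw [hcomp k]
    rw [norm_smul (u (zs k)) (lam k)]
  have hκ0 : ∀ k : ℕ, ∃ κ ∈ K, ‖lam k - κ‖ ≤ C1 * (‖lam k‖ / (k+1)) := by
    intro k
    obtain ⟨κ, hκK, hκle⟩ := hC (lam k)
    refine ⟨κ, hκK, hκle.trans ?_⟩
    rw [hnormcomp k]
    have h1 : ‖u (zs k)‖ * ‖lam k‖ ≤ ‖lam k‖ / (k+1) := by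
      rw [div_eq_mul_inv, mul_comm (‖lam k‖)]
      apply mul_le_mul (le_of_lt ?_) (le_refl _) (norm_nonneg _) (by positivity)
      rw [← one_div]
      exact hzs3 k
    have h2 : C ≤ C1 := le_max_left _ _
    have h3 : (0:ℝ) ≤ ‖u (zs k)‖ * ‖lam k‖ :=
      mul_nonneg (norm_nonneg _) (norm_nonneg _)
    nlinarith
  choose κ hκK hκle using hκ0
  set e : ℕ → (E →L[ℂ] ℂ) := fun k => (‖lam k‖)⁻¹ • lam k with hedef
  set q : ℕ → (E →L[ℂ] ℂ) := fun k => (‖lam k‖)⁻¹ • κ k with hqdef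
  have hqK : ∀ k, q k ∈ K := fun k => K.smul_mem _ (hκK k)
  have hen : ∀ k, ‖e k‖ = 1 := fun k => by
    show ‖(‖lam k‖)⁻¹ • lam k‖ = 1
    rw [norm_smul ((‖lam k‖)⁻¹) (lam k), norm_inv, norm_norm]
    exact inv_mul_cancel₀ (ne_of_gt (hevne _ _))
  have heq : ∀ k : ℕ, ‖e k - q k‖ ≤ C1 / (k+1) := by
    intro k
    have hlk : ‖lam k‖ ≠ 0 := ne_of_gt (hevne _ _)
    show ‖(‖lam k‖)⁻¹ • lam k - (‖lam k‖)⁻¹ • κ k‖ ≤ C1 / (k+1)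
    rw [← smul_sub ((‖lam k‖)⁻¹) (lam k) (κ k)]
    rw [norm_smul ((‖lam k‖)⁻¹) (lam k - κ k), norm_inv, norm_norm]
    calc ‖lam k‖⁻¹ * ‖lam k - κ k‖ ≤ ‖lam k‖⁻¹ * (C1 * (‖lam k‖/(k+1))) := by
          apply mul_le_mul_of_nonneg_left (hκle k) (by positivity)
      _ = C1/(k+1) := by field_simp
  have hqbd : ∀ k, ‖q k‖ ≤ 1 + C1 := by
    intro k
    have h1 : ‖q k‖ ≤ ‖e k‖ + ‖e k - q k‖ := by
      calc ‖q k‖ = ‖e k - (e k - q k)‖ := by congr 1; abel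
        _ ≤ ‖e k‖ + ‖e k - q k‖ := norm_sub_le _ _
    have h2 : C1/(k+1:ℝ) ≤ C1 := by
      apply div_le_self hC1nn
      linarith [Nat.cast_nonneg (α := ℝ) k]
    have := heq k
    rw [hen k] at h1
    linarith
  haveI := hKfd
  let q' : ℕ → ↥K := fun k => ⟨q k, hqK k⟩
  have hq'bd : ∀ k, q' k ∈ closedBall (0 : ↥K) (1 + C1) := by
    intro k
    exact mem_closedBall_zero_iff.mpr (hqbd k)
  obtain ⟨μ', _hμ'mem, φ1, hφ1mono, hφ1lim⟩ :=
    (isCompact_closedBall (0:↥K) (1+C1)).tendsto_subseq hq'bd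
  set μ : E →L[ℂ] ℂ := (μ' : E →L[ℂ] ℂ) with hμdef
  have hqlim : Filter.Tendsto (fun j => q (φ1 j)) Filter.atTop (𝓝 μ) := by
    have := (continuous_subtype_val.tendsto μ').comp hφ1lim
    exact this
  have hediff : Filter.Tendsto (fun j => e (φ1 j) - q (φ1 j)) Filter.atTop (𝓝 0) := by
    have hlim0 : Filter.Tendsto (fun j : ℕ => C1 * (1/(j+1:ℝ))) Filter.atTop (𝓝 0) := by
      have := tendsto_one_div_add_atTop_nhds_zero_nat (𝕜 := ℝ)
      simpa using this.const_mul C1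
    apply squeeze_zero_norm (fun j => ?_) (by simpa [mul_one_div] using hlim0)
    calc ‖e (φ1 j) - q (φ1 j)‖ ≤ C1/(φ1 j + 1) := heq (φ1 j)
      _ ≤ C1/(j+1) := by
          apply div_le_div_of_nonneg_left hC1nn (by positivity)
          have h4 : j ≤ φ1 j := hφ1mono.le_apply
          have h5 : (j:ℝ) ≤ (φ1 j : ℝ) := by exact_mod_cast h4
          push_cast
          linarith
  have helim : Filter.Tendsto (fun j => e (φ1 j)) Filter.atTop (𝓝 μ) := by
    have h := hediff.add hqlim
    rw [zero_add] at h
    refine h.congr fun j => ?_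
    abel
  have hμnorm : ‖μ‖ = 1 := by
    have h1 : Filter.Tendsto (fun j => ‖e (φ1 j)‖) Filter.atTop (𝓝 ‖μ‖) := helim.norm
    have h2 : Filter.Tendsto (fun j => ‖e (φ1 j)‖) Filter.atTop (𝓝 1) := by
      simp only [hen]
      exact tendsto_const_nhds
    exact tendsto_nhds_unique h1 h2
  -- boundary limit point
  have hzcb : ∀ j, zs (φ1 j) ∈ closedBall (0:ℂ) 1 := fun j =>
    mem_closedBall_zero_iff.mpr (by exact le_of_lt (hzs2 _))
  obtain ⟨α, hαmem, φ2, hφ2mono, hφ2lim⟩ :=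
    (isCompact_closedBall (0:ℂ) 1).tendsto_subseq hzcb
  set ψ : ℕ → ℕ := φ1 ∘ φ2 with hψdef
  have hψmono : StrictMono ψ := hφ1mono.comp hφ2mono
  set w : ℕ → ℂ := fun i => zs (ψ i) with hwdef
  have hwlim : Filter.Tendsto w Filter.atTop (𝓝 α) := hφ2lim
  have hαle : ‖α‖ ≤ 1 := by
    have := mem_closedBall_zero_iff.mp hαmem
    exact this
  have hαge : (1:ℝ) ≤ ‖α‖ := by
    have htend : Filter.Tendsto (fun i => ‖w i‖) Filter.atTop (𝓝 (‖α‖)) :=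
      (continuous_norm.tendsto α).comp hwlim
    have hlow : Filter.Tendsto (fun i : ℕ => 1 - 1/(i+1:ℝ)) Filter.atTop (𝓝 1) := by
      have h0 := tendsto_one_div_add_atTop_nhds_zero_nat (𝕜 := ℝ)
      have h1 := (tendsto_const_nhds (α := ℕ) (f := Filter.atTop) (x := (1:ℝ))).sub h0
      simpa using h1
    refine le_of_tendsto_of_tendsto hlow htend (Filter.Eventually.of_forall fun i => ?_)
    have h1 := hzs1 (ψ i)
    have h2 : (1:ℝ)/(ψ i + 1) ≤ 1/(i+1) := by
      apply one_div_le_one_div_of_le (by positivity)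
      have h3 : i ≤ ψ i := hψmono.le_apply
      have h4 : (i:ℝ) ≤ (ψ i : ℝ) := by exact_mod_cast h3
      linarith
    simp only
    linarith
  have hα1 : ‖α‖ = 1 := le_antisymm hαle hαge
  have hewlim : Filter.Tendsto (fun i => e (ψ i)) Filter.atTop (𝓝 μ) :=
    helim.comp hφ2mono.tendsto_atTop
  -- a vector not annihilated by μ
  have hμne : μ ≠ 0 := by
    intro h
    rw [h, norm_zero] at hμnorm
    exact one_ne_zero hμnorm.symm
  obtain ⟨f0, hf0⟩ : ∃ f0 : E, μ f0 ≠ 0 := by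
    by_contra h
    push_neg at h
    exact hμne (ContinuousLinearMap.ext fun f => by rw [h f]; rfl)
  -- set up lemB data
  have hne : ∀ i, α - w i ≠ 0 := by
    intro i h
    have h1 : α = w i := by linear_combination h
    rw [h1] at hα1
    exact absurd hα1 (ne_of_lt (hzs2 _))
  have habs_top : Filter.Tendsto (fun i => ‖(α + w i)/(α - w i)‖)
      Filter.atTop Filter.atTop := by
    have hd0 : Filter.Tendsto (fun i => ‖α - w i‖) Filter.atTop (𝓝 0) := by
      have h1 : Filter.Tendsto (fun i => α - w i) Filter.atTop (𝓝 0) := by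
        have := (tendsto_const_nhds (α := ℕ) (f := Filter.atTop) (x := α)).sub hwlim
        simpa using this
      have h2 := (continuous_norm.tendsto 0).comp h1
      simpa [Function.comp_def] using h2
    have hdpos : ∀ i, 0 < ‖α - w i‖ := fun i => norm_pos_iff.2 (hne i)
    have hinv : Filter.Tendsto (fun i => (‖α - w i‖)⁻¹) Filter.atTop Filter.atTop := by
      apply tendsto_inv_nhdsGT_zero.comp
      rw [tendsto_nhdsWithin_iff]
      exact ⟨hd0, Filter.Eventually.of_forall fun i => hdpos i⟩
    have hnum : Filter.Tendsto (fun i => ‖α + w i‖) Filter.atTop (𝓝 2) := by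
      have h2 : Filter.Tendsto (fun i => α + w i) Filter.atTop (𝓝 (α + α)) :=
        tendsto_const_nhds.add hwlim
      have h3 := (continuous_norm.tendsto (α + α)).comp h2
      have h4 : ‖α + α‖ = 2 := by
        rw [show α + α = (2:ℂ) * α by ring, norm_mul, hα1]
        simp
      rw [h4] at h3
      exact h3
    have hev1 : ∀ᶠ i in Filter.atTop, 1 ≤ ‖α + w i‖ :=
      hnum.eventually (eventually_ge_nhds (by norm_num : (1:ℝ) < 2))
    apply Filter.tendsto_atTop_mono' Filter.atTop ?_ hinv
    filter_upwards [hev1] with i hi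
    rw [norm_div]
    rw [inv_eq_one_div]
    gcongr
  -- apply lemB
  refine lemB (fun i => Complex.log ((α + w i)/(α - w i))) ?_ ?_ ?_
  · -- real parts tend to infinity
    have h1 := Real.tendsto_log_atTop.comp habs_top
    refine Filter.Tendsto.congr (fun i => ?_) h1
    exact (Complex.log_re _).symm
  · -- imaginary parts bounded
    intro i
    rw [Complex.log_im]
    exact Complex.abs_arg_le_pi_div_two_iff.2 (le_of_lt (lemC hα1 (hzs2 (ψ i))))
  · -- convergence of the exponentials
    intro t ht
    obtain ⟨hdiff, hbd⟩ := lemD hα1 t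
    obtain ⟨g, hg⟩ := ((hMX _ hdiff).mpr ⟨Real.exp (|t| * (Real.pi/2)), hbd⟩) f0
    refine ⟨μ g / μ f0, ?_⟩
    have happly : ∀ v : E, Filter.Tendsto (fun i => e (ψ i) v) Filter.atTop (𝓝 (μ v)) := by
      intro v
      have hcont : Continuous (fun T : E →L[ℂ] ℂ => T v) :=
        (ContinuousLinearMap.apply ℂ ℂ v).continuous
      exact (hcont.tendsto μ).comp hewlim
    have hgf : ∀ i, e (ψ i) g =
        Complex.exp (Complex.I * t * Complex.log ((α + w i)/(α - w i))) * e (ψ i) f0 := by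
      intro i
      show ((‖lam (ψ i)‖)⁻¹ • lam (ψ i)) g
        = _ * ((‖lam (ψ i)‖)⁻¹ • lam (ψ i)) f0
      rw [ContinuousLinearMap.smul_apply, ContinuousLinearMap.smul_apply]
      have h1 : lam (ψ i) g = ι g (w i) := hev _ _ g
      have h2 : lam (ψ i) f0 = ι f0 (w i) := hev _ _ f0
      rw [h1, h2, hg (w i) (hzball (ψ i))]
      rw [Complex.real_smul, Complex.real_smul]
      ring
    have hne' : ∀ᶠ i in Filter.atTop, e (ψ i) f0 ≠ 0 := (happly f0).eventually_ne hf0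
    have hdiv := (happly g).div (happly f0) hf0
    refine Filter.Tendsto.congr' ?_ hdiv
    filter_upwards [hne'] with i hi
    show e (ψ i) g / e (ψ i) f0
      = Complex.exp (Complex.I * t * Complex.log ((α + w i)/(α - w i)))
    rw [hgf i]
    field_simp
end

section
/- Let X and Y be Banach spaces of holomorphic functions on 𝔻 satisfying conditions (I), (II), (III) and (IV), and let u ∈ M(X). If there exist r ∈ (0,1) and δ > 0 such that |u(z)| ≥ δ for all z with r ≤ |z| < 1, then the multiplication operator M_u : X → X is Fredholm. -/
open Metric Set

/-- The radial derivative on the disk, `Rf(z) = z f'(z)`. -/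
noncomputable def radDeriv1 (f : ℂ → ℂ) : ℂ → ℂ := fun z => z * deriv f z

section Helpers

lemma diffOn_radIter {f : ℂ → ℂ} (hf : DifferentiableOn ℂ f (ball (0:ℂ) 1)) (n : ℕ) :
    DifferentiableOn ℂ (radDeriv1^[n] f) (ball (0:ℂ) 1) := by
  induction n with
  | zero => simpa
  | succ n ih =>
    rw [Function.iterate_succ_apply']
    exact differentiableOn_id.mul ((ih.analyticOnNhd isOpen_ball).deriv.differentiableOn)

lemma eqOn_radIter {f g : ℂ → ℂ} {s : Set ℂ} (hs : IsOpen s) (h : EqOn f g s) (n : ℕ) :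
    EqOn (radDeriv1^[n] f) (radDeriv1^[n] g) s := by
  induction n with
  | zero => simpa
  | succ n ih =>
    intro z hz
    rw [Function.iterate_succ_apply', Function.iterate_succ_apply']
    show z * deriv (radDeriv1^[n] f) z = z * deriv (radDeriv1^[n] g) z
    rw [Filter.EventuallyEq.deriv_eq (Filter.eventuallyEq_of_mem (hs.mem_nhds hz) ih)]

end Helpers

lemma key_identity : ∀ (n : ℕ) {w g : ℂ → ℂ},
    DifferentiableOn ℂ w (ball (0:ℂ) 1) → DifferentiableOn ℂ g (ball (0:ℂ) 1) →
    ∀ (k : ℕ), n < k → ∀ z ∈ ball (0:ℂ) 1,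
    ∑ i ∈ Finset.range (k+1), ((-1)^i * (k.choose i) : ℂ) * (w z)^(k-i) *
      (radDeriv1^[n] (fun t => (w t)^i * g t)) z = 0 := by
  intro n
  induction n with
  | zero =>
    intro w g hw hg k hk z hz
    simp only [Function.iterate_zero, id_eq]
    have : ∀ i ∈ Finset.range (k+1),
        ((-1)^i * (k.choose i) : ℂ) * (w z)^(k-i) * ((w z)^i * g z)
          = ((-1)^i * (k.choose i) : ℂ) * ((w z)^k * g z) := by
      intro i hi
      have hik : i ≤ k := Nat.lt_succ_iff.mp (Finset.mem_range.mp hi)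
      rw [show ((-1)^i * (k.choose i) : ℂ) * (w z)^(k-i) * ((w z)^i * g z)
            = ((-1)^i * (k.choose i) : ℂ) * (((w z)^(k-i) * (w z)^i) * g z) by ring,
        ← pow_add, Nat.sub_add_cancel hik]
    rw [Finset.sum_congr rfl this, ← Finset.sum_mul]
    have h0 : (∑ i ∈ Finset.range (k+1), ((-1)^i * (k.choose i) : ℂ)) = 0 := by
      have := @Int.alternating_sum_range_choose k
      have hk0 : k ≠ 0 := (Nat.pos_of_ne_zero (by omega)).ne'
      rw [if_neg hk0] at this
      calc (∑ i ∈ Finset.range (k+1), ((-1)^i * (k.choose i) : ℂ))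
          = ((∑ i ∈ Finset.range (k+1), ((-1)^i * (k.choose i) : ℤ) : ℤ) : ℂ) := by
            push_cast
            exact Finset.sum_congr rfl (fun i _ => by ring)
        _ = 0 := by rw [this]; norm_num
    rw [h0, zero_mul]
  | succ n ih =>
    intro w g hw hg k hk z hz
    have hk1 : 1 ≤ k := by omega
    have hwat : DifferentiableAt ℂ w z := hw.differentiableAt (isOpen_ball.mem_nhds hz)
    have hBdiff : ∀ i : ℕ,
        DifferentiableOn ℂ (radDeriv1^[n] (fun t => (w t)^i * g t)) (ball (0:ℂ) 1) :=
      fun i => diffOn_radIter ((hw.pow i).mul hg) n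
    have hBat : ∀ i : ℕ, DifferentiableAt ℂ (radDeriv1^[n] (fun t => (w t)^i * g t)) z :=
      fun i => ((hBdiff i) z hz).differentiableAt (isOpen_ball.mem_nhds hz)
    have hS : (fun t => ∑ i ∈ Finset.range (k+1), ((-1)^i * (k.choose i) : ℂ) * (w t)^(k-i) *
        (radDeriv1^[n] (fun t' => (w t')^i * g t')) t) =ᶠ[nhds z] (fun _ => (0:ℂ)) :=
      Filter.eventuallyEq_of_mem (isOpen_ball.mem_nhds hz)
        (fun t ht => ih hw hg k (by omega) t ht)
    have hd0 : deriv (fun t => ∑ i ∈ Finset.range (k+1), ((-1)^i * (k.choose i) : ℂ) * (w t)^(k-i) *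
        (radDeriv1^[n] (fun t' => (w t')^i * g t')) t) z = 0 := by
      rw [hS.deriv_eq]; simp
    have hdsum : deriv (fun t => ∑ i ∈ Finset.range (k+1), ((-1)^i * (k.choose i) : ℂ) * (w t)^(k-i) *
        (radDeriv1^[n] (fun t' => (w t')^i * g t')) t) z
        = ∑ i ∈ Finset.range (k+1),
          (((-1)^i * (k.choose i) : ℂ) * (((k-i : ℕ):ℂ) * (w z)^(k-i-1) * deriv w z) *
             (radDeriv1^[n] (fun t' => (w t')^i * g t')) z
           + ((-1)^i * (k.choose i) : ℂ) * (w z)^(k-i) *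
             deriv (radDeriv1^[n] (fun t' => (w t')^i * g t')) z) := by
      rw [deriv_fun_sum (A := fun i t => ((-1)^i * (k.choose i) : ℂ) * (w t)^(k-i) *
          (radDeriv1^[n] (fun t' => (w t')^i * g t')) t) (fun i _ => (((differentiableAt_const _).mul (hwat.pow _)).mul (hBat i)))]
      refine Finset.sum_congr rfl (fun i _ => ?_)
      rw [deriv_fun_mul (c := fun t => ((-1)^i * (k.choose i) : ℂ) * (w t)^(k-i))
          ((differentiableAt_const _).mul (hwat.pow _)) (hBat i),
        deriv_const_mul (d := fun t => (w t)^(k-i)) _ (hwat.pow _), deriv_fun_pow hwat _]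
      try ring
    rw [hdsum, Finset.sum_add_distrib] at hd0
    -- the first sum vanishes
    have hnat : ∀ i : ℕ, (k - i) * k.choose i = k * (k-1).choose i := by
      obtain ⟨k', rfl⟩ : ∃ k', k = k'+1 := ⟨k-1, by omega⟩
      intro i
      have h1 := Nat.choose_succ_right_eq (k'+1) i
      have h2 := Nat.add_one_mul_choose_eq k' i
      simp only [Nat.succ_eq_add_one, Nat.add_sub_cancel] at h1 h2 ⊢
      rw [mul_comm, h1.symm.trans h2.symm]
    have hfirst : ∑ i ∈ Finset.range (k+1),
        ((-1)^i * (k.choose i) : ℂ) * (((k-i : ℕ):ℂ) * (w z)^(k-i-1) * deriv w z) *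
          (radDeriv1^[n] (fun t' => (w t')^i * g t')) z = 0 := by
      have hA : ∑ i ∈ Finset.range k, ((-1)^i * ((k-1).choose i) : ℂ) * (w z)^(k-1-i) *
          (radDeriv1^[n] (fun t' => (w t')^i * g t')) z = 0 := by
        have := ih hw hg (k-1) (by omega) z hz
        rwa [Nat.sub_add_cancel hk1] at this
      have hcongr : ∀ i ∈ Finset.range (k+1),
          ((-1)^i * (k.choose i) : ℂ) * (((k-i : ℕ):ℂ) * (w z)^(k-i-1) * deriv w z) *
            (radDeriv1^[n] (fun t' => (w t')^i * g t')) z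
          = (deriv w z * k) * (((-1)^i * ((k-1).choose i) : ℂ) * (w z)^(k-1-i) *
            (radDeriv1^[n] (fun t' => (w t')^i * g t')) z) := by
        intro i _
        have hexp : k - i - 1 = k - 1 - i := by omega
        have hc : (((k-i) * k.choose i : ℕ) : ℂ) = ((k * (k-1).choose i : ℕ) : ℂ) := by
          rw [hnat i]
        push_cast at hc
        rw [hexp]
        calc ((-1)^i * (k.choose i) : ℂ) * (((k-i : ℕ):ℂ) * (w z)^(k-1-i) * deriv w z) *
              (radDeriv1^[n] (fun t' => (w t')^i * g t')) z
            = ((-1)^i * (((k-i : ℕ):ℂ) * ((k.choose i):ℂ)) : ℂ) * ((w z)^(k-1-i) * deriv w z) *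
              (radDeriv1^[n] (fun t' => (w t')^i * g t')) z := by ring
          _ = ((-1)^i * (((k : ℕ):ℂ) * ((k-1).choose i)) : ℂ) * ((w z)^(k-1-i) * deriv w z) *
              (radDeriv1^[n] (fun t' => (w t')^i * g t')) z := by rw [hc]
          _ = (deriv w z * k) * (((-1)^i * ((k-1).choose i) : ℂ) * (w z)^(k-1-i) *
              (radDeriv1^[n] (fun t' => (w t')^i * g t')) z) := by ring
      rw [Finset.sum_congr rfl hcongr, ← Finset.mul_sum]
      have : ∑ i ∈ Finset.range (k+1), ((-1)^i * ((k-1).choose i) : ℂ) * (w z)^(k-1-i) *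
          (radDeriv1^[n] (fun t' => (w t')^i * g t')) z = 0 := by
        obtain ⟨k', rfl⟩ : ∃ k', k = k'+1 := ⟨k-1, by omega⟩
        rw [Finset.sum_range_succ]
        simp only [Nat.add_sub_cancel] at hA ⊢
        rw [hA, Nat.choose_eq_zero_of_lt (by omega)]
        simp
      rw [this, mul_zero]
    rw [hfirst, zero_add] at hd0
    -- now conclude
    have hgoal : ∀ i ∈ Finset.range (k+1),
        ((-1)^i * (k.choose i) : ℂ) * (w z)^(k-i) *
          (radDeriv1^[n+1] (fun t => (w t)^i * g t)) z
        = z * (((-1)^i * (k.choose i) : ℂ) * (w z)^(k-i) *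
            deriv (radDeriv1^[n] (fun t' => (w t')^i * g t')) z) := by
      intro i _
      rw [Function.iterate_succ_apply']
      show ((-1)^i * (k.choose i) : ℂ) * (w z)^(k-i) *
          (z * deriv (radDeriv1^[n] (fun t => (w t)^i * g t)) z) = _
      ring
    rw [Finset.sum_congr rfl hgoal, ← Finset.mul_sum, hd0, mul_zero]

lemma diff_listprod (L : List ℂ) :
    Differentiable ℂ (fun z : ℂ => (L.map (fun a => z - a)).prod) := by
  induction L with
  | nil => simpa using differentiable_const (1:ℂ)
  | cons a L ih =>
    simp only [List.map_cons, List.prod_cons]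
    exact (differentiable_id.sub (differentiable_const a)).mul ih

lemma abs_listprod_le {L : List ℂ} (hL : ∀ a ∈ L, a ∈ ball (0:ℂ) 1) {z : ℂ}
    (hz : z ∈ ball (0:ℂ) 1) :
    ‖(L.map (fun a => z - a)).prod‖ ≤ 2 ^ L.length := by
  induction L with
  | nil => simp
  | cons a L ih =>
    simp only [List.map_cons, List.prod_cons, norm_mul, List.length_cons]
    have ha : ‖a‖ < 1 := by
      have := hL a (by simp)
      rwa [mem_ball, dist_zero_right] at this
    have hz1 : ‖z‖ < 1 := by
      rwa [mem_ball, dist_zero_right] at hz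
    have h1 : ‖z - a‖ ≤ 2 := by
      calc ‖z - a‖ ≤ ‖z‖ + ‖a‖ := by
            simpa using norm_sub_le z a
        _ ≤ 2 := by linarith
    have h2 := ih (fun b hb => hL b (by simp [hb]))
    calc ‖z - a‖ * ‖(L.map (fun a => z - a)).prod‖
        ≤ 2 * 2 ^ L.length := by
          apply mul_le_mul h1 h2 (norm_nonneg _) (by norm_num)
      _ = 2 ^ (L.length + 1) := by ring

lemma radIter_monomial (i : ℕ) : ∀ (n : ℕ),
    radDeriv1^[n] (fun z : ℂ => z^i) = fun z => ((i:ℂ)^n) * z^i := by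
  intro n
  induction n with
  | zero => funext z; simp
  | succ n ih =>
    rw [Function.iterate_succ_apply', ih]
    funext z
    show z * deriv (fun z : ℂ => ((i:ℂ)^n) * z^i) z = (i:ℂ)^(n+1) * z^i
    rw [deriv_const_mul _ (differentiableAt_pow i), deriv_pow_field]
    rcases Nat.eq_zero_or_pos i with h0 | hpos
    · subst h0; simp
    · have : z * ((i:ℂ)^n * ((i:ℂ) * z^(i-1))) = (i:ℂ)^(n+1) * (z * z^(i-1)) := by ring
      rw [this, ← pow_succ' z (i-1), Nat.sub_add_cancel hpos]

lemma interp : ∀ (L : List ℂ) (f : ℂ → ℂ), DifferentiableOn ℂ f (ball (0:ℂ) 1) →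
    (∀ a ∈ L, a ∈ ball (0:ℂ) 1) →
    ∃ (P : Polynomial ℂ) (g : ℂ → ℂ), P.degree < (L.length : WithBot ℕ) ∧
      DifferentiableOn ℂ g (ball (0:ℂ) 1) ∧
      (∀ z ∈ ball (0:ℂ) 1, f z = P.eval z + (L.map (fun a => z - a)).prod * g z) := by
  intro L
  induction L with
  | nil =>
    intro f hf _
    exact ⟨0, f, by simp [Polynomial.degree_zero], hf, fun z hz => by simp⟩
  | cons a L ih =>
    intro f hf hmem
    have ha : a ∈ ball (0:ℂ) 1 := hmem a (by simp)
    -- f₁ := dslope f a is differentiable on ball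
    have hf₁ : DifferentiableOn ℂ (dslope f a) (ball (0:ℂ) 1) := by
      intro z hz
      rcases eq_or_ne z a with rfl | hne
      · obtain ⟨p, hp⟩ := (hf.analyticOnNhd isOpen_ball) z hz
        exact (hp.has_fpower_series_dslope_fslope.analyticAt).differentiableAt.differentiableWithinAt
      · exact (differentiableWithinAt_dslope_of_ne hne).mpr (hf z hz)
    obtain ⟨P', g, hdeg, hg, heq⟩ := ih (dslope f a) hf₁ (fun b hb => hmem b (by simp [hb]))
    refine ⟨Polynomial.C (f a) + (Polynomial.X - Polynomial.C a) * P', g, ?_, hg, ?_⟩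
    · apply lt_of_le_of_lt (Polynomial.degree_add_le _ _)
      rw [max_lt_iff]
      constructor
      · apply lt_of_le_of_lt (Polynomial.degree_C_le)
        exact_mod_cast WithBot.coe_lt_coe.mpr (by simp)
      · rw [Polynomial.degree_mul, Polynomial.degree_X_sub_C]
        rcases eq_or_ne P' 0 with rfl | hne
        · simp only [Polynomial.degree_zero, WithBot.add_bot]
          exact bot_lt_iff_ne_bot.mpr (by simp [WithBot.add_eq_bot])
        · rw [Polynomial.degree_eq_natDegree hne] at hdeg ⊢
          have h' : P'.natDegree < L.length := by exact_mod_cast hdeg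
          simp only [List.length_cons]
          have hcast : (1 : WithBot ℕ) + (P'.natDegree : WithBot ℕ)
              = ((P'.natDegree + 1 : ℕ) : WithBot ℕ) := by push_cast; ring
          rw [hcast]
          exact_mod_cast by omega
    · intro z hz
      have h1 : (z - a) * dslope f a z = f z - f a := by
        have := sub_smul_dslope f a z
        simpa [smul_eq_mul] using this
      have h2 := heq z hz
      simp only [List.map_cons, List.prod_cons, Polynomial.eval_add, Polynomial.eval_C,
        Polynomial.eval_mul, Polynomial.eval_sub, Polynomial.eval_X]
      calc f z = f a + (z - a) * dslope f a z := by rw [h1]; ring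
        _ = f a + (z - a) * (Polynomial.eval z P' + (L.map (fun a => z - a)).prod * g z) := by
            rw [← h2]
        _ = f a + (z - a) * Polynomial.eval z P'
              + (z - a) * (L.map (fun a => z - a)).prod * g z := by ring

section Zeros
variable {r ε : ℝ}

lemma ann_witness (hr0 : 0 < r) (hr1 : r < 1) :
    ∃ z : ℂ, r ≤ ‖z‖ ∧ ‖z‖ < 1 ∧ z ∈ ball (0:ℂ) 1 := by
  refine ⟨(((r+1)/2 : ℝ) : ℂ), ?_, ?_, ?_⟩
  · rw [Complex.norm_real, Real.norm_eq_abs, abs_of_pos (by linarith)]; linarith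
  · rw [Complex.norm_real, Real.norm_eq_abs, abs_of_pos (by linarith)]; linarith
  · rw [mem_ball, dist_zero_right, Complex.norm_real, Real.norm_eq_abs,
      abs_of_pos (by linarith)]; linarith

lemma not_zero_on_ball {φ : ℂ → ℂ} (hr0 : 0 < r) (hr1 : r < 1) (hε : 0 < ε)
    (hb : ∀ z : ℂ, r ≤ ‖z‖ → ‖z‖ < 1 → ε ≤ ‖φ z‖) :
    ¬ (EqOn φ 0 (ball (0:ℂ) 1)) := by
  intro h
  obtain ⟨z, h1, h2, h3⟩ := ann_witness hr0 hr1
  have := hb z h1 h2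
  rw [h h3] at this
  simp at this
  linarith

lemma peel {φ : ℂ → ℂ} {z₀ : ℂ} (hφ : DifferentiableOn ℂ φ (ball (0:ℂ) 1))
    (hz₀ : z₀ ∈ ball (0:ℂ) 1) (hne : ¬ (∀ᶠ t in nhds z₀, φ t = 0)) :
    ∃ (n : ℕ) (ψ : ℂ → ℂ), DifferentiableOn ℂ ψ (ball (0:ℂ) 1) ∧ ψ z₀ ≠ 0 ∧
      (∀ z ∈ ball (0:ℂ) 1, φ z = (z - z₀)^n * ψ z) ∧ (φ z₀ = 0 → 1 ≤ n) := by
  have han : AnalyticAt ℂ φ z₀ := (hφ.analyticOnNhd isOpen_ball) z₀ hz₀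
  obtain ⟨n, g, hg_an, hg_ne, hg_eq⟩ := han.exists_eventuallyEq_pow_smul_nonzero_iff.mpr hne
  simp only [smul_eq_mul] at hg_eq
  set ψ : ℂ → ℂ := fun z => if z = z₀ then g z₀ else φ z / (z - z₀)^n with hψ
  have hψev : ψ =ᶠ[nhds z₀] g := by
    filter_upwards [hg_eq] with t ht
    by_cases ht' : t = z₀
    · simp [hψ, ht']
    · have hne0 : (t - z₀)^n ≠ 0 := pow_ne_zero _ (sub_ne_zero.mpr ht')
      simp only [hψ, if_neg ht', ht]
      field_simp
  have hφz₀ : φ z₀ = (z₀ - z₀)^n * g z₀ := hg_eq.self_of_nhds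
  refine ⟨n, ψ, ?_, by simpa [hψ] using hg_ne, ?_, ?_⟩
  · intro z hz
    by_cases hzz : z = z₀
    · subst hzz
      exact (hg_an.differentiableAt.congr_of_eventuallyEq hψev).differentiableWithinAt
    · have hopen : {t : ℂ | t ≠ z₀} ∈ nhds z := (isOpen_ne).mem_nhds hzz
      have hdiff : DifferentiableAt ℂ (fun t => φ t / (t - z₀)^n) z := by
        refine DifferentiableAt.div (hφ.differentiableAt (isOpen_ball.mem_nhds hz)) ?_ ?_
        · exact ((differentiableAt_id.sub (differentiableAt_const _)).pow n)
        · exact pow_ne_zero _ (sub_ne_zero.mpr hzz)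
      have : ψ =ᶠ[nhds z] (fun t => φ t / (t - z₀)^n) := by
        filter_upwards [hopen] with t ht
        simp [hψ, if_neg ht]
      exact (hdiff.congr_of_eventuallyEq this).differentiableWithinAt
  · intro z _
    by_cases hzz : z = z₀
    · subst hzz
      rcases Nat.eq_zero_or_pos n with hn | hn
      · subst hn; simpa [hψ] using hφz₀
      · rw [hφz₀, sub_self, zero_pow (by omega), zero_mul, zero_mul]
    · have hne0 : (z - z₀)^n ≠ 0 := pow_ne_zero _ (sub_ne_zero.mpr hzz)
      simp only [hψ, if_neg hzz]
      field_simp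
  · intro h0
    by_contra hn
    have : n = 0 := by omega
    subst this
    simp only [pow_zero, one_mul] at hφz₀
    exact hg_ne (hφz₀ ▸ h0)

lemma not_ev_zero {φ : ℂ → ℂ} {z₀ : ℂ} (hφ : DifferentiableOn ℂ φ (ball (0:ℂ) 1))
    (hr0 : 0 < r) (hr1 : r < 1) (hε : 0 < ε)
    (hb : ∀ z : ℂ, r ≤ ‖z‖ → ‖z‖ < 1 → ε ≤ ‖φ z‖)
    (hz₀ : z₀ ∈ ball (0:ℂ) 1) : ¬ (∀ᶠ t in nhds z₀, φ t = 0) := by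
  intro h
  refine not_zero_on_ball hr0 hr1 hε hb ?_
  exact (hφ.analyticOnNhd isOpen_ball).eqOn_zero_of_preconnected_of_eventuallyEq_zero
    (convex_ball (0:ℂ) 1).isPreconnected hz₀ h

lemma zeros_finite {φ : ℂ → ℂ} (hφ : DifferentiableOn ℂ φ (ball (0:ℂ) 1))
    (hr0 : 0 < r) (hr1 : r < 1) (hε : 0 < ε)
    (hb : ∀ z : ℂ, r ≤ ‖z‖ → ‖z‖ < 1 → ε ≤ ‖φ z‖) :
    {z : ℂ | ‖z‖ ≤ r ∧ φ z = 0}.Finite := by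
  by_contra hinf
  have hinf' : {z : ℂ | ‖z‖ ≤ r ∧ φ z = 0}.Infinite := hinf
  have hsub : {z : ℂ | ‖z‖ ≤ r ∧ φ z = 0} ⊆ closedBall (0:ℂ) r := by
    intro z hz
    rw [mem_closedBall, dist_zero_right]
    exact hz.1
  obtain ⟨x, hxK, hacc⟩ := hinf'.exists_accPt_of_subset_isCompact
    (isCompact_closedBall (0:ℂ) r) hsub
  have hx1 : x ∈ ball (0:ℂ) 1 := by
    rw [mem_closedBall, dist_zero_right] at hxK
    rw [mem_ball, dist_zero_right]
    exact lt_of_le_of_lt hxK hr1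
  have hfreq : ∃ᶠ y in nhdsWithin x {x}ᶜ, φ y = 0 := by
    rw [accPt_iff_frequently] at hacc
    rw [frequently_nhdsWithin_iff]
    exact hacc.mono (fun y hy => ⟨hy.2.2, hy.1⟩)
  refine not_zero_on_ball hr0 hr1 hε hb ?_
  exact (hφ.analyticOnNhd isOpen_ball).eqOn_zero_of_preconnected_of_frequently_eq_zero
    (convex_ball (0:ℂ) 1).isPreconnected hx1 hfreq

lemma fact_zeros (hr0 : 0 < r) (hr1 : r < 1) :
    ∀ (d : ℕ) (φ : ℂ → ℂ) (ε : ℝ), 0 < ε →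
    DifferentiableOn ℂ φ (ball (0:ℂ) 1) →
    (∀ z : ℂ, r ≤ ‖z‖ → ‖z‖ < 1 → ε ≤ ‖φ z‖) →
    {z : ℂ | ‖z‖ ≤ r ∧ φ z = 0}.ncard ≤ d →
    ∃ (L : List ℂ) (v : ℂ → ℂ), (∀ a ∈ L, a ∈ ball (0:ℂ) 1) ∧
      DifferentiableOn ℂ v (ball (0:ℂ) 1) ∧ (∀ z ∈ ball (0:ℂ) 1, v z ≠ 0) ∧
      (∀ z ∈ ball (0:ℂ) 1, φ z = (L.map (fun a => z - a)).prod * v z) := by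
  intro d
  induction d with
  | zero =>
    intro φ ε hε hφ hb hcard
    have hfin := zeros_finite hφ hr0 hr1 hε hb
    have hempty : {z : ℂ | ‖z‖ ≤ r ∧ φ z = 0} = ∅ := by
      rw [← Set.ncard_eq_zero hfin]; omega
    refine ⟨[], φ, by simp, hφ, ?_, by simp⟩
    intro z hz
    by_cases hzr : ‖z‖ ≤ r
    · intro h0
      have : z ∈ ({z : ℂ | ‖z‖ ≤ r ∧ φ z = 0}) := ⟨hzr, h0⟩
      rw [hempty] at this
      exact this
    · have hz1 : ‖z‖ < 1 := by
        rw [mem_ball, dist_zero_right] at hz; exact hz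
      have := hb z (le_of_not_ge hzr) hz1
      intro h0; rw [h0] at this; simp at this; linarith
  | succ d ih =>
    intro φ ε hε hφ hb hcard
    have hfin := zeros_finite hφ hr0 hr1 hε hb
    rcases Set.eq_empty_or_nonempty {z : ℂ | ‖z‖ ≤ r ∧ φ z = 0} with hempty | ⟨z₀, hz₀⟩
    · refine ⟨[], φ, by simp, hφ, ?_, by simp⟩
      intro z hz
      by_cases hzr : ‖z‖ ≤ r
      · intro h0
        have : z ∈ ({z : ℂ | ‖z‖ ≤ r ∧ φ z = 0}) := ⟨hzr, h0⟩
        rw [hempty] at this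
        exact this
      · have hz1 : ‖z‖ < 1 := by
          rw [mem_ball, dist_zero_right] at hz; exact hz
        have := hb z (le_of_not_ge hzr) hz1
        intro h0; rw [h0] at this; simp at this; linarith
    · obtain ⟨hz₀r, hz₀0⟩ := hz₀
      have hz₀b : z₀ ∈ ball (0:ℂ) 1 := by
        rw [mem_ball, dist_zero_right]; linarith
      obtain ⟨n, ψ, hψd, hψne, hψeq, hn1⟩ :=
        peel hφ hz₀b (not_ev_zero hφ hr0 hr1 hε hb hz₀b)
      -- new annulus bound
      have hψb : ∀ z : ℂ, r ≤ ‖z‖ → ‖z‖ < 1 →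
          ε / 2^n ≤ ‖ψ z‖ := by
        intro z h1 h2
        have hzb : z ∈ ball (0:ℂ) 1 := by
          rw [mem_ball, dist_zero_right]; exact h2
        have heq := hψeq z hzb
        have habs : ‖φ z‖ = ‖z - z₀‖^n * ‖ψ z‖ := by
          rw [heq, norm_mul, norm_pow]
        have hlt : ‖z - z₀‖ ≤ 2 := by
          calc ‖z - z₀‖ ≤ ‖z‖ + ‖z₀‖ := by
                simpa using norm_sub_le z z₀
            _ ≤ 2 := by linarith [hz₀r, le_of_lt h2, hr1]
        have h2n : ‖z - z₀‖^n ≤ 2^n :=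
          pow_le_pow_left₀ (norm_nonneg _) hlt n
        have hεle := hb z h1 h2
        rw [div_le_iff₀ (by positivity)]
        calc ε ≤ ‖φ z‖ := hεle
          _ = ‖z - z₀‖^n * ‖ψ z‖ := habs
          _ ≤ 2^n * ‖ψ z‖ := by
              apply mul_le_mul_of_nonneg_right h2n (norm_nonneg _)
          _ = ‖ψ z‖ * 2^n := mul_comm _ _
      -- zero set shrinks
      have hZψ : {z : ℂ | ‖z‖ ≤ r ∧ ψ z = 0}
          ⊂ {z : ℂ | ‖z‖ ≤ r ∧ φ z = 0} := by
        constructor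
        · intro z hz
          have hzb : z ∈ ball (0:ℂ) 1 := by
            rw [mem_ball, dist_zero_right]; linarith [hz.1]
          exact ⟨hz.1, by rw [hψeq z hzb, hz.2, mul_zero]⟩
        · intro hsub
          have := hsub ⟨hz₀r, hz₀0⟩
          exact hψne this.2
      have hcard' : {z : ℂ | ‖z‖ ≤ r ∧ ψ z = 0}.ncard ≤ d := by
        have := Set.ncard_lt_ncard hZψ hfin
        omega
      obtain ⟨L, v, hL, hv, hvne, hveq⟩ := ih ψ (ε / 2^n) (by positivity) hψd hψb hcard'
      refine ⟨List.replicate n z₀ ++ L, v, ?_, hv, hvne, ?_⟩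
      · intro a ha
        rcases List.mem_append.mp ha with h | h
        · rw [List.eq_of_mem_replicate h]; exact hz₀b
        · exact hL a h
      · intro z hz
        rw [List.map_append, List.prod_append, List.map_replicate, List.prod_replicate,
          hψeq z hz, hveq z hz]
        ring
end Zeros

lemma wrapup {E : Type*} [NormedAddCommGroup E] [NormedSpace ℂ E] [CompleteSpace E]
    (T : E →L[ℂ] E) (hinj : LinearMap.ker (T : E →ₗ[ℂ] E) = ⊥) (S : Set E) (hS : S.Finite)
    (hsup : LinearMap.range (T : E →ₗ[ℂ] E) ⊔ Submodule.span ℂ S = ⊤) :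
    IsClosed (LinearMap.range (T : E →ₗ[ℂ] E) : Set E) ∧ FiniteDimensional ℂ (E ⧸ LinearMap.range (T : E →ₗ[ℂ] E)) := by
  set R := LinearMap.range (T : E →ₗ[ℂ] E) with hR
  -- quotient is finite dimensional
  have hfinQ : FiniteDimensional ℂ (E ⧸ R) := by
    have hmap : Submodule.span ℂ (R.mkQ '' S) = ⊤ := by
      rw [← Submodule.map_span]
      have h1 : Submodule.map R.mkQ (R ⊔ Submodule.span ℂ S) = ⊤ := by
        rw [hsup, Submodule.map_top, Submodule.range_mkQ]
      rw [Submodule.map_sup] at h1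
      have h2 : Submodule.map R.mkQ R = ⊥ := by
        rw [eq_bot_iff]
        rintro x ⟨y, hyR, rfl⟩
        simpa [Submodule.mem_bot, Submodule.mkQ_apply] using
          (Submodule.Quotient.mk_eq_zero R).mpr hyR
      rwa [h2, bot_sup_eq] at h1
    have : Module.Finite ℂ (E ⧸ R) := by
      refine ⟨⟨(hS.image R.mkQ).toFinset, ?_⟩⟩
      rwa [Set.Finite.coe_toFinset]
    exact this
  refine ⟨?_, hfinQ⟩
  -- choose a finite-dimensional complement
  let n := Module.finrank ℂ (E ⧸ R)
  let b : Module.Basis (Fin n) ℂ (E ⧸ R) := Module.finBasis ℂ (E ⧸ R)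
  have hlift : ∀ i : Fin n, ∃ e : E, R.mkQ e = b i := fun i => R.mkQ_surjective (b i)
  choose y hy using hlift
  set V : Submodule ℂ E := Submodule.span ℂ (Set.range y) with hV
  have hVfin : FiniteDimensional ℂ V := FiniteDimensional.span_of_finite ℂ (Set.finite_range y)
  have hsup' : R ⊔ V = ⊤ := by
    rw [eq_top_iff]
    intro f _
    have hrepr := b.sum_repr (R.mkQ f)
    set c : Fin n → ℂ := fun i => b.repr (R.mkQ f) i with hc
    have hmem : f - ∑ i, c i • y i ∈ R := by
      rw [← Submodule.ker_mkQ R]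
      simp only [LinearMap.mem_ker, map_sub, map_sum, map_smul]
      simp only [hy]
      rw [sub_eq_zero]
      exact hrepr.symm
    have : f = (f - ∑ i, c i • y i) + ∑ i, c i • y i := by abel
    rw [this]
    apply Submodule.add_mem_sup hmem
    exact Submodule.sum_mem _ (fun i _ =>
      Submodule.smul_mem _ _ (Submodule.subset_span (Set.mem_range_self i)))
  have hdisj : R ⊓ V = ⊥ := by
    rw [eq_bot_iff]
    rintro x ⟨hxR, hxV⟩
    obtain ⟨c, hcx⟩ := (Submodule.mem_span_range_iff_exists_fun ℂ).mp hxV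
    have hx0 : R.mkQ x = 0 := by rwa [← LinearMap.mem_ker, Submodule.ker_mkQ]
    have : ∑ i, c i • b i = 0 := by
      rw [← hx0, ← hcx]
      simp only [map_sum, map_smul, hy]
    have hc0 : ∀ i, c i = 0 := by
      have hli := b.linearIndependent
      rw [Fintype.linearIndependent_iff] at hli
      exact hli c this
    simp only [Submodule.mem_bot]
    rw [← hcx]
    simp [hc0]
  -- build the continuous linear equivalence
  haveI : CompleteSpace V := FiniteDimensional.complete ℂ V
  let T₂ : (E × V) →L[ℂ] E :=
    T.comp (ContinuousLinearMap.fst ℂ E V) + V.subtypeL.comp (ContinuousLinearMap.snd ℂ E V)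
  have hT₂ : ∀ p : E × V, T₂ p = T p.1 + (p.2 : E) := fun p => rfl
  have hker₂ : LinearMap.ker (T₂ : E × V →ₗ[ℂ] E) = ⊥ := by
    rw [LinearMap.ker_eq_bot']
    rintro ⟨x, w⟩ hxw
    rw [show (T₂ : E × V →ₗ[ℂ] E) (x, w) = T₂ (x, w) from rfl, hT₂] at hxw
    have hmem : T x ∈ R ⊓ V := by
      constructor
      · exact LinearMap.mem_range_self _ x
      · have h' : T x = -(w : E) := eq_neg_of_add_eq_zero_left hxw
        rw [h']; exact V.neg_mem w.2
    rw [hdisj, Submodule.mem_bot] at hmem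
    have hx : x = 0 := by
      have := hinj ▸ (LinearMap.mem_ker.mpr hmem : x ∈ LinearMap.ker (T : E →ₗ[ℂ] E))
      simpa using this
    have hw : (w : E) = 0 := by
      have := hxw
      rw [hmem, zero_add] at this
      exact this
    exact Prod.ext hx (Subtype.ext hw)
  have hrange₂ : LinearMap.range (T₂ : E × V →ₗ[ℂ] E) = ⊤ := by
    rw [eq_top_iff]
    intro f _
    have : f ∈ R ⊔ V := hsup' ▸ Submodule.mem_top
    obtain ⟨a, ha, bb, hb, hab⟩ := Submodule.mem_sup.mp this
    obtain ⟨x, hx⟩ := ha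
    exact ⟨(x, ⟨bb, hb⟩), by show T₂ _ = f; rw [hT₂]; simp [← hab, ← hx]⟩
  let e : (E × V) ≃L[ℂ] E := ContinuousLinearEquiv.ofBijective T₂ hker₂ hrange₂
  have hC : IsClosed {p : E × V | p.2 = 0} :=
    isClosed_eq (continuous_snd) continuous_const
  have himg : e '' {p : E × V | p.2 = 0} = (R : Set E) := by
    ext f
    constructor
    · rintro ⟨⟨x, w⟩, hw, rfl⟩
      simp only [Set.mem_setOf_eq] at hw
      show T₂ (x, w) ∈ R
      rw [hT₂, hw]
      simpa [hR] using LinearMap.mem_range_self (T : E →ₗ[ℂ] E) x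
    · rintro ⟨x, rfl⟩
      exact ⟨(x, 0), rfl, by rw [show e (x,0) = T₂ (x,0) from rfl, hT₂]; simp⟩
  rw [← himg]
  exact (e.toHomeomorph.isClosedMap) _ hC

/-- Let `X`, `Y` be Banach spaces of holomorphic functions on the unit disk
`𝔻` satisfying conditions (I), (II), (III), (IV), and let `u ∈ M(X)`. If there are
`r ∈ (0,1)` and `δ > 0` with `|u(z)| ≥ δ` whenever `r ≤ |z| < 1`, then the multiplication
operator `M_u : X → X` is Fredholm. -/
theorem stmt_7 {E F : Type*} [NormedAddCommGroup E] [NormedSpace ℂ E] [CompleteSpace E]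
    [NormedAddCommGroup F] [NormedSpace ℂ F] [CompleteSpace F]
    (ι : E →ₗ[ℂ] (ℂ → ℂ)) (κ : F →ₗ[ℂ] (ℂ → ℂ))
    -- X and Y consist of holomorphic functions on 𝔻
    (hιhol : ∀ f : E, DifferentiableOn ℂ (ι f) (ball (0 : ℂ) 1))
    (hκhol : ∀ g : F, DifferentiableOn ℂ (κ g) (ball (0 : ℂ) 1))
    -- elements are determined by their values on 𝔻
    (hιinj : ∀ f g : E, Set.EqOn (ι f) (ι g) (ball (0 : ℂ) 1) → f = g)
    (hκinj : ∀ f g : F, Set.EqOn (κ f) (κ g) (ball (0 : ℂ) 1) → f = g)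
    -- X and Y contain the constant functions
    (hιconst : ∀ c : ℂ, ∃ f : E, ∀ z ∈ ball (0 : ℂ) 1, ι f z = c)
    (hκconst : ∀ c : ℂ, ∃ g : F, ∀ z ∈ ball (0 : ℂ) 1, κ g z = c)
    -- condition (I): point evaluations are continuous on X and on Y
    (hIX : ∀ z ∈ ball (0 : ℂ) 1, ∃ Cz : ℝ, ∀ f : E, ‖ι f z‖ ≤ Cz * ‖f‖)
    (hIY : ∀ z ∈ ball (0 : ℂ) 1, ∃ Cz : ℝ, ∀ g : F, ‖κ g z‖ ≤ Cz * ‖g‖)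
    -- condition (II): `f ∈ X ↔ R^N f ∈ Y` and `‖f‖_X ≍ |f(0)| + ‖R^N f‖_Y`
    (N : ℕ) (hN : 1 ≤ N) (C : ℝ) (hC : 1 ≤ C)
    (hII_mem : ∀ f : ℂ → ℂ, DifferentiableOn ℂ f (ball (0 : ℂ) 1) →
      ((∃ g : E, Set.EqOn (ι g) f (ball (0 : ℂ) 1)) ↔
        ∃ h : F, Set.EqOn (κ h) (radDeriv1^[N] f) (ball (0 : ℂ) 1)))
    (hII_norm : ∀ (g : E) (h : F),
      Set.EqOn (κ h) (radDeriv1^[N] (ι g)) (ball (0 : ℂ) 1) →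
      C⁻¹ * ‖g‖ ≤ ‖ι g 0‖ + ‖h‖ ∧ ‖ι g 0‖ + ‖h‖ ≤ C * ‖g‖)
    -- condition (III): `H^∞(𝔻) ⊆ M(Y)`
    (hIII : ∀ v : ℂ → ℂ, DifferentiableOn ℂ v (ball (0 : ℂ) 1) →
      (∃ M : ℝ, ∀ z ∈ ball (0 : ℂ) 1, ‖v z‖ ≤ M) →
      ∀ h : F, ∃ h' : F, ∀ z ∈ ball (0 : ℂ) 1, κ h' z = v z * κ h z)
    -- condition (IV): division by `z - z₀` preserves X
    (hIV : ∀ (f : E) (z₀ : ℂ), z₀ ∈ ball (0 : ℂ) 1 → ι f z₀ = 0 →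
      ∀ g : ℂ → ℂ, DifferentiableOn ℂ g (ball (0 : ℂ) 1) →
      (∀ z ∈ ball (0 : ℂ) 1, (z - z₀) * g z = ι f z) →
      ∃ h : E, ∀ z ∈ ball (0 : ℂ) 1, ι h z = g z)
    -- `u ∈ M(X)` with induced multiplication operator `Mu`
    (u : ℂ → ℂ) (hu : DifferentiableOn ℂ u (ball (0 : ℂ) 1))
    (humult : ∀ f : E, ∃ g : E, ∀ z ∈ ball (0 : ℂ) 1, ι g z = u z * ι f z)
    (Mu : E →L[ℂ] E)
    (hMu : ∀ f : E, ∀ z ∈ ball (0 : ℂ) 1, ι (Mu f) z = u z * ι f z)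
    -- `|u|` is bounded below near the boundary
    (r : ℝ) (hr : r ∈ Set.Ioo (0 : ℝ) 1) (δ : ℝ) (hδ : 0 < δ)
    (hbound : ∀ z : ℂ, r ≤ ‖z‖ → ‖z‖ < 1 → δ ≤ ‖u z‖) :
    IsFredholmOp Mu := by
  obtain ⟨hr0, hr1⟩ := hr
  have hball : ∀ z : ℂ, z ∈ ball (0:ℂ) 1 ↔ ‖z‖ < 1 := fun z => by
    rw [mem_ball, dist_zero_right]
  -- Step 1: factor u = q·v with q a polynomial with zeros in the disk, v nonvanishing
  obtain ⟨L, v, hL, hv, hvne, hveq⟩ := fact_zeros hr0 hr1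
    ({z : ℂ | ‖z‖ ≤ r ∧ u z = 0}.ncard) u δ hδ hu hbound le_rfl
  -- Step 2: v is bounded below on the disk
  obtain ⟨δ', hδ'pos, hδ'⟩ : ∃ δ' : ℝ, 0 < δ' ∧
      ∀ z ∈ ball (0:ℂ) 1, δ' ≤ ‖v z‖ := by
    have hsub : closedBall (0:ℂ) r ⊆ ball (0:ℂ) 1 := closedBall_subset_ball hr1
    have hcont : ContinuousOn (fun z => ‖v z‖) (closedBall (0:ℂ) r) :=
      continuous_norm.comp_continuousOn (hv.continuousOn.mono hsub)
    obtain ⟨z₁, hz₁, hmin⟩ := (isCompact_closedBall (0:ℂ) r).exists_isMinOn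
      ⟨0, mem_closedBall_self hr0.le⟩ hcont
    have hδ₁pos : 0 < ‖v z₁‖ :=
      norm_pos_iff.mpr (hvne z₁ (hsub hz₁))
    refine ⟨min (‖v z₁‖) (δ / 2 ^ L.length),
      lt_min hδ₁pos (by positivity), ?_⟩
    intro z hz
    by_cases hzr : ‖z‖ ≤ r
    · refine le_trans (min_le_left _ _) (isMinOn_iff.mp hmin z ?_)
      rw [mem_closedBall, dist_zero_right]
      exact hzr
    · push_neg at hzr
      have hz1 : ‖z‖ < 1 := (hball z).1 hz
      have hub := hbound z hzr.le hz1
      have hqb := abs_listprod_le hL hz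
      have h2 : δ ≤ 2 ^ L.length * ‖v z‖ := by
        calc δ ≤ ‖u z‖ := hub
          _ = ‖(L.map (fun a => z - a)).prod‖ * ‖v z‖ := by
              rw [hveq z hz, norm_mul]
          _ ≤ 2 ^ L.length * ‖v z‖ :=
              mul_le_mul_of_nonneg_right hqb (norm_nonneg _)
      refine le_trans (min_le_right _ _) ?_
      rw [div_le_iff₀ (by positivity)]
      linarith
  -- Step 3: division by the polynomial factor (condition IV, iterated)
  have hDIV : ∀ (L' : List ℂ), (∀ a ∈ L', a ∈ ball (0:ℂ) 1) → ∀ (x : E) (g : ℂ → ℂ),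
      DifferentiableOn ℂ g (ball (0:ℂ) 1) →
      (∀ z ∈ ball (0:ℂ) 1, ι x z = (L'.map (fun a => z - a)).prod * g z) →
      ∃ y : E, ∀ z ∈ ball (0:ℂ) 1, ι y z = g z := by
    intro L'
    induction L' with
    | nil =>
      intro _ x g hg hx
      exact ⟨x, fun z hz => by simpa using hx z hz⟩
    | cons a L'' ih =>
      intro hmem x g hg hx
      have ha : a ∈ ball (0:ℂ) 1 := hmem a (by simp)
      have hGdiff : DifferentiableOn ℂ (fun z => (L''.map (fun b => z - b)).prod * g z)
          (ball (0:ℂ) 1) := ((diff_listprod L'').differentiableOn).mul hg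
      have hx0 : ι x a = 0 := by rw [hx a ha]; simp
      obtain ⟨y₁, hy₁⟩ := hIV x a ha hx0 _ hGdiff (fun z hz => by
        have h' := hx z hz
        simp only [List.map_cons, List.prod_cons] at h'
        rw [h']; ring)
      exact ih (fun b hb => hmem b (by simp [hb])) y₁ g hg (fun z hz => hy₁ z hz)
  -- Step 4: multiplication by v and its powers stays in X
  have hVmul : ∀ x : E, ∃ y : E, ∀ z ∈ ball (0:ℂ) 1, ι y z = v z * ι x z := by
    intro x
    refine hDIV L hL (Mu x) (fun z => v z * ι x z) (hv.mul (hιhol x)) ?_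
    intro z hz
    rw [hMu x z hz, hveq z hz]
    ring
  have hVpow : ∀ (i : ℕ) (x : E), ∃ y : E, ∀ z ∈ ball (0:ℂ) 1,
      ι y z = (v z)^i * ι x z := by
    intro i
    induction i with
    | zero => intro x; exact ⟨x, fun z hz => by simp⟩
    | succ i ih =>
      intro x
      obtain ⟨y, hy⟩ := ih x
      obtain ⟨y', hy'⟩ := hVmul y
      exact ⟨y', fun z hz => by rw [hy' z hz, hy z hz]; ring⟩
  -- Step 5: R^N of an element of X lies in Y
  have hRN : ∀ x : E, ∃ h : F, Set.EqOn (κ h) (radDeriv1^[N] (ι x)) (ball (0:ℂ) 1) :=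
    fun x => (hII_mem (ι x) (hιhol x)).mp ⟨x, Set.eqOn_refl _ _⟩
  -- Step 6: division by v stays in X (the key step, using the algebraic identity)
  have hLSTAR : ∀ x : E, ∃ y : E, ∀ z ∈ ball (0:ℂ) 1, ι y z = ι x z / v z := by
    intro x
    set G : ℂ → ℂ := fun z => ι x z / v z with hGdef
    have hGdiff : DifferentiableOn ℂ G (ball (0:ℂ) 1) := (hιhol x).div hv hvne
    have hsel : ∀ j : ℕ, ∃ h' : F, ∀ z ∈ ball (0:ℂ) 1,
        κ h' z = ((v z)⁻¹)^(j+1) * (radDeriv1^[N] (fun t => (v t)^(j+1) * G t)) z := by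
      intro j
      obtain ⟨yj, hyj⟩ := hVpow j x
      obtain ⟨hj, hhj⟩ := hRN yj
      obtain ⟨h', hh'⟩ := hIII (fun z => ((v z)⁻¹)^(j+1)) (((hv.inv hvne)).pow _)
        ⟨(δ'⁻¹)^(j+1), by
          intro z hz
          rw [norm_pow, norm_inv]
          refine pow_le_pow_left₀ (by positivity) ?_ _
          exact inv_anti₀ hδ'pos (hδ' z hz)⟩ hj
      refine ⟨h', fun z hz => ?_⟩
      rw [hh' z hz, hhj hz]
      congr 1
      have heqfun : Set.EqOn (ι yj) (fun t => (v t)^(j+1) * G t) (ball (0:ℂ) 1) := by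
        intro t ht
        have hvt := hvne t ht
        rw [hyj t ht]
        show (v t)^j * ι x t = (v t)^(j+1) * (ι x t / v t)
        field_simp
        ring
      exact eqOn_radIter isOpen_ball heqfun N hz
    choose hfun hκh using hsel
    set h : F := ∑ j ∈ Finset.range (N+1),
      ((-1)^j * (((N+1).choose (j+1) : ℕ)) : ℂ) • hfun j with hhdef
    have hκsum : ∀ z : ℂ, κ h z = ∑ j ∈ Finset.range (N+1),
        ((-1)^j * (((N+1).choose (j+1) : ℕ)) : ℂ) * κ (hfun j) z := by
      intro z
      rw [hhdef, map_sum, Finset.sum_apply]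
      refine Finset.sum_congr rfl (fun j _ => ?_)
      rw [map_smul]
      simp
    have hEq : Set.EqOn (κ h) (radDeriv1^[N] G) (ball (0:ℂ) 1) := by
      intro z hz
      have hKI := key_identity N hv hGdiff (N+1) (Nat.lt_succ_self N) z hz
      rw [Finset.sum_range_succ'] at hKI
      have hvz := hvne z hz
      have hvpow : (v z)^(N+1) ≠ 0 := pow_ne_zero _ hvz
      have hf0 : ((-1)^0 * (((N+1).choose 0 : ℕ)) : ℂ) * (v z)^(N+1-0) *
          (radDeriv1^[N] (fun t => (v t)^0 * G t)) z
          = (v z)^(N+1) * (radDeriv1^[N] G) z := by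
        have hGf : (fun t => (v t)^0 * G t) = G := by funext t; simp
        rw [hGf]
        simp
      rw [hf0] at hKI
      show κ h z = radDeriv1^[N] G z
      apply mul_left_cancel₀ hvpow
      rw [hκsum z, Finset.mul_sum]
      have hterm : ∀ j ∈ Finset.range (N+1),
          (v z)^(N+1) * (((-1)^j * (((N+1).choose (j+1) : ℕ)) : ℂ) * κ (hfun j) z)
          = -(((-1)^(j+1) * (((N+1).choose (j+1) : ℕ)) : ℂ) * (v z)^(N+1-(j+1)) *
              (radDeriv1^[N] (fun t => (v t)^(j+1) * G t)) z) := by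
        intro j hj
        have hjN : j ≤ N := Nat.lt_succ_iff.mp (Finset.mem_range.mp hj)
        rw [hκh j z hz]
        have hpows : (v z)^(N+1) * ((v z)⁻¹)^(j+1) = (v z)^(N-j) := by
          rw [inv_pow, show N+1 = (N-j) + (j+1) by omega, pow_add]
          field_simp
        rw [show N+1-(j+1) = N-j by omega]
        calc (v z)^(N+1) * (((-1)^j * (((N+1).choose (j+1) : ℕ)) : ℂ) *
              (((v z)⁻¹)^(j+1) * (radDeriv1^[N] (fun t => (v t)^(j+1) * G t)) z))
            = (((-1)^j * (((N+1).choose (j+1) : ℕ)) : ℂ)) *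
              ((v z)^(N+1) * ((v z)⁻¹)^(j+1)) *
              (radDeriv1^[N] (fun t => (v t)^(j+1) * G t)) z := by ring
          _ = _ := by rw [hpows]; ring
      rw [Finset.sum_congr rfl hterm]
      rw [Finset.sum_neg_distrib]
      linear_combination -hKI
    obtain ⟨y, hy⟩ := (hII_mem G hGdiff).mpr ⟨h, hEq⟩
    exact ⟨y, fun z hz => hy hz⟩
  -- Step 7: bounded holomorphic functions are in Y, monomials are in X
  have hYbdd : ∀ b : ℂ → ℂ, DifferentiableOn ℂ b (ball (0:ℂ) 1) →
      (∃ M : ℝ, ∀ z ∈ ball (0:ℂ) 1, ‖b z‖ ≤ M) →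
      ∃ hb : F, Set.EqOn (κ hb) b (ball (0:ℂ) 1) := by
    intro b hbd hbM
    obtain ⟨h1, hh1⟩ := hκconst 1
    obtain ⟨h', hh'⟩ := hIII b hbd hbM h1
    exact ⟨h', fun z hz => by rw [hh' z hz, hh1 z hz, mul_one]⟩
  have hmono : ∀ i : ℕ, ∃ x : E, ∀ z ∈ ball (0:ℂ) 1, ι x z = z^i := by
    intro i
    have hd : DifferentiableOn ℂ (fun z : ℂ => z^i) (ball (0:ℂ) 1) :=
      (differentiable_pow i).differentiableOn
    have hd' : DifferentiableOn ℂ (radDeriv1^[N] (fun z : ℂ => z^i)) (ball (0:ℂ) 1) := by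
      rw [radIter_monomial]
      exact ((differentiable_const _).mul (differentiable_pow i)).differentiableOn
    have hM : ∃ M : ℝ, ∀ z ∈ ball (0:ℂ) 1,
        ‖(radDeriv1^[N] (fun z : ℂ => z^i)) z‖ ≤ M := by
      refine ⟨(i:ℝ)^N, fun z hz => ?_⟩
      rw [radIter_monomial]
      have h1 : ‖z‖ ≤ 1 := le_of_lt ((hball z).1 hz)
      calc ‖(i:ℂ)^N * z^i‖ = (i:ℝ)^N * ‖z‖ ^ i := by
            rw [norm_mul, norm_pow, norm_pow, Complex.norm_natCast]
        _ ≤ (i:ℝ)^N * 1 := by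
            apply mul_le_mul_of_nonneg_left
              (pow_le_one₀ (norm_nonneg _) h1) (by positivity)
        _ = (i:ℝ)^N := mul_one _
    obtain ⟨hb, hhb⟩ := hYbdd _ hd' hM
    obtain ⟨x, hx⟩ := (hII_mem _ hd).mpr ⟨hb, hhb⟩
    exact ⟨x, fun z hz => hx hz⟩
  choose xM hxM using hmono
  -- Step 8: the range of Mu together with polynomials of degree < L.length spans E
  have hsup : LinearMap.range (Mu : E →ₗ[ℂ] E) ⊔ Submodule.span ℂ (xM '' {i : ℕ | i < L.length}) = ⊤ := by
    rw [eq_top_iff]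
    intro f _
    obtain ⟨P, g, hPdeg, hg, hfeq⟩ := interp L (ι f) (hιhol f) hL
    have hPeval : ∀ z : ℂ, Polynomial.eval z P
        = ∑ i ∈ Finset.range L.length, P.coeff i * z^i := by
      intro z
      rcases eq_or_ne P 0 with rfl | hP0
      · simp
      · exact Polynomial.eval_eq_sum_range'
          ((Polynomial.natDegree_lt_iff_degree_lt hP0).mpr hPdeg) z
    set f₀ : E := f - ∑ i ∈ Finset.range L.length, P.coeff i • xM i with hf₀def
    have hι₀ : ∀ z ∈ ball (0:ℂ) 1, ι f₀ z = (L.map (fun a => z - a)).prod * g z := by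
      intro z hz
      have hsumeval : ι (∑ i ∈ Finset.range L.length, P.coeff i • xM i) z
          = ∑ i ∈ Finset.range L.length, P.coeff i * z^i := by
        rw [map_sum, Finset.sum_apply]
        refine Finset.sum_congr rfl (fun i _ => ?_)
        rw [map_smul]
        simp [hxM i z hz]
      have : ι f₀ = ι f - ι (∑ i ∈ Finset.range L.length, P.coeff i • xM i) := by
        rw [hf₀def, map_sub]
      rw [this]
      show ι f z - ι (∑ i ∈ Finset.range L.length, P.coeff i • xM i) z = _
      rw [hsumeval, hfeq z hz, hPeval z]
      ring
    obtain ⟨yg, hyg⟩ := hDIV L hL f₀ g hg hι₀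
    obtain ⟨yq, hyq⟩ := hLSTAR yg
    have hMuy : Mu yq = f₀ := by
      apply hιinj
      intro z hz
      rw [hMu yq z hz, hyq z hz, hyg z hz, hι₀ z hz, hveq z hz]
      have hvz := hvne z hz
      field_simp
    have hfdec : f = Mu yq + ∑ i ∈ Finset.range L.length, P.coeff i • xM i := by
      rw [hMuy, hf₀def]; abel
    rw [hfdec]
    apply Submodule.add_mem_sup (LinearMap.mem_range_self _ _)
    exact Submodule.sum_mem _ (fun i hi => Submodule.smul_mem _ _
      (Submodule.subset_span ⟨i, Finset.mem_range.mp hi, rfl⟩))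
  -- Step 9: the kernel of Mu is trivial
  have hker : LinearMap.ker (Mu : E →ₗ[ℂ] E) = ⊥ := by
    rw [LinearMap.ker_eq_bot']
    intro f hf
    have h0 : ∀ z ∈ ball (0:ℂ) 1, u z * ι f z = 0 := by
      intro z hz
      rw [← hMu f z hz, show Mu f = 0 from hf]
      simp
    set z₁ : ℂ := (((r+1)/2 : ℝ) : ℂ) with hz₁def
    have hz₁abs : ‖z₁‖ = (r+1)/2 := by
      rw [hz₁def, Complex.norm_real, Real.norm_eq_abs, abs_of_pos (by linarith)]
    have hz₁A : z₁ ∈ {z : ℂ | r < ‖z‖ ∧ ‖z‖ < 1} := by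
      constructor <;> rw [hz₁abs] <;> linarith
    have hz₁b : z₁ ∈ ball (0:ℂ) 1 := by
      rw [hball, hz₁abs]; linarith
    have hA : IsOpen {z : ℂ | r < ‖z‖ ∧ ‖z‖ < 1} :=
      (isOpen_lt continuous_const continuous_norm).inter
        (isOpen_lt continuous_norm continuous_const)
    have hev : ι f =ᶠ[nhds z₁] 0 := by
      refine Filter.eventuallyEq_of_mem (hA.mem_nhds hz₁A) (fun z hz => ?_)
      have hu0 : u z ≠ 0 := by
        intro h'
        have := hbound z hz.1.le hz.2
        rw [h'] at this
        simp at this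
        linarith
      have := h0 z ((hball z).2 hz.2)
      exact (mul_eq_zero.mp this).resolve_left hu0
    have hEqz := ((hιhol f).analyticOnNhd isOpen_ball).eqOn_zero_of_preconnected_of_eventuallyEq_zero
      (convex_ball (0:ℂ) 1).isPreconnected hz₁b hev
    apply hιinj f 0
    intro z hz
    rw [hEqz hz]
    simp
  -- Step 10: assemble
  obtain ⟨hclosed, hquot⟩ := wrapup Mu hker _ ((Set.finite_Iio L.length).image xM) hsup
  refine ⟨hclosed, ?_, hquot⟩
  rw [hker]
  infer_instance
end

section
/- Let 0 < α ≤ 1 and let ξ ∈ ℂ with |ξ| = 1. Then there exist constants c, C > 0 such that for every integer k ≥ 1 the peak function f_{ξ,k} satisfies c·k^{1−α} ≤ ‖f_{ξ,k}‖_{B_α} ≤ C·k^{1−α}, where ‖f‖_{B_α} = |f(0)| + sup_{z∈𝔻}(1−|z|²)^α |f′(z)|. -/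
open Metric Set

noncomputable section

/-- The peak function `f_{ξ,k}(z) = ((1 + ξ̄ z)/2)^k`. -/
def peak (ξ : ℂ) (k : ℕ) : ℂ → ℂ := fun z => ((1 + (starRingEnd ℂ) ξ * z) / 2) ^ k

/-- The Bloch-type norm `‖f‖_{B_α} = |f(0)| + sup_{z∈𝔻} (1-|z|²)^α |f'(z)|`. -/
def blochNorm (α : ℝ) (f : ℂ → ℂ) : ℝ :=
  ‖f 0‖ +
    sSup ((fun z => (1 - ‖z‖ ^ 2) ^ α * ‖deriv f z‖) '' ball (0 : ℂ) 1)

end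


lemma peak_hasDerivAt (ξ : ℂ) (k : ℕ) (z : ℂ) :
    HasDerivAt (peak ξ k)
      ((k : ℂ) * ((1 + (starRingEnd ℂ) ξ * z) / 2) ^ (k - 1) * ((starRingEnd ℂ) ξ / 2)) z := by
  have h : HasDerivAt (fun z : ℂ => (1 + (starRingEnd ℂ) ξ * z) / 2) ((starRingEnd ℂ) ξ / 2) z := by
    simpa using (((hasDerivAt_id z).const_mul ((starRingEnd ℂ) ξ)).const_add 1).div_const 2
  exact h.fun_pow k

lemma abs_deriv_peak (ξ : ℂ) (hξ : ‖ξ‖ = 1) (k : ℕ) (z : ℂ) :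
    ‖(deriv (peak ξ k) z)‖
      = (k : ℝ) / 2 * ‖((1 + (starRingEnd ℂ) ξ * z) / 2)‖ ^ (k - 1) := by
  rw [(peak_hasDerivAt ξ k z).deriv]
  simp [norm_mul, norm_pow, norm_div, Complex.norm_conj, hξ, Complex.norm_natCast]
  ring

lemma core_upper (α : ℝ) (hα0 : 0 < α) (hα1 : α ≤ 1) (k : ℕ) (hk : 1 ≤ k) (r : ℝ)
    (hr0 : 0 ≤ r) (hr1 : r < 1) :
    (1 - r ^ 2) ^ α * ((1 + r) / 2) ^ (k - 1) ≤ 8 ^ α * (k : ℝ) ^ (-α) := by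
  have h1r2 : (0:ℝ) ≤ 1 - r ^ 2 := by nlinarith
  have h8 : (1:ℝ) ≤ 8 ^ α := by
    have := Real.rpow_le_rpow (by norm_num : (0:ℝ) ≤ 1) (by norm_num : (1:ℝ) ≤ 8) hα0.le
    rwa [Real.one_rpow] at this
  rcases eq_or_lt_of_le hk with h1 | h2
  · have hk1 : k = 1 := h1.symm
    subst hk1
    simp only [Nat.sub_self, pow_zero, mul_one, Nat.cast_one, Real.one_rpow]
    have hle : (1 - r ^ 2) ^ α ≤ 1 := Real.rpow_le_one h1r2 (by nlinarith) hα0.le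
    linarith
  · have hk2 : (2:ℝ) ≤ (k:ℝ) := by exact_mod_cast h2
    have hkpos : (0:ℝ) < k := by linarith
    set t : ℝ := 1 - r with ht
    have ht0 : 0 < t := by simp only [ht]; linarith
    have ht1 : t ≤ 1 := by simp only [ht]; linarith
    have e1 : (1 - r ^ 2 : ℝ) ≤ 2 * t := by simp only [ht]; nlinarith
    have e2 : ((1 + r) / 2 : ℝ) = 1 - t / 2 := by simp only [ht]; ring
    have hbase0 : (0:ℝ) ≤ 1 - t / 2 := by linarith
    have hbase1 : (1:ℝ) - t / 2 ≤ 1 := by linarith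
    have hcast : ((k - 1 : ℕ) : ℝ) = (k : ℝ) - 1 := by
      have := Nat.cast_sub (R := ℝ) hk; simpa using this
    have hden : (0:ℝ) < 1 + ((k:ℝ) - 1) * (t / 2) := by nlinarith
    have hber : 1 + ((k:ℝ) - 1) * (t / 2) ≤ (1 + t / 2) ^ (k - 1) := by
      have := one_add_mul_le_pow (a := t / 2) (by linarith) (k - 1)
      rwa [hcast] at this
    have hstep1 : (1 - t / 2) ^ (k - 1) * (1 + ((k:ℝ) - 1) * (t / 2)) ≤ 1 := by
      calc (1 - t / 2) ^ (k - 1) * (1 + ((k:ℝ) - 1) * (t / 2))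
          ≤ (1 - t / 2) ^ (k - 1) * (1 + t / 2) ^ (k - 1) :=
            mul_le_mul_of_nonneg_left hber (pow_nonneg hbase0 _)
        _ = ((1 - t / 2) * (1 + t / 2)) ^ (k - 1) := (mul_pow _ _ _).symm
        _ ≤ 1 := by
            apply pow_le_one₀ (by nlinarith) (by nlinarith)
    have hB : (1 - t / 2) ^ (k - 1) ≤ 1 / (1 + ((k:ℝ) - 1) * (t / 2)) := by
      rw [le_div_iff₀ hden]; exact hstep1
    have hstep3 : ((k:ℝ) * t / 4) ^ α ≤ 1 + ((k:ℝ) - 1) * (t / 2) := by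
      have hone : (1:ℝ) ≤ 1 + ((k:ℝ) - 1) * (t / 2) := by nlinarith
      rcases le_or_gt ((k:ℝ) * t / 4) 1 with h | h
      · have := Real.rpow_le_one (by positivity) h hα0.le
        linarith
      · have h1 : ((k:ℝ) * t / 4) ^ α ≤ ((k:ℝ) * t / 4) ^ (1:ℝ) :=
          Real.rpow_le_rpow_of_exponent_le h.le hα1
        rw [Real.rpow_one] at h1
        have h2 : (k:ℝ) * t / 4 ≤ 1 + ((k:ℝ) - 1) * (t / 2) := by nlinarith
        linarith
    have key : (2 * t) ^ α ≤ (8 / (k:ℝ)) ^ α * (1 + ((k:ℝ) - 1) * (t / 2)) := by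
      have hmul : (8 / (k:ℝ)) ^ α * ((k:ℝ) * t / 4) ^ α = (2 * t) ^ α := by
        rw [← Real.mul_rpow (by positivity) (by positivity)]
        congr 1
        field_simp
        ring
      calc (2 * t) ^ α = (8 / (k:ℝ)) ^ α * ((k:ℝ) * t / 4) ^ α := hmul.symm
        _ ≤ (8 / (k:ℝ)) ^ α * (1 + ((k:ℝ) - 1) * (t / 2)) :=
            mul_le_mul_of_nonneg_left hstep3 (by positivity)
    have hA : (1 - r ^ 2) ^ α ≤ (2 * t) ^ α := Real.rpow_le_rpow h1r2 e1 hα0.le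
    have final8 : (8:ℝ) ^ α * (k:ℝ) ^ (-α) = (8 / (k:ℝ)) ^ α := by
      rw [Real.div_rpow (by norm_num) hkpos.le, Real.rpow_neg hkpos.le, div_eq_mul_inv]
    calc (1 - r ^ 2) ^ α * ((1 + r) / 2) ^ (k - 1)
        = (1 - r ^ 2) ^ α * (1 - t / 2) ^ (k - 1) := by rw [e2]
      _ ≤ (2 * t) ^ α * (1 / (1 + ((k:ℝ) - 1) * (t / 2))) :=
          mul_le_mul hA hB (pow_nonneg hbase0 _) (by positivity)
      _ ≤ ((8 / (k:ℝ)) ^ α * (1 + ((k:ℝ) - 1) * (t / 2))) * (1 / (1 + ((k:ℝ) - 1) * (t / 2))) :=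
          mul_le_mul_of_nonneg_right key (by positivity)
      _ = (8 / (k:ℝ)) ^ α := by rw [mul_one_div, mul_div_assoc, div_self hden.ne', mul_one]
      _ = 8 ^ α * (k:ℝ) ^ (-α) := final8.symm

/-- For `0 < α ≤ 1` and `|ξ| = 1` there are constants `c, C > 0` such that
`c k^{1-α} ≤ ‖f_{ξ,k}‖_{B_α} ≤ C k^{1-α}` for every integer `k ≥ 1`. -/
theorem stmt_11 (α : ℝ) (hα0 : 0 < α) (hα1 : α ≤ 1) (ξ : ℂ) (hξ : ‖ξ‖ = 1) :
    ∃ c C : ℝ, 0 < c ∧ 0 < C ∧ ∀ k : ℕ, 1 ≤ k →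
      c * (k : ℝ) ^ (1 - α) ≤ blochNorm α (peak ξ k) ∧
        blochNorm α (peak ξ k) ≤ C * (k : ℝ) ^ (1 - α) := by
  refine ⟨1/4, 1 + 8 ^ α, by norm_num, by positivity, ?_⟩
  intro k hk
  have hkR : (1:ℝ) ≤ (k:ℝ) := by exact_mod_cast hk
  have hk0 : (0:ℝ) < (k:ℝ) := by linarith
  have hk1a : (k:ℝ) ^ (1 - α) = (k:ℝ) * (k:ℝ) ^ (-α) := by
    rw [show (1 - α) = 1 + (-α) by ring, Real.rpow_add hk0, Real.rpow_one]
  have hone_le : (1:ℝ) ≤ (k:ℝ) ^ (1 - α) := by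
    have := Real.rpow_le_rpow (by norm_num : (0:ℝ) ≤ 1) hkR (by linarith : (0:ℝ) ≤ 1 - α)
    rwa [Real.one_rpow] at this
  have hkpow_pos : (0:ℝ) < (k:ℝ) ^ (1 - α) := by linarith
  set S : Set ℝ :=
    ((fun z => (1 - ‖z‖ ^ 2) ^ α * ‖(deriv (peak ξ k) z)‖) '' ball (0 : ℂ) 1)
    with hSdef
  -- upper bound on elements of S
  have hub : ∀ x ∈ S, x ≤ 8 ^ α / 2 * (k:ℝ) ^ (1 - α) := by
    rintro x ⟨z, hz, rfl⟩
    have hz1 : ‖z‖ < 1 := by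
      simpa [mem_ball, Complex.dist_eq] using hz
    have hz0 : (0:ℝ) ≤ ‖z‖ := norm_nonneg z
    have habs_le : ‖((1 + (starRingEnd ℂ) ξ * z) / 2)‖ ≤ (1 + ‖z‖) / 2 := by
      rw [norm_div, Complex.norm_two]
      gcongr
      calc ‖(1 + (starRingEnd ℂ) ξ * z)‖
          ≤ ‖1‖ + ‖((starRingEnd ℂ) ξ * z)‖ := norm_add_le _ _
        _ = 1 + ‖z‖ := by rw [norm_one, norm_mul, Complex.norm_conj, hξ, one_mul]
    have hnn : (0:ℝ) ≤ (1 - ‖z‖ ^ 2) ^ α := Real.rpow_nonneg (by nlinarith) _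
    have step : (1 - ‖z‖ ^ 2) ^ α * ‖(deriv (peak ξ k) z)‖
        ≤ (k:ℝ) / 2 * ((1 - ‖z‖ ^ 2) ^ α * ((1 + ‖z‖) / 2) ^ (k - 1)) := by
      rw [abs_deriv_peak ξ hξ k z,
        show (k:ℝ) / 2 * ((1 - ‖z‖ ^ 2) ^ α * ((1 + ‖z‖) / 2) ^ (k - 1))
          = (1 - ‖z‖ ^ 2) ^ α * ((k:ℝ) / 2 * ((1 + ‖z‖) / 2) ^ (k - 1))
          by ring]
      have hpow := pow_le_pow_left₀ (norm_nonneg _) habs_le (k - 1)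
      apply mul_le_mul_of_nonneg_left _ hnn
      apply mul_le_mul_of_nonneg_left hpow (by positivity)
    have core := core_upper α hα0 hα1 k hk (‖z‖) hz0 hz1
    calc (1 - ‖z‖ ^ 2) ^ α * ‖(deriv (peak ξ k) z)‖
        ≤ (k:ℝ) / 2 * ((1 - ‖z‖ ^ 2) ^ α * ((1 + ‖z‖) / 2) ^ (k - 1)) := step
      _ ≤ (k:ℝ) / 2 * (8 ^ α * (k:ℝ) ^ (-α)) := by
          apply mul_le_mul_of_nonneg_left core (by positivity)
      _ = 8 ^ α / 2 * (k:ℝ) ^ (1 - α) := by rw [hk1a]; ring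
  have hbdd : BddAbove S := ⟨8 ^ α / 2 * (k:ℝ) ^ (1 - α), fun x hx => hub x hx⟩
  have habs0 : ‖(peak ξ k 0)‖ ≤ 1 := by
    simp only [peak, mul_zero, add_zero, norm_pow, norm_div, norm_one, Complex.norm_two]
    exact pow_le_one₀ (by norm_num) (by norm_num)
  constructor
  · -- lower bound
    set u : ℝ := 1 / (k:ℝ) with hu
    have hu0 : 0 < u := by positivity
    have hu1 : u ≤ 1 := by rw [hu]; rw [div_le_one hk0]; exact hkR
    have hku : (k:ℝ) * u = 1 := by rw [hu]; field_simp
    set a : ℝ := 1 - u with ha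
    have ha0 : 0 ≤ a := by simp only [ha]; linarith
    have ha1 : a < 1 := by simp only [ha]; linarith
    set z₀ : ℂ := (a : ℂ) * ξ with hz₀def
    have hz₀mem : z₀ ∈ ball (0:ℂ) 1 := by
      simp only [mem_ball, Complex.dist_eq, sub_zero, hz₀def, norm_mul, hξ,
        Complex.norm_real, Real.norm_eq_abs, mul_one]
      rwa [abs_of_nonneg ha0]
    have hcξ : (starRingEnd ℂ) ξ * ξ = 1 := by
      rw [mul_comm, Complex.mul_conj]
      norm_cast
      rw [Complex.normSq_eq_norm_sq, hξ]; norm_num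
    have hcz : (starRingEnd ℂ) ξ * z₀ = (a : ℂ) := by
      rw [hz₀def, show (starRingEnd ℂ) ξ * ((a:ℂ) * ξ) = (a:ℂ) * ((starRingEnd ℂ) ξ * ξ) by ring,
        hcξ, mul_one]
    have habsh : ‖((1 + (starRingEnd ℂ) ξ * z₀) / 2)‖ = (1 + a) / 2 := by
      rw [hcz]
      rw [show (1 + (a:ℂ)) / 2 = (((1 + a) / 2 : ℝ) : ℂ) by push_cast; ring]
      rw [Complex.norm_real, Real.norm_eq_abs, abs_of_nonneg (by linarith)]
    have hφ : (1 - ‖z₀‖ ^ 2) ^ α * ‖(deriv (peak ξ k) z₀)‖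
        = (1 - a ^ 2) ^ α * ((k:ℝ) / 2 * ((1 + a) / 2) ^ (k - 1)) := by
      rw [abs_deriv_peak ξ hξ k z₀, habsh]
      congr 2
      rw [hz₀def, norm_mul, hξ, Complex.norm_real, Real.norm_eq_abs, mul_one, abs_of_nonneg ha0]
    -- Bernoulli lower bound
    have hber : (1:ℝ) / 2 ≤ ((1 + a) / 2) ^ (k - 1) := by
      have he : ((1 + a) / 2 : ℝ) = 1 + (-(u / 2)) := by simp only [ha]; ring
      have h1 : 1 + (k:ℝ) * (-(u / 2)) ≤ (1 + (-(u / 2))) ^ k :=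
        one_add_mul_le_pow (by linarith) k
      have h2 : 1 + (k:ℝ) * (-(u / 2)) = 1 / 2 := by
        have : (k:ℝ) * (u / 2) = 1 / 2 := by rw [← hku]; ring
        linarith [this]
      have h3 : (1 + (-(u / 2))) ^ k ≤ (1 + (-(u / 2))) ^ (k - 1) :=
        pow_le_pow_of_le_one (by linarith) (by linarith) (Nat.sub_le k 1)
      rw [he]
      linarith
    have hAlow : u ^ α ≤ (1 - a ^ 2) ^ α := by
      apply Real.rpow_le_rpow hu0.le ?_ hα0.le
      simp only [ha]; nlinarith
    have hua : u ^ α = (k:ℝ) ^ (-α) := by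
      rw [hu, one_div, Real.inv_rpow hk0.le, ← Real.rpow_neg hk0.le]
    have hφlow : (1:ℝ) / 4 * (k:ℝ) ^ (1 - α)
        ≤ (1 - a ^ 2) ^ α * ((k:ℝ) / 2 * ((1 + a) / 2) ^ (k - 1)) := by
      have h1 : u ^ α * ((k:ℝ) / 2 * (1 / 2))
          ≤ (1 - a ^ 2) ^ α * ((k:ℝ) / 2 * ((1 + a) / 2) ^ (k - 1)) := by
        apply mul_le_mul hAlow ?_ (by positivity) (Real.rpow_nonneg (by nlinarith) _)
        apply mul_le_mul_of_nonneg_left hber (by positivity)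
      have h2 : u ^ α * ((k:ℝ) / 2 * (1 / 2)) = 1 / 4 * (k:ℝ) ^ (1 - α) := by
        rw [hua, hk1a]; ring
      linarith
    have hmem : (1 - ‖z₀‖ ^ 2) ^ α * ‖(deriv (peak ξ k) z₀)‖ ∈ S :=
      ⟨z₀, hz₀mem, rfl⟩
    have hsup : (1 - ‖z₀‖ ^ 2) ^ α * ‖(deriv (peak ξ k) z₀)‖ ≤ sSup S :=
      le_csSup hbdd hmem
    have : (1:ℝ)/4 * (k:ℝ) ^ (1-α) ≤ sSup S := by rw [← hφ] at hφlow; linarith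
    unfold blochNorm
    have := norm_nonneg (peak ξ k 0)
    rw [← hSdef]
    linarith
  · -- upper bound
    have hsup : sSup S ≤ 8 ^ α / 2 * (k:ℝ) ^ (1 - α) :=
      Real.sSup_le hub (by positivity)
    have h8 : (1:ℝ) ≤ 8 ^ α := by
      have := Real.rpow_le_rpow (by norm_num : (0:ℝ) ≤ 1) (by norm_num : (1:ℝ) ≤ 8) hα0.le
      rwa [Real.one_rpow] at this
    unfold blochNorm
    rw [← hSdef]
    have : (1:ℝ) + 8 ^ α / 2 * (k:ℝ) ^ (1-α) ≤ (1 + 8 ^ α) * (k:ℝ) ^ (1-α) := by nlinarith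
    linarith
end

section
/- Let 0 < α ≤ 1, let ξ ∈ ℂ with |ξ| = 1, and set g_{ξ,k} = f_{ξ,k}/‖f_{ξ,k}‖_{B_α}. Then for every integer m ≥ 0 and every δ > 0, sup{ |g_{ξ,k}^{(m)}(z)| : z ∈ 𝔻, |z − ξ| ≥ δ } → 0 as k → ∞. -/
open Metric Set Filter

noncomputable section

/-- The normalized peak function `g_{ξ,k} = f_{ξ,k} / ‖f_{ξ,k}‖_{B_α}`. -/
def normPeak (α : ℝ) (ξ : ℂ) (k : ℕ) : ℂ → ℂ :=
  fun z => peak ξ k z / ((blochNorm α (peak ξ k) : ℝ) : ℂ)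

end

lemma derivU (c : ℂ) (n : ℕ) (z : ℂ) :
    deriv (fun z : ℂ => ((1 + c * z) / 2) ^ n) z
      = n * ((1 + c * z) / 2) ^ (n - 1) * (c / 2) := by
  have h : HasDerivAt (fun z : ℂ => (1 + c * z) / 2) (c / 2) z := by
    simpa using (((hasDerivAt_id z).const_mul c).const_add 1).div_const 2
  exact (h.pow n).deriv

lemma iterPeak (ξ : ℂ) (k m : ℕ) (hm : m ≤ k) :
    iteratedDeriv m (peak ξ k) = fun z =>
      (∏ i ∈ Finset.range m, ((k : ℂ) - i)) * ((starRingEnd ℂ) ξ / 2) ^ m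
        * ((1 + (starRingEnd ℂ) ξ * z) / 2) ^ (k - m) := by
  set c := (starRingEnd ℂ) ξ
  induction m with
  | zero => funext z; simp [peak]; rfl
  | succ m ih =>
    have hmk : m ≤ k := le_of_lt hm
    rw [iteratedDeriv_succ, ih hmk]
    funext z
    have hdiff : DifferentiableAt ℂ (fun z : ℂ => ((1 + c * z) / 2) ^ (k - m)) z :=
      (((((differentiableAt_id (x := z)).const_mul c).const_add 1).div_const 2).pow _)
    rw [deriv_const_mul _ hdiff, derivU]
    have h1 : ((k - m : ℕ) : ℂ) = (k : ℂ) - m := by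
      push_cast [Nat.cast_sub hmk]; ring
    have h2 : k - m - 1 = k - (m + 1) := by omega
    rw [h1, h2, Finset.prod_range_succ]
    ring

lemma iterDivConst (f : ℂ → ℂ) (c : ℂ) (m : ℕ) :
    iteratedDeriv m (fun z => f z / c) = fun z => iteratedDeriv m f z / c := by
  induction m with
  | zero => rfl
  | succ m ih =>
    rw [iteratedDeriv_succ, ih, iteratedDeriv_succ]
    funext z
    exact deriv_div_const c

lemma deriv_peak (ξ : ℂ) (k : ℕ) (z : ℂ) :
    deriv (peak ξ k) z = k * ((1 + (starRingEnd ℂ) ξ * z) / 2) ^ (k - 1)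
      * ((starRingEnd ℂ) ξ / 2) := derivU _ k z

lemma abs_u_le (ξ : ℂ) (hξ : ‖ξ‖ = 1) {z : ℂ} (hz : ‖z‖ ≤ 1) :
    ‖(1 + (starRingEnd ℂ) ξ * z) / 2‖ ≤ 1 := by
  rw [norm_div]
  have h1 : ‖1 + (starRingEnd ℂ) ξ * z‖ ≤ 1 + ‖(starRingEnd ℂ) ξ‖ * ‖z‖ := by
    simpa [norm_mul] using norm_add_le (1:ℂ) ((starRingEnd ℂ) ξ * z)
  have h2 : ‖(starRingEnd ℂ) ξ‖ = 1 := by rwa [Complex.norm_conj]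
  rw [h2] at h1
  simp only [Complex.norm_two]
  nlinarith

lemma bddS (α : ℝ) (hα0 : 0 < α) (ξ : ℂ) (hξ : ‖ξ‖ = 1) (k : ℕ) :
    ∀ x ∈ ((fun z => (1 - ‖z‖ ^ 2) ^ α * ‖deriv (peak ξ k) z‖) ''
      ball (0 : ℂ) 1), x ≤ (k:ℝ) := by
  rintro x ⟨z, hz, rfl⟩
  simp only [mem_ball, dist_zero_right] at hz
  have h0 : ‖z‖ ^ 2 ≤ 1 := by nlinarith [norm_nonneg z]
  have hsq := sq_nonneg (‖z‖)
  have hr1 : (1 - ‖z‖ ^ 2) ^ α ≤ 1 :=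
    Real.rpow_le_one (by linarith) (by linarith) hα0.le
  have hr0 : 0 ≤ (1 - ‖z‖ ^ 2) ^ α := Real.rpow_nonneg (by linarith) _
  have hd : ‖deriv (peak ξ k) z‖ ≤ k := by
    rw [deriv_peak, norm_mul, norm_mul]
    have hU := abs_u_le ξ hξ hz.le
    have hc : ‖(starRingEnd ℂ) ξ / 2‖ = 1/2 := by
      rw [norm_div, Complex.norm_conj, hξ, Complex.norm_two]
    rw [norm_pow, hc, Complex.norm_natCast]
    have h2 : ‖(1 + (starRingEnd ℂ) ξ * z) / 2‖ ^ (k - 1) ≤ 1 :=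
      pow_le_one₀ (norm_nonneg _) hU
    nlinarith [pow_nonneg (norm_nonneg ((1 + (starRingEnd ℂ) ξ * z) / 2)) (k-1),
      Nat.cast_nonneg (α := ℝ) k]
  calc (1 - ‖z‖ ^ 2) ^ α * ‖deriv (peak ξ k) z‖
      ≤ 1 * (k : ℝ) := mul_le_mul hr1 hd (norm_nonneg _) one_pos.le
    _ = k := one_mul _

lemma bloch_lb (α : ℝ) (hα0 : 0 < α) (hα1 : α ≤ 1) (ξ : ℂ) (hξ : ‖ξ‖ = 1)
    (k : ℕ) (hk : 1 ≤ k) : (1/4 : ℝ) ≤ blochNorm α (peak ξ k) := by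
  have hk1 : (1 : ℝ) ≤ (k : ℝ) := by exact_mod_cast hk
  have hkpos : (0 : ℝ) < k := by linarith
  have hinv : 0 < 1/(k:ℝ) := by positivity
  have hinv1 : 1/(k:ℝ) ≤ 1 := by rw [div_le_one hkpos]; exact hk1
  set t : ℝ := 1 - 1/k with ht
  clear_value t
  have ht0 : 0 ≤ t := by rw [ht]; linarith
  have ht1 : t < 1 := by rw [ht]; linarith
  set z₀ : ℂ := (t : ℂ) * ξ with hz₀
  clear_value z₀
  have habs : ‖z₀‖ = t := by
    rw [hz₀, norm_mul, hξ, Complex.norm_real, Real.norm_eq_abs, mul_one, abs_of_nonneg ht0]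
  have hmem : z₀ ∈ ball (0 : ℂ) 1 := by
    simp only [mem_ball, dist_zero_right, habs]; exact ht1
  have hcx : (starRingEnd ℂ) ξ * ξ = 1 := by
    rw [mul_comm, Complex.mul_conj]
    norm_cast
    rw [Complex.normSq_eq_norm_sq, hξ]; norm_num
  have huz : (1 + (starRingEnd ℂ) ξ * z₀) / 2 = (((1 + t)/2 : ℝ) : ℂ) := by
    rw [hz₀]
    push_cast
    rw [mul_comm ((starRingEnd ℂ) ξ) ((t:ℂ) * ξ), mul_assoc, mul_comm ξ, hcx]
    ring
  have hval : (1 - ‖z₀‖ ^ 2) ^ α * ‖deriv (peak ξ k) z₀‖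
      = (1 - t ^ 2) ^ α * ((k : ℝ) * ((1 + t)/2) ^ (k - 1) * (1/2)) := by
    rw [habs, deriv_peak, huz, norm_mul, norm_mul, norm_pow, norm_div, Complex.norm_conj, hξ,
      Complex.norm_two, Complex.norm_natCast, Complex.norm_real, Real.norm_eq_abs,
      abs_of_nonneg (by linarith : (0:ℝ) ≤ (1+t)/2)]
  have hlow : (1/4 : ℝ) ≤ (1 - t ^ 2) ^ α * ((k : ℝ) * ((1 + t)/2) ^ (k - 1) * (1/2)) := by
    have h1 : 1/(k:ℝ) ≤ 1 - t ^ 2 := by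
      have h' : t ^ 2 ≤ t := by nlinarith
      rw [ht] at h' ⊢
      nlinarith
    have h2 : (1/(k:ℝ)) ≤ (1 - t ^ 2) ^ α := by
      calc (1/(k:ℝ)) = (1/(k:ℝ)) ^ (1:ℝ) := (Real.rpow_one _).symm
        _ ≤ (1/(k:ℝ)) ^ α := Real.rpow_le_rpow_of_exponent_ge hinv hinv1 hα1
        _ ≤ (1 - t ^ 2) ^ α := Real.rpow_le_rpow hinv.le h1 hα0.le
    have h2k : (0:ℝ) < 2*(k:ℝ) := by positivity
    have hsmall : 1/(2*(k:ℝ)) ≤ 1 := by rw [div_le_one h2k]; linarith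
    have h3 : (1/2 : ℝ) ≤ ((1 + t)/2) ^ (k - 1) := by
      have hb := one_add_mul_le_pow (a := -(1/(2*(k:ℝ)))) (by linarith) (k-1)
      have he : (1 + -(1/(2*(k:ℝ)))) = (1 + t)/2 := by rw [ht]; field_simp; ring
      have hcard : ((k - 1 : ℕ) : ℝ) ≤ (k : ℝ) := by
        exact_mod_cast Nat.cast_le.mpr (Nat.sub_le k 1)
      have hge : ((k - 1 : ℕ) : ℝ) * (1/(2*(k:ℝ))) ≤ 1/2 := by
        calc ((k - 1 : ℕ) : ℝ) * (1/(2*(k:ℝ))) ≤ (k:ℝ) * (1/(2*(k:ℝ))) :=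
              mul_le_mul_of_nonneg_right hcard (by positivity)
          _ = 1/2 := by field_simp
      rw [he] at hb
      calc (1/2 : ℝ) = 1 - 1/2 := by norm_num
        _ ≤ 1 + ((k-1 : ℕ) : ℝ) * -(1/(2*(k:ℝ))) := by nlinarith
        _ ≤ _ := hb
    have hpow_nonneg : (0:ℝ) ≤ ((1 + t)/2) ^ (k-1) := by positivity
    have hrp : (0:ℝ) ≤ (1 - t^2) ^ α := Real.rpow_nonneg (by nlinarith) _
    calc (1/4 : ℝ) = (1/(k:ℝ)) * ((k:ℝ) * (1/2) * (1/2)) := by field_simp; ring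
      _ ≤ (1 - t ^ 2) ^ α * ((k : ℝ) * ((1 + t)/2) ^ (k - 1) * (1/2)) := by
          apply mul_le_mul h2 _ (by positivity) hrp
          nlinarith [mul_le_mul_of_nonneg_left h3 hkpos.le]
  have hBdd : BddAbove ((fun z => (1 - ‖z‖ ^ 2) ^ α *
      ‖deriv (peak ξ k) z‖) '' ball (0 : ℂ) 1) :=
    ⟨k, fun x hx => bddS α hα0 ξ hξ k x hx⟩
  have hle : (1/4 : ℝ) ≤ sSup ((fun z => (1 - ‖z‖ ^ 2) ^ α *
      ‖deriv (peak ξ k) z‖) '' ball (0 : ℂ) 1) := by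
    refine le_trans (hval ▸ hlow) (le_csSup hBdd ?_)
    exact ⟨z₀, hmem, rfl⟩
  have : 0 ≤ ‖peak ξ k 0‖ := norm_nonneg _
  unfold blochNorm
  linarith

/-- For `0 < α ≤ 1`, `|ξ| = 1`, every `m ≥ 0` and every `δ > 0`,
`sup{ |g_{ξ,k}^{(m)}(z)| : z ∈ 𝔻, |z - ξ| ≥ δ } → 0` as `k → ∞`, where
`g_{ξ,k} = f_{ξ,k}/‖f_{ξ,k}‖_{B_α}` is the normalized peak function. -/
theorem stmt_12 (α : ℝ) (hα0 : 0 < α) (hα1 : α ≤ 1) (ξ : ℂ) (hξ : ‖ξ‖ = 1)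
    (m : ℕ) (δ : ℝ) (hδ : 0 < δ) :
    Tendsto
      (fun k : ℕ =>
        sSup ((fun z => ‖iteratedDeriv m (normPeak α ξ k) z‖) ''
          {z : ℂ | z ∈ ball (0 : ℂ) 1 ∧ δ ≤ ‖z - ξ‖}))
      atTop (nhds 0) := by
  set r : ℝ := Real.sqrt (max 0 (1 - δ^2/4)) with hr
  have hr0 : 0 ≤ r := Real.sqrt_nonneg _
  have hrsq : r ^ 2 = max 0 (1 - δ^2/4) := Real.sq_sqrt (le_max_left _ _)
  have hr1 : r < 1 := by
    have hm1 : max 0 (1 - δ^2/4) < 1 := by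
      apply max_lt one_pos
      nlinarith
    nlinarith
  set r' : ℝ := max r (1/2) with hr'
  have hr'0 : (0:ℝ) < r' := lt_of_lt_of_le (by norm_num) (le_max_right _ _)
  have hr'half : (1/2 : ℝ) ≤ r' := le_max_right _ _
  have hr'1 : r' < 1 := max_lt hr1 (by norm_num)
  have hrr' : r ≤ r' := le_max_left _ _
  have hcx : (starRingEnd ℂ) ξ * ξ = 1 := by
    rw [mul_comm, Complex.mul_conj]
    norm_cast
    rw [Complex.normSq_eq_norm_sq, hξ]; norm_num
  -- the uniform bound on |u z| on the region
  have hu : ∀ z : ℂ, z ∈ ball (0 : ℂ) 1 → δ ≤ ‖z - ξ‖ →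
      ‖(1 + (starRingEnd ℂ) ξ * z) / 2‖ ≤ r := by
    intro z hz hzd
    simp only [mem_ball, dist_zero_right] at hz
    have hpar : ‖z + ξ‖ ^ 2 + ‖z - ξ‖ ^ 2
        = 2 * ‖z‖ ^ 2 + 2 * ‖ξ‖ ^ 2 := by
      rw [Complex.sq_norm, Complex.sq_norm, Complex.sq_norm, Complex.sq_norm]
      simp only [Complex.normSq_apply, Complex.add_re, Complex.add_im, Complex.sub_re,
        Complex.sub_im]
      ring
    have heq : (1 + (starRingEnd ℂ) ξ * z) = (starRingEnd ℂ) ξ * (ξ + z) := by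
      rw [mul_add, hcx]
    have habs : ‖(1 + (starRingEnd ℂ) ξ * z) / 2‖
        = ‖z + ξ‖ / 2 := by
      rw [norm_div, heq, norm_mul, Complex.norm_conj, hξ, one_mul, Complex.norm_two,
        add_comm ξ z]
    rw [habs]
    have hδ2 : δ ^ 2 ≤ ‖z - ξ‖ ^ 2 := by
      apply pow_le_pow_left₀ hδ.le hzd
    have h4 : ‖z + ξ‖ ^ 2 ≤ 4 - δ ^ 2 := by
      rw [hξ] at hpar
      nlinarith [norm_nonneg z]
    have h5 : (‖z + ξ‖ / 2) ^ 2 ≤ r ^ 2 := by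
      rw [hrsq]
      have : (‖z + ξ‖ / 2) ^ 2 ≤ 1 - δ^2/4 := by nlinarith
      exact le_trans this (le_max_right _ _)
    nlinarith [norm_nonneg (z + ξ), div_nonneg (norm_nonneg (z + ξ)) (by norm_num : (0:ℝ) ≤ 2)]
  -- bound on the normalized iterated derivative
  have hbound : ∀ k : ℕ, max m 1 ≤ k → ∀ z : ℂ, z ∈ ball (0 : ℂ) 1 →
      δ ≤ ‖z - ξ‖ →
      ‖iteratedDeriv m (normPeak α ξ k) z‖
        ≤ 4 * 2^m * ((k:ℝ)^m * r'^k) := by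
    intro k hk z hz hzd
    have hmk : m ≤ k := le_trans (le_max_left _ _) hk
    have hk1 : 1 ≤ k := le_trans (le_max_right _ _) hk
    set B : ℝ := blochNorm α (peak ξ k) with hB
    have hB4 : (1/4 : ℝ) ≤ B := bloch_lb α hα0 hα1 ξ hξ k hk1
    have hBpos : 0 < B := by linarith
    have hnp : iteratedDeriv m (normPeak α ξ k) z = iteratedDeriv m (peak ξ k) z / (B:ℂ) := by
      have : normPeak α ξ k = fun z => peak ξ k z / (B:ℂ) := rfl
      rw [this, iterDivConst]
    rw [hnp, norm_div, Complex.norm_real, Real.norm_eq_abs, abs_of_pos hBpos]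
    -- bound the numerator
    have hnum : ‖iteratedDeriv m (peak ξ k) z‖ ≤ (k:ℝ)^m * r^(k-m) := by
      rw [iterPeak ξ k m hmk]
      simp only [norm_mul, norm_pow, norm_div, Complex.norm_conj, hξ, Complex.norm_two]
      have hprod : ‖∏ i ∈ Finset.range m, ((k : ℂ) - i)‖ ≤ (k:ℝ)^m := by
        rw [norm_prod]
        calc ∏ i ∈ Finset.range m, ‖(k : ℂ) - i‖
            ≤ ∏ _i ∈ Finset.range m, (k:ℝ) := by
              apply Finset.prod_le_prod (fun i _ => norm_nonneg _)
              intro i hi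
              simp only [Finset.mem_range] at hi
              have hc : ((k : ℂ) - i) = (((k:ℝ) - i : ℝ) : ℂ) := by push_cast; ring
              have hik : (i:ℝ) ≤ k := by exact_mod_cast le_of_lt (lt_of_lt_of_le hi hmk)
              rw [hc, Complex.norm_real, Real.norm_eq_abs, abs_of_nonneg (by linarith)]
              have : (0:ℝ) ≤ i := Nat.cast_nonneg i
              linarith
          _ = (k:ℝ)^m := by rw [Finset.prod_const, Finset.card_range]
      have hu' : ‖1 + (starRingEnd ℂ) ξ * z‖ / 2 ≤ r := by
        have := hu z hz hzd
        rwa [norm_div, Complex.norm_two] at this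
      have hupow : (‖1 + (starRingEnd ℂ) ξ * z‖ / 2) ^ (k - m) ≤ r ^ (k-m) :=
        pow_le_pow_left₀ (by positivity) hu' _
      have hhalf : (1/2 : ℝ)^m ≤ 1 := pow_le_one₀ (by norm_num) (by norm_num)
      calc ‖∏ i ∈ Finset.range m, ((k : ℂ) - i)‖ * (1/2)^m *
            (‖1 + (starRingEnd ℂ) ξ * z‖ / 2) ^ (k - m)
          ≤ (k:ℝ)^m * 1 * r^(k-m) := by
            apply mul_le_mul (mul_le_mul hprod hhalf (by positivity) (by positivity))
              hupow (by positivity) (by positivity)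
        _ = (k:ℝ)^m * r^(k-m) := by ring
    -- r^(k-m) ≤ 2^m * r'^k
    have hgeo : r^(k-m) ≤ 2^m * r'^k := by
      have h1 : r^(k-m) ≤ r'^(k-m) := pow_le_pow_left₀ hr0 hrr' _
      have h2 : ((1:ℝ)/2)^m ≤ r'^m := pow_le_pow_left₀ (by norm_num) hr'half _
      have h3 : r'^(k-m) * (1/2:ℝ)^m ≤ r'^(k-m) * r'^m :=
        mul_le_mul_of_nonneg_left h2 (by positivity)
      have h4 : r'^(k-m) * r'^m = r'^k := by
        rw [← pow_add]
        congr 1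
        omega
      have h5 : ((1:ℝ)/2)^m * 2^m = 1 := by rw [← mul_pow]; norm_num
      nlinarith [pow_nonneg hr'0.le (k-m), pow_nonneg (by norm_num : (0:ℝ) ≤ 1/2) m,
        pow_nonneg (by norm_num : (0:ℝ) ≤ (2:ℝ)) m, pow_nonneg hr0 (k-m)]
    have hfinal : ‖iteratedDeriv m (peak ξ k) z‖ ≤ (k:ℝ)^m * (2^m * r'^k) := by
      calc ‖iteratedDeriv m (peak ξ k) z‖ ≤ (k:ℝ)^m * r^(k-m) := hnum
        _ ≤ (k:ℝ)^m * (2^m * r'^k) := mul_le_mul_of_nonneg_left hgeo (by positivity)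
    rw [div_le_iff₀ hBpos]
    calc ‖iteratedDeriv m (peak ξ k) z‖ ≤ (k:ℝ)^m * (2^m * r'^k) := hfinal
      _ = 2^m * ((k:ℝ)^m * r'^k) * 1 := by ring
      _ ≤ 2^m * ((k:ℝ)^m * r'^k) * (4 * B) := by
          apply mul_le_mul_of_nonneg_left (by linarith) (by positivity)
      _ = 4 * 2^m * ((k:ℝ)^m * r'^k) * B := by ring
  -- squeeze
  have hlow : ∀ k : ℕ, (0:ℝ) ≤ sSup ((fun z => ‖iteratedDeriv m (normPeak α ξ k) z‖) ''
      {z : ℂ | z ∈ ball (0 : ℂ) 1 ∧ δ ≤ ‖z - ξ‖}) := by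
    intro k
    apply Real.sSup_nonneg
    rintro x ⟨z, hz, rfl⟩
    exact norm_nonneg _
  have hupper : ∀ k : ℕ, max m 1 ≤ k →
      sSup ((fun z => ‖iteratedDeriv m (normPeak α ξ k) z‖) ''
        {z : ℂ | z ∈ ball (0 : ℂ) 1 ∧ δ ≤ ‖z - ξ‖})
        ≤ 4 * 2^m * ((k:ℝ)^m * r'^k) := by
    intro k hk
    apply Real.sSup_le
    · rintro x ⟨z, ⟨hz1, hz2⟩, rfl⟩
      exact hbound k hk z hz1 hz2
    · positivity
  have htend : Tendsto (fun k : ℕ => 4 * 2^m * ((k:ℝ)^m * r'^k)) atTop (nhds 0) := by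
    have := (tendsto_pow_const_mul_const_pow_of_lt_one m hr'0.le hr'1).const_mul (4 * 2^m : ℝ)
    simpa using this
  apply tendsto_of_tendsto_of_tendsto_of_le_of_le' tendsto_const_nhds htend
  · exact Eventually.of_forall hlow
  · filter_upwards [eventually_ge_atTop (max m 1)] with k hk
    exact hupper k hk
end
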